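/- arXiv:1312.4973 — 7 statements merged into one kernel-verified Lean document; each statement's English description precedes it below -/
import Mathlib

section
/- For every integer n ≥ 6, the metric dimension of the Johnson graph J(n,2) equals (2/3)(n − i) + i, where i ∈ {0,1,2} is the residue of n modulo 3 (i.e. it equals 2(n − (n mod 3))/3 + (n mod 3)). -/
/-- `S` is a resolving set for the graph `G`: every pair of distinct vertices is
resolved by some vertex of `S` (via the geodesic distance `SimpleGraph.dist`). -/
def IsResolvingSet {V : Type*} (G : SimpleGraph V) (S : Set V) : Prop :=
  ∀ u w : V, u ≠ w → ∃ v ∈ S, G.dist u v ≠ G.dist w v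

/-- The metric dimension of `G`: the smallest size of a resolving set. -/
noncomputable def metricDim {V : Type*} (G : SimpleGraph V) : ℕ :=
  sInf {n : ℕ | ∃ S : Finset V, IsResolvingSet G (↑S) ∧ S.card = n}

/-- The Johnson graph `J(n,2)`: vertices are the 2-element subsets of an
`n`-element set, adjacent when they meet in exactly one element. -/
def johnsonGraph2 (n : ℕ) : SimpleGraph {s : Finset (Fin n) // s.card = 2} where
  Adj a b := ((a : Finset (Fin n)) ∩ (b : Finset (Fin n))).card = 1
  symm := ⟨fun a b h => by
    change ((a : Finset (Fin n)) ∩ (b : Finset (Fin n))).card = 1 at h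
    change ((b : Finset (Fin n)) ∩ (a : Finset (Fin n))).card = 1
    rwa [Finset.inter_comm]⟩
  loopless := ⟨fun a h => by
    change ((a : Finset (Fin n)) ∩ (a : Finset (Fin n))).card = 1 at h
    rw [Finset.inter_self, a.2] at h
    omega⟩

namespace JohnsonAux

variable {n : ℕ}

abbrev V (n : ℕ) := {s : Finset (Fin n) // s.card = 2}

lemma exists_rep (u : V n) : ∃ a b : Fin n, a ≠ b ∧ u.1 = {a, b} :=
  Finset.card_eq_two.mp u.2

lemma adj_iff (u w : V n) : (johnsonGraph2 n).Adj u w ↔ (u.1 ∩ w.1).card = 1 := Iff.rfl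

lemma eq_of_inter_card_two {u w : V n} (h : (u.1 ∩ w.1).card = 2) : u = w := by
  have h1 : u.1 ∩ w.1 = u.1 :=
    Finset.eq_of_subset_of_card_le Finset.inter_subset_left (by rw [h, u.2])
  have h2 : u.1 ∩ w.1 = w.1 :=
    Finset.eq_of_subset_of_card_le Finset.inter_subset_right (by rw [h, w.2])
  exact Subtype.ext (h1 ▸ h2)

lemma dist_of_not_disjoint {u w : V n} (hne : u ≠ w) (h : ¬ Disjoint u.1 w.1) :
    (johnsonGraph2 n).dist u w = 1 := by
  rw [SimpleGraph.dist_eq_one_iff_adj, adj_iff]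
  have hc : (u.1 ∩ w.1).Nonempty := by
    rw [Finset.disjoint_iff_inter_eq_empty] at h
    exact Finset.nonempty_iff_ne_empty.mpr h
  have h2 : (u.1 ∩ w.1).card ≤ 2 := by
    calc (u.1 ∩ w.1).card ≤ u.1.card := Finset.card_le_card Finset.inter_subset_left
    _ = 2 := u.2
  have h1 : 1 ≤ (u.1 ∩ w.1).card := Finset.card_pos.mpr hc
  interval_cases h : (u.1 ∩ w.1).card
  · rfl
  · exact absurd (eq_of_inter_card_two h) hne

lemma dist_of_disjoint {u w : V n} (hne : u ≠ w) (h : Disjoint u.1 w.1) :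
    (johnsonGraph2 n).dist u w = 2 := by
  obtain ⟨a, b, hab, hu⟩ := exists_rep u
  obtain ⟨c, d, hcd, hw⟩ := exists_rep w
  have hau : a ∈ u.1 := by rw [hu]; simp
  have hcw : c ∈ w.1 := by rw [hw]; simp
  have hac : a ≠ c := by
    intro h'
    exact Finset.disjoint_left.mp h hau (h' ▸ hcw)
  have hcu : c ∉ u.1 := fun hc => Finset.disjoint_left.mp h hc hcw
  have hav : a ∉ w.1 := fun ha => Finset.disjoint_left.mp h hau ha
  set v : V n := ⟨{a, c}, Finset.card_pair hac⟩ with hv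
  have huv : (johnsonGraph2 n).Adj u v := by
    rw [adj_iff]
    have : u.1 ∩ v.1 = {a} := by
      ext x
      simp only [Finset.mem_inter, Finset.mem_singleton, hv, Finset.mem_insert]
      constructor
      · rintro ⟨hxu, hx⟩
        rcases hx with h | h
        · exact h
        · subst h; exact absurd hxu hcu
      · rintro rfl; exact ⟨by simp [hu], Or.inl rfl⟩
    rw [this]; simp
  have hvw : (johnsonGraph2 n).Adj v w := by
    rw [adj_iff]
    have : v.1 ∩ w.1 = {c} := by
      ext x
      simp only [Finset.mem_inter, Finset.mem_singleton, hv, Finset.mem_insert]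
      constructor
      · rintro ⟨hx, hxw⟩
        rcases hx with h | h
        · subst h; exact absurd hxw hav
        · exact h
      · rintro rfl; exact ⟨Or.inr (by simp), by simp [hw]⟩
    rw [this]; simp
  have hle : (johnsonGraph2 n).dist u w ≤ 2 := by
    have h2 := SimpleGraph.dist_le
      (SimpleGraph.Walk.cons huv (SimpleGraph.Walk.cons hvw SimpleGraph.Walk.nil))
    simpa using h2
  have hpos : 0 < (johnsonGraph2 n).dist u w :=
    SimpleGraph.Reachable.pos_dist_of_ne
      ⟨SimpleGraph.Walk.cons huv (SimpleGraph.Walk.cons hvw SimpleGraph.Walk.nil)⟩ hne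
  have hne1 : (johnsonGraph2 n).dist u w ≠ 1 := by
    intro hd1
    have hadj := SimpleGraph.dist_eq_one_iff_adj.mp hd1
    rw [adj_iff] at hadj
    rw [Finset.disjoint_iff_inter_eq_empty] at h
    rw [h] at hadj
    simp at hadj
  omega

/-- The key combinatorial reduction. -/
lemma resolves_iff (S : Finset (V n)) :
    IsResolvingSet (johnsonGraph2 n) (↑S) ↔
      ∀ u w : V n, u ≠ w → u ∉ S → w ∉ S →
        ∃ v ∈ S, (Disjoint u.1 v.1 ↔ ¬ Disjoint w.1 v.1) := by
  constructor
  · intro hres u w hne hu hw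
    obtain ⟨v, hvS, hd⟩ := hres u w hne
    refine ⟨v, hvS, ?_⟩
    have hvu : u ≠ v := fun h => hu (h ▸ hvS)
    have hvw : w ≠ v := fun h => hw (h ▸ hvS)
    by_cases h1 : Disjoint u.1 v.1 <;> by_cases h2 : Disjoint w.1 v.1
    · rw [dist_of_disjoint hvu h1, dist_of_disjoint hvw h2] at hd; exact absurd rfl hd
    · simp [h1, h2]
    · simp [h1, h2]
    · rw [dist_of_not_disjoint hvu h1, dist_of_not_disjoint hvw h2] at hd
      exact absurd rfl hd
  · intro hcond u w hne
    by_cases hu : u ∈ S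
    · refine ⟨u, by simpa using hu, ?_⟩
      rw [SimpleGraph.dist_self]
      intro h
      have : (johnsonGraph2 n).dist w u ≠ 0 := by
        by_cases hd : Disjoint w.1 u.1
        · rw [dist_of_disjoint (Ne.symm hne) hd]; omega
        · rw [dist_of_not_disjoint (Ne.symm hne) hd]; omega
      exact this h.symm
    by_cases hw : w ∈ S
    · refine ⟨w, by simpa using hw, ?_⟩
      rw [SimpleGraph.dist_self]
      intro h
      have : (johnsonGraph2 n).dist u w ≠ 0 := by
        by_cases hd : Disjoint u.1 w.1
        · rw [dist_of_disjoint hne hd]; omega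
        · rw [dist_of_not_disjoint hne hd]; omega
      exact this h
    obtain ⟨v, hvS, hiff⟩ := hcond u w hne hu hw
    refine ⟨v, by simpa using hvS, ?_⟩
    have hvu : u ≠ v := fun h => hu (h ▸ hvS)
    have hvw : w ≠ v := fun h => hw (h ▸ hvS)
    by_cases h1 : Disjoint u.1 v.1
    · have h2 : ¬ Disjoint w.1 v.1 := hiff.mp h1
      rw [dist_of_disjoint hvu h1, dist_of_not_disjoint hvw h2]
      omega
    · have h2 : Disjoint w.1 v.1 := by
        by_contra h2
        exact h1 (hiff.mpr h2)
      rw [dist_of_not_disjoint hvu h1, dist_of_disjoint hvw h2]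
      omega

/-! ### Pair helpers -/

lemma pair_sub {v : V n} {a b : Fin n} (ha : a ∈ v.1) (hb : b ∈ v.1) :
    ({a, b} : Finset (Fin n)) ⊆ v.1 := fun x hx => by
  rcases Finset.mem_insert.mp hx with rfl | hx
  · exact ha
  · rw [Finset.mem_singleton] at hx; subst hx; exact hb

lemma pair_eq {v : V n} {a b : Fin n} (ha : a ∈ v.1) (hb : b ∈ v.1) (hab : a ≠ b) :
    v.1 = ({a, b} : Finset (Fin n)) :=
  (Finset.eq_of_subset_of_card_le (pair_sub ha hb)
    (by rw [v.2, Finset.card_pair hab])).symm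

lemma exists_other {v : V n} {a : Fin n} (ha : a ∈ v.1) :
    ∃ b, b ≠ a ∧ v.1 = {a, b} := by
  obtain ⟨x, y, hxy, hv⟩ := exists_rep v
  rw [hv] at ha
  rcases Finset.mem_insert.mp ha with rfl | ha
  · exact ⟨y, hxy.symm, hv⟩
  · rw [Finset.mem_singleton] at ha; subst ha
    exact ⟨x, hxy, by rw [hv, Finset.pair_comm]⟩

/-- Make a vertex of `J(n,2)` from two distinct points. -/
def pv (a b : Fin n) (h : a ≠ b) : V n := ⟨{a, b}, Finset.card_pair h⟩

@[simp] lemma mem_pv {a b x : Fin n} (h : a ≠ b) :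
    x ∈ (pv a b h).1 ↔ x = a ∨ x = b := by simp [pv]

lemma disjoint_pair {a b : Fin n} {s : Finset (Fin n)} :
    Disjoint ({a, b} : Finset (Fin n)) s ↔ a ∉ s ∧ b ∉ s := by
  rw [Finset.insert_eq, Finset.disjoint_union_left]; simp

lemma disjoint_pv {a b : Fin n} (h : a ≠ b) {s : Finset (Fin n)} :
    Disjoint (pv a b h).1 s ↔ a ∉ s ∧ b ∉ s := disjoint_pair

/-! ### Incidence machinery -/

/-- The set of "edges" of `S` incident to the point `x`. -/
def E (S : Finset (V n)) (x : Fin n) : Finset (V n) := S.filter (fun v => x ∈ v.1)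

lemma mem_E {S : Finset (V n)} {x : Fin n} {v : V n} :
    v ∈ E S x ↔ v ∈ S ∧ x ∈ v.1 := Finset.mem_filter

/-- The degree of a point: number of edges of `S` containing it. -/
def deg (S : Finset (V n)) (x : Fin n) : ℕ := (E S x).card

/-- Master double-counting lemma. -/
lemma sum_count (S : Finset (V n)) (p : Fin n → Prop) [DecidablePred p] :
    ∑ v ∈ S, (v.1.filter p).card = ∑ x ∈ Finset.univ.filter p, (E S x).card := by
  have key : ∀ v ∈ S, (v.1.filter p).card
      = ∑ x ∈ Finset.univ, if p x ∧ x ∈ v.1 then 1 else 0 := by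
    intro v _
    have hf : Finset.univ.filter (fun x => p x ∧ x ∈ v.1) = v.1.filter p := by
      ext x; simp [and_comm]
    rw [← hf, Finset.card_filter]
  rw [Finset.sum_congr rfl key, Finset.sum_comm, Finset.sum_filter]
  apply Finset.sum_congr rfl
  intro x _
  by_cases hp : p x
  · simp only [hp, if_true, true_and]
    rw [E, Finset.card_filter]
  · simp [hp]

/-! ### Structural consequences of resolving -/

/-- The reduced combinatorial resolving condition. -/
def Resolves (S : Finset (V n)) : Prop :=
  ∀ u w : V n, u ≠ w → u ∉ S → w ∉ S →
    ∃ v ∈ S, (Disjoint u.1 v.1 ↔ ¬ Disjoint w.1 v.1)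

lemma exists_third (hn : 3 ≤ n) (x y : Fin n) : ∃ z : Fin n, z ≠ x ∧ z ≠ y := by
  have h : ¬ (Finset.univ ⊆ ({x, y} : Finset (Fin n))) := by
    intro h
    have h1 := Finset.card_le_card h
    rw [Finset.card_univ, Fintype.card_fin] at h1
    have h2 : ({x, y} : Finset (Fin n)).card ≤ 2 := Finset.card_insert_le _ _
    omega
  obtain ⟨z, _, hz⟩ := Finset.not_subset.mp h
  simp only [Finset.mem_insert, Finset.mem_singleton, not_or] at hz
  exact ⟨z, hz.1, hz.2⟩

lemma E_eq_singleton {S : Finset (V n)} {x : Fin n} {v0 : V n}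
    (h1 : deg S x = 1) (hv : v0 ∈ E S x) : E S x = {v0} := by
  obtain ⟨a, ha⟩ := Finset.card_eq_one.mp h1
  rw [ha] at hv ⊢
  rw [Finset.mem_singleton] at hv
  rw [hv]

lemma not_mem_of_deg_zero {S : Finset (V n)} {x : Fin n} (hx : deg S x = 0) :
    ∀ v ∈ S, x ∉ v.1 := by
  intro v hv hxv
  have h : v ∈ E S x := mem_E.mpr ⟨hv, hxv⟩
  rw [Finset.card_eq_zero.mp hx] at h
  simp at h

lemma deg_pos_of_mem {S : Finset (V n)} {x : Fin n} {v : V n} (hv : v ∈ S) (hxv : x ∈ v.1) :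
    1 ≤ deg S x := Finset.card_pos.mpr ⟨v, mem_E.mpr ⟨hv, hxv⟩⟩

lemma atmost_one_isolated {S : Finset (V n)} (hn : 3 ≤ n) (hres : Resolves S)
    {x y : Fin n} (hxy : x ≠ y) (hx : deg S x = 0) (hy : deg S y = 0) : False := by
  obtain ⟨z, hzx, hzy⟩ := exists_third hn x y
  have hxm := not_mem_of_deg_zero hx
  have hym := not_mem_of_deg_zero hy
  have hu : pv x z hzx.symm ∉ S := fun h => hxm _ h (by simp)
  have hw : pv y z hzy.symm ∉ S := fun h => hym _ h (by simp)
  have hne : pv x z hzx.symm ≠ pv y z hzy.symm := by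
    intro h
    have : x ∈ (pv y z hzy.symm).1 := h ▸ (by simp : x ∈ (pv x z hzx.symm).1)
    rw [mem_pv] at this
    rcases this with h' | h'
    · exact hxy h'
    · exact hzx h'.symm
  obtain ⟨v, hv, hiff⟩ := hres _ _ hne hu hw
  rw [disjoint_pv, disjoint_pv] at hiff
  have h1 := hxm v hv
  have h2 := hym v hv
  simp only [h1, h2, true_and, not_true_eq_false, false_and, not_and] at hiff
  tauto

lemma no_pendant_edge {S : Finset (V n)} (hn : 3 ≤ n) (hres : Resolves S)
    {x y : Fin n} (hxy : x ≠ y) {v0 : V n} (hv0 : v0 ∈ S)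
    (hxv0 : x ∈ v0.1) (hyv0 : y ∈ v0.1)
    (hx : deg S x = 1) (hy : deg S y = 1) : False := by
  have hEx : E S x = {v0} := E_eq_singleton hx (mem_E.mpr ⟨hv0, hxv0⟩)
  have hEy : E S y = {v0} := E_eq_singleton hy (mem_E.mpr ⟨hv0, hyv0⟩)
  obtain ⟨z, hzx, hzy⟩ := exists_third hn x y
  have hu : pv x z hzx.symm ∉ S := by
    intro h
    have h1 : pv x z hzx.symm ∈ E S x := mem_E.mpr ⟨h, by simp⟩
    rw [hEx, Finset.mem_singleton] at h1
    have : y ∈ (pv x z hzx.symm).1 := by rw [h1]; exact hyv0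
    rw [mem_pv] at this
    rcases this with h' | h'
    · exact hxy h'.symm
    · exact hzy h'.symm
  have hw : pv y z hzy.symm ∉ S := by
    intro h
    have h1 : pv y z hzy.symm ∈ E S y := mem_E.mpr ⟨h, by simp⟩
    rw [hEy, Finset.mem_singleton] at h1
    have : x ∈ (pv y z hzy.symm).1 := by rw [h1]; exact hxv0
    rw [mem_pv] at this
    rcases this with h' | h'
    · exact hxy h'
    · exact hzx h'.symm
  have hne : pv x z hzx.symm ≠ pv y z hzy.symm := by
    intro h
    have : x ∈ (pv y z hzy.symm).1 := h ▸ (by simp : x ∈ (pv x z hzx.symm).1)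
    rw [mem_pv] at this
    rcases this with h' | h'
    · exact hxy h'
    · exact hzx h'.symm
  obtain ⟨v, hv, hiff⟩ := hres _ _ hne hu hw
  rw [disjoint_pv, disjoint_pv] at hiff
  by_cases hxv : x ∈ v.1
  · have h1 : v ∈ E S x := mem_E.mpr ⟨hv, hxv⟩
    rw [hEx, Finset.mem_singleton] at h1
    have hyv : y ∈ v.1 := h1 ▸ hyv0
    simp [hxv, hyv] at hiff
  · by_cases hyv : y ∈ v.1
    · have h1 : v ∈ E S y := mem_E.mpr ⟨hv, hyv⟩
      rw [hEy, Finset.mem_singleton] at h1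
      exact hxv (h1 ▸ hxv0)
    · simp only [hxv, hyv, not_false_eq_true, true_and, not_and] at hiff
      tauto

lemma deg_two_big_neighbor {S : Finset (V n)} (hn : 3 ≤ n) (hres : Resolves S)
    {x0 b : Fin n} (hx0 : deg S x0 = 0) (hb : deg S b = 2) :
    ∃ v ∈ S, b ∈ v.1 ∧ ∃ p ∈ v.1, p ≠ b ∧ 2 ≤ deg S p := by
  by_contra hcon
  push_neg at hcon
  obtain ⟨v1, v2, hv12, hEb⟩ := Finset.card_eq_two.mp hb
  have hv1 : v1 ∈ E S b := by rw [hEb]; simp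
  have hv2 : v2 ∈ E S b := by rw [hEb]; simp
  have hv1S := (mem_E.mp hv1).1
  have hv2S := (mem_E.mp hv2).1
  obtain ⟨a, hab, hv1e⟩ := exists_other (mem_E.mp hv1).2
  obtain ⟨c, hcb, hv2e⟩ := exists_other (mem_E.mp hv2).2
  have hav1 : a ∈ v1.1 := by rw [hv1e]; simp
  have hcv2 : c ∈ v2.1 := by rw [hv2e]; simp
  have hdega : deg S a = 1 := by
    have h1 := hcon v1 hv1S (mem_E.mp hv1).2 a hav1 hab
    have h2 := deg_pos_of_mem hv1S hav1
    omega
  have hdegc : deg S c = 1 := by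
    have h1 := hcon v2 hv2S (mem_E.mp hv2).2 c hcv2 hcb
    have h2 := deg_pos_of_mem hv2S hcv2
    omega
  have hEa : E S a = {v1} := E_eq_singleton hdega (mem_E.mpr ⟨hv1S, hav1⟩)
  have hEc : E S c = {v2} := E_eq_singleton hdegc (mem_E.mpr ⟨hv2S, hcv2⟩)
  have hac : a ≠ c := by
    intro h
    apply hv12
    apply Subtype.ext
    rw [hv1e, hv2e, h]
  have hx0a : x0 ≠ a := fun h => by rw [h, hdega] at hx0; omega
  have hx0b : x0 ≠ b := fun h => by rw [h, hb] at hx0; omega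
  have hx0c : x0 ≠ c := fun h => by rw [h, hdegc] at hx0; omega
  have hx0m := not_mem_of_deg_zero hx0
  have hu : pv x0 b hx0b ∉ S := fun h => hx0m _ h (by simp)
  have hw : pv a c hac ∉ S := by
    intro h
    have h1 : pv a c hac ∈ E S a := mem_E.mpr ⟨h, by simp⟩
    rw [hEa, Finset.mem_singleton] at h1
    have : c ∈ v1.1 := by rw [← h1]; simp
    rw [hv1e] at this
    simp only [Finset.mem_insert, Finset.mem_singleton] at this
    rcases this with h' | h'
    · exact hcb h'
    · exact hac h'.symm
  have hne : pv x0 b hx0b ≠ pv a c hac := by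
    intro h
    have : x0 ∈ (pv a c hac).1 := h ▸ (by simp : x0 ∈ (pv x0 b hx0b).1)
    rw [mem_pv] at this
    rcases this with h' | h'
    · exact hx0a h'
    · exact hx0c h'
  obtain ⟨v, hv, hiff⟩ := hres _ _ hne hu hw
  rw [disjoint_pv, disjoint_pv] at hiff
  have hx0v : x0 ∉ v.1 := hx0m v hv
  by_cases hbv : b ∈ v.1
  · have h1 : v ∈ E S b := mem_E.mpr ⟨hv, hbv⟩
    rw [hEb] at h1
    simp only [Finset.mem_insert, Finset.mem_singleton] at h1
    rcases h1 with rfl | rfl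
    · have : a ∈ v.1 := hav1
      simp [hbv, this] at hiff
    · have : c ∈ v.1 := hcv2
      simp [hbv, this] at hiff
  · have h1 := hiff.mp ⟨hx0v, hbv⟩
    rw [not_and_or, not_not, not_not] at h1
    rcases h1 with h1 | h1
    · have h2 : v ∈ E S a := mem_E.mpr ⟨hv, h1⟩
      rw [hEa, Finset.mem_singleton] at h2
      subst h2
      exact hbv (mem_E.mp hv1).2
    · have h2 : v ∈ E S c := mem_E.mpr ⟨hv, h1⟩
      rw [hEc, Finset.mem_singleton] at h2
      subst h2
      exact hbv (mem_E.mp hv2).2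

lemma no_P4 {S : Finset (V n)} (hres : Resolves S) {a p q b : Fin n} {v1 v2 v3 : V n}
    (hv1S : v1 ∈ S) (hv2S : v2 ∈ S) (hv3S : v3 ∈ S)
    (h1 : v1.1 = {a, p}) (h2 : v2.1 = {p, q}) (h3 : v3.1 = {q, b})
    (hap : a ≠ p) (haq : a ≠ q) (hab : a ≠ b) (hpq : p ≠ q) (hpb : p ≠ b) (hqb : q ≠ b)
    (hEa : E S a = {v1}) (hEp : E S p = {v1, v2}) (hEq : E S q = {v2, v3})
    (hEb : E S b = {v3}) : False := by
  have hu : pv a q haq ∉ S := by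
    intro h
    have hm : pv a q haq ∈ E S a := mem_E.mpr ⟨h, by simp⟩
    rw [hEa, Finset.mem_singleton] at hm
    have : q ∈ v1.1 := by rw [← hm]; simp
    rw [h1] at this
    simp only [Finset.mem_insert, Finset.mem_singleton] at this
    rcases this with h' | h'
    · exact haq h'.symm
    · exact hpq h'.symm
  have hw : pv p b hpb ∉ S := by
    intro h
    have hm : pv p b hpb ∈ E S p := mem_E.mpr ⟨h, by simp⟩
    rw [hEp] at hm
    simp only [Finset.mem_insert, Finset.mem_singleton] at hm
    rcases hm with rfl | rfl
    · have : b ∈ ({a, p} : Finset (Fin n)) := by rw [← h1]; simp [pv]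
      simp only [Finset.mem_insert, Finset.mem_singleton] at this
      rcases this with h' | h'
      · exact hab h'.symm
      · exact hpb h'.symm
    · have : b ∈ ({p, q} : Finset (Fin n)) := by rw [← h2]; simp [pv]
      simp only [Finset.mem_insert, Finset.mem_singleton] at this
      rcases this with h' | h'
      · exact hpb h'.symm
      · exact hqb h'.symm
  have hne : pv a q haq ≠ pv p b hpb := by
    intro h
    have : a ∈ (pv p b hpb).1 := h ▸ (by simp : a ∈ (pv a q haq).1)
    rw [mem_pv] at this
    rcases this with h' | h'
    · exact hap h'
    · exact hab h'
  obtain ⟨v, hv, hiff⟩ := hres _ _ hne hu hw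
  rw [disjoint_pv, disjoint_pv] at hiff
  have key : (a ∈ v.1 ∨ q ∈ v.1) ↔ (p ∈ v.1 ∨ b ∈ v.1) := by
    constructor
    · rintro (h | h)
      · have hm : v ∈ E S a := mem_E.mpr ⟨hv, h⟩
        rw [hEa, Finset.mem_singleton] at hm
        subst hm
        left; rw [h1]; simp
      · have hm : v ∈ E S q := mem_E.mpr ⟨hv, h⟩
        rw [hEq] at hm
        simp only [Finset.mem_insert, Finset.mem_singleton] at hm
        rcases hm with rfl | rfl
        · left; rw [h2]; simp
        · right; rw [h3]; simp
    · rintro (h | h)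
      · have hm : v ∈ E S p := mem_E.mpr ⟨hv, h⟩
        rw [hEp] at hm
        simp only [Finset.mem_insert, Finset.mem_singleton] at hm
        rcases hm with rfl | rfl
        · left; rw [h1]; simp
        · right; rw [h2]; simp
      · have hm : v ∈ E S b := mem_E.mpr ⟨hv, h⟩
        rw [hEb, Finset.mem_singleton] at hm
        subst hm
        right; rw [h3]; simp
  tauto

/-! ### Counting lemmas -/

lemma sum_deg (S : Finset (V n)) : ∑ x ∈ Finset.univ, deg S x = 2 * S.card := by
  have h := sum_count S (fun _ => True)
  simp only [Finset.filter_true] at h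
  rw [Finset.sum_congr rfl (fun (v : V n) _ => v.2)] at h
  rw [Finset.sum_const, smul_eq_mul] at h
  simp only [deg]
  omega

lemma partition_count (S : Finset (V n)) :
    (Finset.univ.filter (fun a => deg S a = 0)).card
      + (Finset.univ.filter (fun a => deg S a = 1)).card
      + (Finset.univ.filter (fun a => deg S a = 2)).card
      + (Finset.univ.filter (fun a => 3 ≤ deg S a)).card = n := by
  rw [Finset.card_filter, Finset.card_filter, Finset.card_filter, Finset.card_filter,
    ← Finset.sum_add_distrib, ← Finset.sum_add_distrib, ← Finset.sum_add_distrib]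
  have h : ∀ a ∈ (Finset.univ : Finset (Fin n)),
      ((if deg S a = 0 then 1 else 0) + (if deg S a = 1 then 1 else 0)
        + (if deg S a = 2 then 1 else 0) + (if 3 ≤ deg S a then 1 else 0)) = 1 := by
    intro a _
    split_ifs <;> omega
  rw [Finset.sum_congr rfl h, Finset.sum_const, smul_eq_mul, mul_one,
    Finset.card_univ, Fintype.card_fin]

lemma deg_sum_lower (S : Finset (V n)) :
    (Finset.univ.filter (fun a => deg S a = 1)).card
      + 2 * (Finset.univ.filter (fun a => deg S a = 2)).card
      + 3 * (Finset.univ.filter (fun a => 3 ≤ deg S a)).card ≤ 2 * S.card := by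
  rw [Finset.card_filter, Finset.card_filter, Finset.card_filter,
    Finset.mul_sum, Finset.mul_sum, ← Finset.sum_add_distrib, ← Finset.sum_add_distrib]
  rw [← sum_deg S]
  apply Finset.sum_le_sum
  intro a _
  split_ifs <;> omega

lemma card_deg_one_le (S : Finset (V n)) (hn3 : 3 ≤ n) (hres : Resolves S) :
    (Finset.univ.filter (fun a => deg S a = 1)).card
      ≤ (S.filter (fun v => ∃ x ∈ v.1, deg S x = 1)).card := by
  have h := sum_count S (fun a => deg S a = 1)
  have hR : ∑ x ∈ Finset.univ.filter (fun a => deg S a = 1), (E S x).card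
      = (Finset.univ.filter (fun a => deg S a = 1)).card := by
    have : ∀ x ∈ Finset.univ.filter (fun a => deg S a = 1), (E S x).card = 1 := by
      intro x hx
      exact (Finset.mem_filter.mp hx).2
    rw [Finset.sum_congr rfl this, Finset.sum_const, smul_eq_mul, mul_one]
  have hzero : ∀ v ∈ S, v ∉ S.filter (fun v => ∃ x ∈ v.1, deg S x = 1) →
      (v.1.filter (fun a => deg S a = 1)).card = 0 := by
    intro v hv hnv
    rw [Finset.card_eq_zero, Finset.filter_eq_empty_iff]
    intro x hx hdx
    exact hnv (Finset.mem_filter.mpr ⟨hv, ⟨x, hx, hdx⟩⟩)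
  have hLHS : ∑ v ∈ S, (v.1.filter (fun a => deg S a = 1)).card
      = ∑ v ∈ S.filter (fun v => ∃ x ∈ v.1, deg S x = 1),
          (v.1.filter (fun a => deg S a = 1)).card :=
    (Finset.sum_subset (Finset.filter_subset _ _) hzero).symm
  have hbound : ∀ v ∈ S.filter (fun v => ∃ x ∈ v.1, deg S x = 1),
      (v.1.filter (fun a => deg S a = 1)).card ≤ 1 := by
    intro v hv
    rw [Finset.mem_filter] at hv
    by_contra hc
    push_neg at hc
    have hsub2 : v.1.filter (fun a => deg S a = 1) ⊆ v.1 := Finset.filter_subset _ _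
    have hcard : (v.1.filter (fun a => deg S a = 1)).card ≤ 2 :=
      le_trans (Finset.card_le_card hsub2) (le_of_eq v.2)
    have heq : v.1.filter (fun a => deg S a = 1) = v.1 := by
      have h22 : v.1.card ≤ (v.1.filter (fun a => deg S a = 1)).card := by
        rw [v.2]; omega
      exact Finset.eq_of_subset_of_card_le hsub2 h22
    obtain ⟨a, b, hab, hv2⟩ := exists_rep v
    have hda : deg S a = 1 := by
      have : a ∈ v.1.filter (fun a => deg S a = 1) := by rw [heq, hv2]; simp
      exact (Finset.mem_filter.mp this).2
    have hdb : deg S b = 1 := by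
      have : b ∈ v.1.filter (fun a => deg S a = 1) := by rw [heq, hv2]; simp
      exact (Finset.mem_filter.mp this).2
    exact no_pendant_edge hn3 hres hab hv.1 (by rw [hv2]; simp) (by rw [hv2]; simp) hda hdb
  calc (Finset.univ.filter (fun a => deg S a = 1)).card
      = ∑ v ∈ S.filter (fun v => ∃ x ∈ v.1, deg S x = 1),
          (v.1.filter (fun a => deg S a = 1)).card := by rw [← hLHS, h, hR]
    _ ≤ ∑ _v ∈ S.filter (fun v => ∃ x ∈ v.1, deg S x = 1), 1 := Finset.sum_le_sum hbound
    _ = (S.filter (fun v => ∃ x ∈ v.1, deg S x = 1)).card := by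
        rw [Finset.sum_const, smul_eq_mul, mul_one]

lemma card_deg_two_le (S : Finset (V n)) (hn3 : 3 ≤ n) (hres : Resolves S)
    {x0 : Fin n} (hx0 : deg S x0 = 0) :
    (Finset.univ.filter (fun a => deg S a = 2)).card
      ≤ 2 * (S.filter (fun v => ∀ x ∈ v.1, 2 ≤ deg S x)).card := by
  have h := sum_count (S.filter (fun v => ∀ x ∈ v.1, 2 ≤ deg S x)) (fun a => deg S a = 2)
  have hL : ∑ v ∈ S.filter (fun v => ∀ x ∈ v.1, 2 ≤ deg S x),
      (v.1.filter (fun a => deg S a = 2)).card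
      ≤ 2 * (S.filter (fun v => ∀ x ∈ v.1, 2 ≤ deg S x)).card := by
    calc ∑ v ∈ S.filter (fun v => ∀ x ∈ v.1, 2 ≤ deg S x),
        (v.1.filter (fun a => deg S a = 2)).card
        ≤ ∑ v ∈ S.filter (fun v => ∀ x ∈ v.1, 2 ≤ deg S x), 2 :=
          Finset.sum_le_sum (fun v _ =>
            le_trans (Finset.card_le_card (Finset.filter_subset _ _)) (le_of_eq v.2))
      _ = 2 * (S.filter (fun v => ∀ x ∈ v.1, 2 ≤ deg S x)).card := by
          rw [Finset.sum_const, smul_eq_mul, mul_comm]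
  have hR : (Finset.univ.filter (fun a => deg S a = 2)).card
      ≤ ∑ x ∈ Finset.univ.filter (fun a => deg S a = 2),
          (E (S.filter (fun v => ∀ x ∈ v.1, 2 ≤ deg S x)) x).card := by
    rw [Finset.card_eq_sum_ones]
    apply Finset.sum_le_sum
    intro b hb
    have hdb : deg S b = 2 := (Finset.mem_filter.mp hb).2
    obtain ⟨v, hvS, hbv, p, hpv, hpb, hdp⟩ := deg_two_big_neighbor hn3 hres hx0 hdb
    have hvY : v ∈ S.filter (fun v => ∀ x ∈ v.1, 2 ≤ deg S x) := by
      rw [Finset.mem_filter]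
      refine ⟨hvS, ?_⟩
      intro x hx
      have hve : v.1 = {b, p} := pair_eq hbv hpv (Ne.symm hpb)
      rw [hve] at hx
      simp only [Finset.mem_insert, Finset.mem_singleton] at hx
      rcases hx with rfl | rfl
      · omega
      · exact hdp
    have : v ∈ E (S.filter (fun v => ∀ x ∈ v.1, 2 ≤ deg S x)) b := mem_E.mpr ⟨hvY, hbv⟩
    exact Finset.card_pos.mpr ⟨v, this⟩
  omega

lemma S1_YY_le (S : Finset (V n)) :
    (S.filter (fun v => ∃ x ∈ v.1, deg S x = 1)).card
      + (S.filter (fun v => ∀ x ∈ v.1, 2 ≤ deg S x)).card ≤ S.card := by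
  have hdis : Disjoint (S.filter (fun v => ∃ x ∈ v.1, deg S x = 1))
      (S.filter (fun v => ∀ x ∈ v.1, 2 ≤ deg S x)) := by
    rw [Finset.disjoint_left]
    intro v hv1 hv2
    rw [Finset.mem_filter] at hv1 hv2
    obtain ⟨x, hx, hdx⟩ := hv1.2
    have := hv2.2 x hx
    omega
  rw [← Finset.card_union_of_disjoint hdis]
  exact Finset.card_le_card (Finset.union_subset (Finset.filter_subset _ _)
    (Finset.filter_subset _ _))

lemma lower_bound (hn : 6 ≤ n) (S : Finset (V n)) (hres : Resolves S) :
    2 * (n - n % 3) / 3 + n % 3 ≤ S.card := by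
  have hn3 : 3 ≤ n := by omega
  have hpart := partition_count S
  have hdegsum := deg_sum_lower S
  have hC1 := card_deg_one_le S hn3 hres
  have hN5 := S1_YY_le S
  have hzle : (Finset.univ.filter (fun a => deg S a = 0)).card ≤ 1 := by
    by_contra hc
    push_neg at hc
    obtain ⟨a, ha, b, hb, hab⟩ := Finset.one_lt_card.mp hc
    exact atmost_one_isolated hn3 hres hab (Finset.mem_filter.mp ha).2
      (Finset.mem_filter.mp hb).2
  by_cases hiso : ∃ x0, deg S x0 = 0
  · obtain ⟨x0, hx0⟩ := hiso
    have hzge : 1 ≤ (Finset.univ.filter (fun a => deg S a = 0)).card :=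
      Finset.card_pos.mpr ⟨x0, Finset.mem_filter.mpr ⟨Finset.mem_univ _, hx0⟩⟩
    have hC2 := card_deg_two_le S hn3 hres hx0
    -- helper facts in case the high-degree counts vanish
    have hno2 : (Finset.univ.filter (fun a => deg S a = 2)).card = 0 →
        ∀ a : Fin n, deg S a ≠ 2 := by
      intro h a ha
      have : a ∈ Finset.univ.filter (fun a => deg S a = 2) :=
        Finset.mem_filter.mpr ⟨Finset.mem_univ _, ha⟩
      rw [Finset.card_eq_zero.mp h] at this
      simp at this
    have hno3 : (Finset.univ.filter (fun a => 3 ≤ deg S a)).card = 0 →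
        ∀ a : Fin n, deg S a ≤ 2 := by
      intro h a
      by_contra ha
      have : a ∈ Finset.univ.filter (fun a => 3 ≤ deg S a) :=
        Finset.mem_filter.mpr ⟨Finset.mem_univ _, by omega⟩
      rw [Finset.card_eq_zero.mp h] at this
      simp at this
    have hFa : ¬((Finset.univ.filter (fun a => deg S a = 2)).card = 0 ∧
        (Finset.univ.filter (fun a => 3 ≤ deg S a)).card = 0 ∧
        1 ≤ (Finset.univ.filter (fun a => deg S a = 1)).card) := by
      rintro ⟨h2, h3, h1⟩
      obtain ⟨b, hb⟩ := Finset.card_pos.mp h1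
      have hdb : deg S b = 1 := (Finset.mem_filter.mp hb).2
      obtain ⟨v, hvE⟩ := Finset.card_pos.mp (show 0 < (E S b).card by rw [← deg]; omega)
      have hvS := (mem_E.mp hvE).1
      have hbv := (mem_E.mp hvE).2
      obtain ⟨a, hab, hve⟩ := exists_other hbv
      have hav : a ∈ v.1 := by rw [hve]; simp
      have hda : deg S a = 1 := by
        have hge := deg_pos_of_mem hvS hav
        have hne2 := hno2 h2 a
        have hle2 := hno3 h3 a
        omega
      exact no_pendant_edge hn3 hres (Ne.symm hab) hvS hbv hav hdb hda
    have hFb : ¬((Finset.univ.filter (fun a => deg S a = 2)).card = 1 ∧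
        (Finset.univ.filter (fun a => 3 ≤ deg S a)).card = 0) := by
      rintro ⟨h2, h3⟩
      obtain ⟨b, hbeq⟩ := Finset.card_eq_one.mp h2
      have hdb : deg S b = 2 := by
        have : b ∈ Finset.univ.filter (fun a => deg S a = 2) := by
          rw [hbeq]; simp
        exact (Finset.mem_filter.mp this).2
      obtain ⟨v, hvS, hbv, p, hpv, hpb, hdp⟩ := deg_two_big_neighbor hn3 hres hx0 hdb
      have hdp2 : deg S p = 2 := by
        have := hno3 h3 p
        omega
      have : p ∈ Finset.univ.filter (fun a => deg S a = 2) :=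
        Finset.mem_filter.mpr ⟨Finset.mem_univ _, hdp2⟩
      rw [hbeq, Finset.mem_singleton] at this
      exact hpb this
    have hFc : ¬((Finset.univ.filter (fun a => deg S a = 2)).card = 2 ∧
        (Finset.univ.filter (fun a => 3 ≤ deg S a)).card = 0) := by
      rintro ⟨h2, h3⟩
      obtain ⟨p, q, hpq, hfeq⟩ := Finset.card_eq_two.mp h2
      have hdp : deg S p = 2 := by
        have : p ∈ Finset.univ.filter (fun a => deg S a = 2) := by rw [hfeq]; simp
        exact (Finset.mem_filter.mp this).2
      have hdq : deg S q = 2 := by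
        have : q ∈ Finset.univ.filter (fun a => deg S a = 2) := by rw [hfeq]; simp
        exact (Finset.mem_filter.mp this).2
      have hdeg2mem : ∀ a : Fin n, deg S a = 2 → a = p ∨ a = q := by
        intro a ha
        have : a ∈ Finset.univ.filter (fun a => deg S a = 2) :=
          Finset.mem_filter.mpr ⟨Finset.mem_univ _, ha⟩
        rw [hfeq] at this
        simpa using this
      -- p has a "big" neighbor, which must be q
      obtain ⟨v2, hv2S, hpv2, p', hp'v2, hp'p, hdp'⟩ := deg_two_big_neighbor hn3 hres hx0 hdp
      have hp'q : p' = q := by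
        have h2' : deg S p' = 2 := by have := hno3 h3 p'; omega
        rcases hdeg2mem p' h2' with h | h
        · exact absurd h hp'p
        · exact h
      have hqv2 : q ∈ v2.1 := hp'q ▸ hp'v2
      have hv2e : v2.1 = {p, q} := pair_eq hpv2 hqv2 hpq
      -- the other edge at p
      have hv2Ep : v2 ∈ E S p := mem_E.mpr ⟨hv2S, hpv2⟩
      obtain ⟨v1, hv1ne, hEp⟩ : ∃ v1, v1 ≠ v2 ∧ E S p = {v2, v1} := by
        obtain ⟨w1, w2, hw, hEp'⟩ := Finset.card_eq_two.mp hdp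
        rw [hEp'] at hv2Ep
        simp only [Finset.mem_insert, Finset.mem_singleton] at hv2Ep
        rcases hv2Ep with rfl | rfl
        · exact ⟨w2, Ne.symm hw, hEp'⟩
        · exact ⟨w1, hw, by rw [hEp', Finset.pair_comm]⟩
      have hv1Ep : v1 ∈ E S p := by rw [hEp]; simp
      have hv1S := (mem_E.mp hv1Ep).1
      have hpv1 := (mem_E.mp hv1Ep).2
      obtain ⟨a, hap, hv1e⟩ := exists_other hpv1
      have hav1 : a ∈ v1.1 := by rw [hv1e]; simp
      have haq : a ≠ q := by
        intro h
        apply hv1ne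
        apply Subtype.ext
        rw [hv1e, hv2e, h]
      have hda : deg S a = 1 := by
        have hge := deg_pos_of_mem hv1S hav1
        have hle2 := hno3 h3 a
        have : deg S a ≠ 2 := by
          intro h
          rcases hdeg2mem a h with h' | h'
          · exact hap h'
          · exact haq h'
        omega
      have hEa : E S a = {v1} := E_eq_singleton hda (mem_E.mpr ⟨hv1S, hav1⟩)
      -- q has a big neighbor, which must be p, realized by edge v2
      obtain ⟨v2', hv2'S, hqv2', q', hq'v2', hq'q, hdq'⟩ :=
        deg_two_big_neighbor hn3 hres hx0 hdq
      have hq'p : q' = p := by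
        have h2' : deg S q' = 2 := by have := hno3 h3 q'; omega
        rcases hdeg2mem q' h2' with h | h
        · exact h
        · exact absurd h hq'q
      have hpv2'' : p ∈ v2'.1 := hq'p ▸ hq'v2'
      have hv2'e : v2'.1 = {p, q} := pair_eq hpv2'' hqv2' hpq
      have hv2Eq : v2 ∈ E S q := mem_E.mpr ⟨hv2S, hqv2⟩
      obtain ⟨v3, hv3ne, hEq⟩ : ∃ v3, v3 ≠ v2 ∧ E S q = {v2, v3} := by
        obtain ⟨w1, w2, hw, hEq'⟩ := Finset.card_eq_two.mp hdq
        rw [hEq'] at hv2Eq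
        simp only [Finset.mem_insert, Finset.mem_singleton] at hv2Eq
        rcases hv2Eq with rfl | rfl
        · exact ⟨w2, Ne.symm hw, hEq'⟩
        · exact ⟨w1, hw, by rw [hEq', Finset.pair_comm]⟩
      have hv3Eq : v3 ∈ E S q := by rw [hEq]; simp
      have hv3S := (mem_E.mp hv3Eq).1
      have hqv3 := (mem_E.mp hv3Eq).2
      obtain ⟨b, hbq, hv3e⟩ := exists_other hqv3
      have hbv3 : b ∈ v3.1 := by rw [hv3e]; simp
      have hbp : b ≠ p := by
        intro h
        apply hv3ne
        apply Subtype.ext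
        rw [hv3e, hv2e, h, Finset.pair_comm]
      have hdbb : deg S b = 1 := by
        have hge := deg_pos_of_mem hv3S hbv3
        have hle2 := hno3 h3 b
        have : deg S b ≠ 2 := by
          intro h
          rcases hdeg2mem b h with h' | h'
          · exact hbp h'
          · exact hbq h'
        omega
      have hEb : E S b = {v3} := E_eq_singleton hdbb (mem_E.mpr ⟨hv3S, hbv3⟩)
      have hab : a ≠ b := by
        intro h
        subst h
        have hv1v3 : v1 ≠ v3 := by
          intro h'
          have : p ∈ v3.1 := by rw [← h', hv1e]; simp
          rw [hv3e] at this
          simp only [Finset.mem_insert, Finset.mem_singleton] at this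
          rcases this with h'' | h''
          · exact hpq h''
          · exact hap h''.symm
        have : v3 ∈ E S a := mem_E.mpr ⟨hv3S, hbv3⟩
        rw [hEa, Finset.mem_singleton] at this
        exact hv1v3 this.symm
      exact no_P4 hres hv1S hv2S hv3S (by rw [hv1e, Finset.pair_comm]) hv2e
        (by rw [hv3e, Finset.pair_comm]) hap haq hab hpq (Ne.symm hbp)
        (Ne.symm hbq) hEa (by rw [hEp, Finset.pair_comm]) hEq hEb
    -- the case y2 = 0, y3 = 0, x = 0 is impossible since n ≥ 6
    have hFa' : ¬((Finset.univ.filter (fun a => deg S a = 2)).card = 0 ∧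
        (Finset.univ.filter (fun a => 3 ≤ deg S a)).card = 0) := by
      rintro ⟨h2, h3⟩
      apply hFa
      refine ⟨h2, h3, ?_⟩
      omega
    omega
  · push_neg at hiso
    have hz0 : (Finset.univ.filter (fun a => deg S a = 0)).card = 0 := by
      rw [Finset.card_eq_zero, Finset.filter_eq_empty_iff]
      intro a _
      exact hiso a
    omega

/-! ### Upper bound construction -/

def cN (n x : ℕ) : ℕ := if x + 3 ≤ 3 * (n / 3) then 3 * (x / 3) else 3 * (n / 3) - 3

lemma cN_lt {n x : ℕ} (hx : x < n) : cN n x < n := by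
  unfold cN; split_ifs <;> omega

lemma cN_idem (n x : ℕ) : cN n (cN n x) = cN n x := by
  unfold cN; split_ifs <;> omega

lemma cN_fix_iff {n x : ℕ} (hn : 3 ≤ n) (hx : x < n) :
    cN n x = x ↔ x % 3 = 0 ∧ x / 3 < n / 3 := by
  unfold cN; split_ifs <;> omega

lemma cN_succ1 {n z : ℕ} (hn : 6 ≤ n) (hz : z < n) (h : cN n z = z) :
    z + 2 < n ∧ cN n (z + 1) = z ∧ cN n (z + 2) = z := by
  unfold cN at h ⊢; split_ifs at h ⊢ <;> omega

def cF {n : ℕ} (x : Fin n) : Fin n := ⟨cN n x.1, cN_lt x.2⟩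

lemma cF_idem {n : ℕ} (x : Fin n) : cF (cF x) = cF x :=
  Fin.ext (cN_idem n x.1)

lemma of_mem {n : ℕ} {x : Fin n} (h : x ∈ Finset.univ.filter (fun x => cF x ≠ x)) :
    cF x ≠ x := (Finset.mem_filter.mp h).2

def SU (n : ℕ) : Finset (V n) :=
  (Finset.univ.filter (fun x => cF x ≠ x)).attach.image
    (fun x => pv (cF x.1) x.1 (of_mem x.2))

lemma mem_SU {n : ℕ} {v : V n} :
    v ∈ SU n ↔ ∃ x : Fin n, cF x ≠ x ∧ v.1 = {cF x, x} := by
  unfold SU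
  rw [Finset.mem_image]
  constructor
  · rintro ⟨x, _, rfl⟩
    exact ⟨x.1, of_mem x.2, rfl⟩
  · rintro ⟨x, hx, hv⟩
    refine ⟨⟨x, Finset.mem_filter.mpr ⟨Finset.mem_univ _, hx⟩⟩, Finset.mem_attach _ _, ?_⟩
    exact Subtype.ext hv.symm

lemma grp_SU {n : ℕ} {v : V n} (hv : v ∈ SU n) {a b : Fin n}
    (ha : a ∈ v.1) (hb : b ∈ v.1) : cF a = cF b := by
  obtain ⟨x, hx, hve⟩ := mem_SU.mp hv
  have key : ∀ c : Fin n, c ∈ v.1 → cF c = cF x := by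
    intro c hc
    rw [hve] at hc
    simp only [Finset.mem_insert, Finset.mem_singleton] at hc
    rcases hc with rfl | rfl
    · exact cF_idem x
    · rfl
  rw [key a ha, key b hb]

lemma edge_mem_SU {n : ℕ} {x : Fin n} (hx : cF x ≠ x) : pv (cF x) x hx ∈ SU n :=
  mem_SU.mpr ⟨x, hx, rfl⟩

lemma E_SU_leaf {n : ℕ} {x : Fin n} (hx : cF x ≠ x) :
    E (SU n) x = {pv (cF x) x hx} := by
  ext v
  rw [mem_E, Finset.mem_singleton]
  constructor
  · rintro ⟨hv, hxv⟩
    obtain ⟨y, hy, hve⟩ := mem_SU.mp hv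
    rw [hve] at hxv
    simp only [Finset.mem_insert, Finset.mem_singleton] at hxv
    rcases hxv with h | h
    · exfalso
      apply hx
      rw [h, cF_idem]
    · subst h
      exact Subtype.ext hve
  · rintro rfl
    exact ⟨edge_mem_SU hx, by simp⟩

lemma E_SU_center {n : ℕ} (hn : 6 ≤ n) {z : Fin n} (hz : cF z = z) :
    ∃ v1 v2 : V n, v1 ≠ v2 ∧ v1 ∈ E (SU n) z ∧ v2 ∈ E (SU n) z := by
  obtain ⟨hlt, h1, h2⟩ := cN_succ1 hn z.2 (congrArg Fin.val hz)
  set y1 : Fin n := ⟨z.1 + 1, by omega⟩ with hy1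
  set y2 : Fin n := ⟨z.1 + 2, by omega⟩ with hy2
  have hc1 : cF y1 = z := Fin.ext h1
  have hc2 : cF y2 = z := Fin.ext h2
  have hl1 : cF y1 ≠ y1 := by
    rw [hc1]; intro h; have := congrArg Fin.val h; simp [hy1] at this
  have hl2 : cF y2 ≠ y2 := by
    rw [hc2]; intro h; have := congrArg Fin.val h; simp [hy2] at this
  refine ⟨pv (cF y1) y1 hl1, pv (cF y2) y2 hl2, ?_, ?_, ?_⟩
  · intro h
    have hm : y1 ∈ (pv (cF y2) y2 hl2).1 := by rw [← h]; simp [pv]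
    rw [mem_pv] at hm
    rcases hm with h' | h'
    · rw [hc2] at h'
      have := congrArg Fin.val h'
      simp [hy1] at this
    · have := congrArg Fin.val h'
      simp [hy1, hy2] at this
  · exact mem_E.mpr ⟨edge_mem_SU hl1, by rw [mem_pv, hc1]; left; rfl⟩
  · exact mem_E.mpr ⟨edge_mem_SU hl2, by rw [mem_pv, hc2]; left; rfl⟩

lemma E_SU_nonempty {n : ℕ} (hn : 6 ≤ n) (x : Fin n) : (E (SU n) x).Nonempty := by
  by_cases hx : cF x = x
  · obtain ⟨v1, _, _, hv1, _⟩ := E_SU_center hn hx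
    exact ⟨v1, hv1⟩
  · exact ⟨pv (cF x) x hx, by rw [E_SU_leaf hx]; simp⟩

lemma edge_inj {n : ℕ} {x y : Fin n} (hx : cF x ≠ x) (hy : cF y ≠ y)
    (h : ({cF x, x} : Finset (Fin n)) = {cF y, y}) : x = y := by
  have hxm : x ∈ ({cF y, y} : Finset (Fin n)) := by rw [← h]; simp
  simp only [Finset.mem_insert, Finset.mem_singleton] at hxm
  rcases hxm with h' | h'
  · exfalso
    apply hx
    rw [h', cF_idem]
  · exact h'

lemma E_SU_inj {n : ℕ} (hn : 6 ≤ n) {x y : Fin n} (h : E (SU n) x = E (SU n) y) :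
    x = y := by
  by_contra hxy
  obtain ⟨v, hv⟩ := E_SU_nonempty hn x
  have hvy : v ∈ E (SU n) y := h ▸ hv
  have hvS := (mem_E.mp hv).1
  have hxv := (mem_E.mp hv).2
  have hyv := (mem_E.mp hvy).2
  obtain ⟨t, ht, hve⟩ := mem_SU.mp hvS
  have hmem : ∀ c : Fin n, c ∈ v.1 → c = cF t ∨ c = t := by
    intro c hc
    rw [hve] at hc
    simpa using hc
  -- each of x, y is either the leaf t or the center cF t of the edge v
  rcases hmem x hxv with h1 | h1 <;> rcases hmem y hyv with h2 | h2
  · exact hxy (h1.trans h2.symm)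
  · -- x is the center, y = t is the leaf
    obtain ⟨v1, v2, h12, hm1, hm2⟩ := E_SU_center hn (cF_idem t)
    have e1 : E (SU n) (cF t) = E (SU n) t := by rw [← h1, ← h2]; exact h
    rw [e1, E_SU_leaf ht, Finset.mem_singleton] at hm1 hm2
    exact h12 (hm1.trans hm2.symm)
  · obtain ⟨v1, v2, h12, hm1, hm2⟩ := E_SU_center hn (cF_idem t)
    have e1 : E (SU n) (cF t) = E (SU n) t := by rw [← h2, ← h1]; exact h.symm
    rw [e1, E_SU_leaf ht, Finset.mem_singleton] at hm1 hm2
    exact h12 (hm1.trans hm2.symm)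
  · exact hxy (h1.trans h2.symm)

def code (S : Finset (V n)) (u : V n) : Finset (V n) := S.filter (fun v => ¬ Disjoint u.1 v.1)

lemma code_eq_union {S : Finset (V n)} {u : V n} {a b : Fin n} (hu : u.1 = {a, b}) :
    code S u = E S a ∪ E S b := by
  ext v
  simp only [code, Finset.mem_filter, Finset.mem_union, mem_E, hu, disjoint_pair]
  tauto

lemma E_eq_of_groups {n : ℕ} (hn : 6 ≤ n) {a b p q : Fin n}
    (hab : cF a ≠ cF b) (hpq : cF p ≠ cF q) (hap : cF a = cF p)
    (hun : E (SU n) a ∪ E (SU n) b = E (SU n) p ∪ E (SU n) q) :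
    E (SU n) a = E (SU n) p := by
  ext v
  constructor
  · intro hv
    have hv' : v ∈ E (SU n) p ∪ E (SU n) q := by
      rw [← hun]; exact Finset.mem_union_left _ hv
    rcases Finset.mem_union.mp hv' with h' | h'
    · exact h'
    · exfalso
      have hgr : cF a = cF q := grp_SU (mem_E.mp hv).1 (mem_E.mp hv).2 (mem_E.mp h').2
      exact hpq (hap.symm.trans hgr)
  · intro hv
    have hv' : v ∈ E (SU n) a ∪ E (SU n) b := by
      rw [hun]; exact Finset.mem_union_left _ hv
    rcases Finset.mem_union.mp hv' with h' | h'
    · exact h'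
    · exfalso
      have hgr : cF p = cF b := grp_SU (mem_E.mp hv).1 (mem_E.mp hv).2 (mem_E.mp h').2
      exact hab (hap.trans hgr)

lemma resolves_SU {n : ℕ} (hn : 6 ≤ n) : Resolves (SU n) := by
  intro u w hne hu hw
  by_contra hcon
  push_neg at hcon
  have hcode : code (SU n) u = code (SU n) w := by
    ext v
    simp only [code, Finset.mem_filter, and_congr_right_iff]
    intro hv
    have := hcon v hv
    tauto
  obtain ⟨a, b, hab, hue⟩ := exists_rep u
  obtain ⟨p, q, hpq, hwe⟩ := exists_rep w
  have hun : E (SU n) a ∪ E (SU n) b = E (SU n) p ∪ E (SU n) q := by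
    rw [← code_eq_union hue, ← code_eq_union hwe, hcode]
  have hga : cF a = cF p ∨ cF a = cF q := by
    obtain ⟨v, hv⟩ := E_SU_nonempty hn a
    have hv' : v ∈ E (SU n) p ∪ E (SU n) q := by
      rw [← hun]; exact Finset.mem_union_left _ hv
    rcases Finset.mem_union.mp hv' with h' | h'
    · exact Or.inl (grp_SU (mem_E.mp hv).1 (mem_E.mp hv).2 (mem_E.mp h').2)
    · exact Or.inr (grp_SU (mem_E.mp hv).1 (mem_E.mp hv).2 (mem_E.mp h').2)
  have hgb : cF b = cF p ∨ cF b = cF q := by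
    obtain ⟨v, hv⟩ := E_SU_nonempty hn b
    have hv' : v ∈ E (SU n) p ∪ E (SU n) q := by
      rw [← hun]; exact Finset.mem_union_right _ hv
    rcases Finset.mem_union.mp hv' with h' | h'
    · exact Or.inl (grp_SU (mem_E.mp hv).1 (mem_E.mp hv).2 (mem_E.mp h').2)
    · exact Or.inr (grp_SU (mem_E.mp hv).1 (mem_E.mp hv).2 (mem_E.mp h').2)
  have hgp : cF p = cF a ∨ cF p = cF b := by
    obtain ⟨v, hv⟩ := E_SU_nonempty hn p
    have hv' : v ∈ E (SU n) a ∪ E (SU n) b := by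
      rw [hun]; exact Finset.mem_union_left _ hv
    rcases Finset.mem_union.mp hv' with h' | h'
    · exact Or.inl (grp_SU (mem_E.mp hv).1 (mem_E.mp hv).2 (mem_E.mp h').2)
    · exact Or.inr (grp_SU (mem_E.mp hv).1 (mem_E.mp hv).2 (mem_E.mp h').2)
  have hgq : cF q = cF a ∨ cF q = cF b := by
    obtain ⟨v, hv⟩ := E_SU_nonempty hn q
    have hv' : v ∈ E (SU n) a ∪ E (SU n) b := by
      rw [hun]; exact Finset.mem_union_right _ hv
    rcases Finset.mem_union.mp hv' with h' | h'
    · exact Or.inl (grp_SU (mem_E.mp hv).1 (mem_E.mp hv).2 (mem_E.mp h').2)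
    · exact Or.inr (grp_SU (mem_E.mp hv).1 (mem_E.mp hv).2 (mem_E.mp h').2)
  by_cases hsab : cF a = cF b
  · have hgap : cF p = cF a := by
      rcases hgp with h | h
      · exact h
      · exact h.trans hsab.symm
    have hgaq : cF q = cF a := by
      rcases hgq with h | h
      · exact h
      · exact h.trans hsab.symm
    have hla : cF a ≠ a := by
      intro h
      apply hu
      apply mem_SU.mpr
      refine ⟨b, ?_, ?_⟩
      · intro hc
        apply hab
        rw [← h, hsab, hc]
      · have hba : cF b = a := by rw [← hsab, h]
        rw [hue, hba]
    have hlb : cF b ≠ b := by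
      intro h
      apply hu
      apply mem_SU.mpr
      refine ⟨a, ?_, ?_⟩
      · intro hc
        apply hab
        rw [← hc, hsab, h]
      · have hba : cF a = b := by rw [hsab, h]
        rw [hue, hba, Finset.pair_comm]
    have hlp : cF p ≠ p := by
      intro h
      apply hw
      apply mem_SU.mpr
      refine ⟨q, ?_, ?_⟩
      · intro hc
        apply hpq
        rw [← h, hgap, ← hgaq, hc]
      · have hba : cF q = p := by rw [hgaq, ← hgap, h]
        rw [hwe, hba]
    have hlq : cF q ≠ q := by
      intro h
      apply hw
      apply mem_SU.mpr
      refine ⟨p, ?_, ?_⟩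
      · intro hc
        apply hpq
        rw [← hc, hgap, ← hgaq, h]
      · have hba : cF p = q := by rw [hgap, ← hgaq, h]
        rw [hwe, hba, Finset.pair_comm]
    rw [E_SU_leaf hla, E_SU_leaf hlb, E_SU_leaf hlp, E_SU_leaf hlq] at hun
    have hea : pv (cF a) a hla ∈
        ({pv (cF p) p hlp} : Finset (V n)) ∪ {pv (cF q) q hlq} := by
      rw [← hun]; simp
    have heb : pv (cF b) b hlb ∈
        ({pv (cF p) p hlp} : Finset (V n)) ∪ {pv (cF q) q hlq} := by
      rw [← hun]; simp
    simp only [Finset.mem_union, Finset.mem_singleton] at hea heb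
    have conv : ∀ (x y : Fin n) (h1 : cF x ≠ x) (h2 : cF y ≠ y),
        pv (cF x) x h1 = pv (cF y) y h2 → x = y := by
      intro x y h1 h2 hcc
      exact edge_inj h1 h2 (congrArg Subtype.val hcc)
    apply hne
    apply Subtype.ext
    rcases hea with h1 | h1 <;> rcases heb with h2 | h2
    · exact absurd ((conv _ _ _ _ h1).trans (conv _ _ _ _ h2).symm) hab
    · rw [hue, hwe, conv _ _ _ _ h1, conv _ _ _ _ h2]
    · rw [hue, hwe, conv _ _ _ _ h1, conv _ _ _ _ h2, Finset.pair_comm]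
    · exact absurd ((conv _ _ _ _ h1).trans (conv _ _ _ _ h2).symm) hab
  · have hspq : cF p ≠ cF q := by
      intro h
      apply hsab
      rcases hga with h1 | h1 <;> rcases hgb with h2 | h2
      · exact h1.trans h2.symm
      · exact h1.trans (h.trans h2.symm)
      · exact h1.trans (h.symm.trans h2.symm)
      · exact h1.trans h2.symm
    have hunA : E (SU n) b ∪ E (SU n) a = E (SU n) q ∪ E (SU n) p := by
      rw [Finset.union_comm, hun, Finset.union_comm]
    rcases hga with h1 | h1
    · have hap : a = p := E_SU_inj hn (E_eq_of_groups hn hsab hspq h1 hun)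
      have h2 : cF b = cF q := by
        rcases hgb with h2 | h2
        · exact absurd (h1.trans h2.symm) hsab
        · exact h2
      have hbq : b = q :=
        E_SU_inj hn (E_eq_of_groups hn (Ne.symm hsab) (Ne.symm hspq) h2 hunA)
      apply hne
      apply Subtype.ext
      rw [hue, hwe, hap, hbq]
    · have hunB : E (SU n) a ∪ E (SU n) b = E (SU n) q ∪ E (SU n) p := by
        rw [hun, Finset.union_comm]
      have hunC : E (SU n) b ∪ E (SU n) a = E (SU n) p ∪ E (SU n) q := by
        rw [Finset.union_comm, hun]
      have haq : a = q := E_SU_inj hn (E_eq_of_groups hn hsab (Ne.symm hspq) h1 hunB)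
      have h2 : cF b = cF p := by
        rcases hgb with h2 | h2
        · exact h2
        · exact absurd (h1.trans h2.symm) hsab
      have hbp : b = p :=
        E_SU_inj hn (E_eq_of_groups hn (Ne.symm hsab) hspq h2 hunC)
      apply hne
      apply Subtype.ext
      rw [hue, hwe, haq, hbp, Finset.pair_comm]

lemma card_SU {n : ℕ} (hn : 6 ≤ n) : (SU n).card = n - n / 3 := by
  have h1 : (SU n).card = (Finset.univ.filter (fun x : Fin n => cF x ≠ x)).card := by
    unfold SU
    rw [Finset.card_image_of_injOn, Finset.card_attach]
    intro x _ y _ hxy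
    exact Subtype.ext (edge_inj (of_mem x.2) (of_mem y.2) (congrArg Subtype.val hxy))
  have h2 : (Finset.univ.filter (fun x : Fin n => cF x = x)).card +
      (Finset.univ.filter (fun x : Fin n => cF x ≠ x)).card = n := by
    rw [Finset.card_filter_add_card_filter_not, Finset.card_univ, Fintype.card_fin]
  have h3 : (Finset.univ.filter (fun x : Fin n => cF x = x)).card
      = (Finset.range (n / 3)).card := by
    refine Finset.card_bij' (fun (x : Fin n) _ => x.1 / 3)
      (fun k hk => (⟨3 * k, by have := Finset.mem_range.mp hk; omega⟩ : Fin n))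
      ?hi ?hj ?li ?ri
    case hi =>
      intro x hx
      rw [Finset.mem_range]
      have hfix : cN n x.1 = x.1 := congrArg Fin.val (Finset.mem_filter.mp hx).2
      exact ((cN_fix_iff (by omega) x.2).mp hfix).2
    case hj =>
      intro k hk
      have hk3 := Finset.mem_range.mp hk
      apply Finset.mem_filter.mpr
      refine ⟨Finset.mem_univ _, ?_⟩
      apply Fin.ext
      show cN n (3 * k) = 3 * k
      rw [cN_fix_iff (by omega) (by omega)]
      omega
    case li =>
      intro x hx
      have hfix : cN n x.1 = x.1 := congrArg Fin.val (Finset.mem_filter.mp hx).2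
      have hm := ((cN_fix_iff (by omega) x.2).mp hfix).1
      apply Fin.ext
      show 3 * (x.1 / 3) = x.1
      omega
    case ri =>
      intro k hk
      show 3 * k / 3 = k
      omega
  rw [Finset.card_range] at h3
  omega

end JohnsonAux

theorem metricDim_johnsonGraph2 (n : ℕ) (hn : 6 ≤ n) :
    metricDim (johnsonGraph2 n) = 2 * (n - n % 3) / 3 + n % 3 := by
  have hmem : (2 * (n - n % 3) / 3 + n % 3) ∈
      {k : ℕ | ∃ S : Finset (JohnsonAux.V n),
        IsResolvingSet (johnsonGraph2 n) ↑S ∧ S.card = k} := by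
    refine ⟨JohnsonAux.SU n, ?_, ?_⟩
    · rw [JohnsonAux.resolves_iff]
      exact JohnsonAux.resolves_SU hn
    · rw [JohnsonAux.card_SU hn]
      omega
  apply le_antisymm
  · exact Nat.sInf_le hmem
  · apply le_csInf ⟨_, hmem⟩
    rintro k ⟨S, hS, rfl⟩
    exact JohnsonAux.lower_bound hn S ((JohnsonAux.resolves_iff S).mp hS)
end

section
/- For every integer n ≥ 6, the metric dimension of the Kneser graph K(n,2) equals (2/3)(n − i) + i, where i ∈ {0,1,2} is the residue of n modulo 3 (i.e. it equals 2(n − (n mod 3))/3 + (n mod 3)). -/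
set_option linter.unusedSectionVars false
set_option maxHeartbeats 1000000
set_option linter.unusedVariables false

/-- The Kneser graph `K(n,k)`: vertices are the k-element subsets of an
`n`-element set, adjacent when they are disjoint. -/
def kneserGraph (n k : ℕ) (hk : k ≠ 0) : SimpleGraph {s : Finset (Fin n) // s.card = k} where
  Adj a b := Disjoint (a : Finset (Fin n)) (b : Finset (Fin n))
  symm := ⟨fun a b h => h.symm⟩
  loopless := ⟨fun a h => by
    have h0 : (a : Finset (Fin n)) = ∅ := by simpa using disjoint_self.mp h
    exact hk (by simpa [h0] using a.2.symm)⟩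

namespace KMD

abbrev KV (n : ℕ) := {s : Finset (Fin n) // s.card = 2}

abbrev KG (n : ℕ) : SimpleGraph (KV n) := kneserGraph n 2 (by norm_num)

variable {n : ℕ}

def mkP (x y : Fin n) (h : x ≠ y) : KV n := ⟨{x, y}, Finset.card_pair h⟩

lemma kadj (u v : KV n) : (KG n).Adj u v ↔ Disjoint u.1 v.1 := Iff.rfl

lemma exists_disjoint (hn : 6 ≤ n) (u w : KV n) :
    ∃ t : KV n, Disjoint t.1 u.1 ∧ Disjoint t.1 w.1 := by
  have hcard : 2 ≤ ((Finset.univ : Finset (Fin n)) \ (u.1 ∪ w.1)).card := by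
    have h1 : (u.1 ∪ w.1).card ≤ 4 := by
      have h := Finset.card_union_le u.1 w.1
      have h2 := u.2
      have h3 := w.2
      omega
    have h2 : ((Finset.univ : Finset (Fin n)) \ (u.1 ∪ w.1)).card
        = n - (u.1 ∪ w.1).card := by
      rw [Finset.card_sdiff_of_subset (Finset.subset_univ _), Finset.card_univ, Fintype.card_fin]
    omega
  obtain ⟨t, hts, htc⟩ := Finset.exists_subset_card_eq hcard
  refine ⟨⟨t, htc⟩, ?_, ?_⟩ <;>
  · rw [Finset.disjoint_left]
    intro a hat hau
    have := hts hat
    rw [Finset.mem_sdiff, Finset.mem_union] at this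
    tauto

lemma reach (hn : 6 ≤ n) (u v : KV n) : (KG n).Reachable u v := by
  by_cases h : u = v
  · exact h ▸ SimpleGraph.Reachable.refl u
  by_cases hd : Disjoint u.1 v.1
  · exact (SimpleGraph.Adj.reachable (by exact hd))
  obtain ⟨t, ht1, ht2⟩ := exists_disjoint hn u v
  exact SimpleGraph.Reachable.trans
    (SimpleGraph.Adj.reachable (by exact ht1.symm))
    (SimpleGraph.Adj.reachable (by exact ht2))

lemma dist_eq (hn : 6 ≤ n) (u v : KV n) (h : u ≠ v) :
    (KG n).dist u v = if Disjoint u.1 v.1 then 1 else 2 := by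
  split_ifs with hd
  · exact SimpleGraph.dist_eq_one_iff_adj.mpr hd
  · obtain ⟨t, ht1, ht2⟩ := exists_disjoint hn u v
    have hle : (KG n).dist u v ≤ 2 := by
      simpa using SimpleGraph.dist_le
        (SimpleGraph.Walk.cons (show (KG n).Adj u t from ht1.symm)
          (SimpleGraph.Walk.cons (show (KG n).Adj t v from ht2) SimpleGraph.Walk.nil))
    have h0 : 0 < (KG n).dist u v := (reach hn u v).pos_dist_of_ne h
    have h1 : (KG n).dist u v ≠ 1 := fun hc => hd (SimpleGraph.dist_eq_one_iff_adj.mp hc)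
    omega

lemma resolve_of (hn : 6 ≤ n) (S : Finset (KV n))
    (H : ∀ u w : KV n, u ≠ w → u ∉ S → w ∉ S →
      ∃ v ∈ S, ¬(Disjoint v.1 u.1 ↔ Disjoint v.1 w.1)) :
    IsResolvingSet (KG n) ↑S := by
  intro u w hne
  by_cases hu : u ∈ S
  · refine ⟨u, by simpa using hu, ?_⟩
    rw [SimpleGraph.dist_self, dist_eq hn w u (Ne.symm hne)]
    split_ifs <;> omega
  by_cases hw : w ∈ S
  · refine ⟨w, by simpa using hw, ?_⟩
    rw [SimpleGraph.dist_self, dist_eq hn u w hne]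
    split_ifs <;> omega
  obtain ⟨v, hv, hvd⟩ := H u w hne hu hw
  refine ⟨v, by simpa using hv, ?_⟩
  have hvu : u ≠ v := fun h => hu (h ▸ hv)
  have hvw : w ≠ v := fun h => hw (h ▸ hv)
  rw [dist_eq hn u v hvu, dist_eq hn w v hvw]
  rw [disjoint_comm (a := v.1) (b := u.1)] at hvd; rw [disjoint_comm (a := v.1) (b := w.1)] at hvd
  by_cases h1 : Disjoint u.1 v.1 <;> by_cases h2 : Disjoint w.1 v.1 <;>
    simp [h1, h2] at hvd ⊢

lemma no_collision (hn : 6 ≤ n) (S : Finset (KV n))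
    (hres : IsResolvingSet (KG n) ↑S) (u w : KV n) (hne : u ≠ w)
    (hu : u ∉ S) (hw : w ∉ S)
    (h : ∀ v ∈ S, (Disjoint v.1 u.1 ↔ Disjoint v.1 w.1)) : False := by
  obtain ⟨v, hv, hd⟩ := hres u w hne
  have hv' : v ∈ S := by simpa using hv
  have hvu : u ≠ v := fun h' => hu (h' ▸ hv')
  have hvw : w ≠ v := fun h' => hw (h' ▸ hv')
  rw [dist_eq hn u v hvu, dist_eq hn w v hvw] at hd
  have := h v hv'
  rw [disjoint_comm (a := v.1) (b := u.1), disjoint_comm (a := v.1) (b := w.1)] at this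
  by_cases h1 : Disjoint u.1 v.1 <;> by_cases h2 : Disjoint w.1 v.1 <;>
    simp [h1, h2] at this hd

section Abstract

variable (f : Fin n → Fin n)

/-- membership in the "touch set" of the pair {a,b} -/
def Tm (a b x : Fin n) : Prop := f x ≠ x ∧ (x = a ∨ x = b ∨ f x = a ∨ f x = b)

variable {f}

lemma tm_comm {a b x : Fin n} : Tm f a b x ↔ Tm f b a x := by unfold Tm; tauto

variable (hid : ∀ x, f (f x) = f x)

include hid

lemma not_image {a x : Fin n} (ha : f a ≠ a) : f x ≠ a := by
  intro h
  exact ha (by rw [← h, hid])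

lemma charA {a b : Fin n} (na : f a ≠ a) (nb : f b ≠ b) (x : Fin n) :
    Tm f a b x ↔ (x = a ∨ x = b) := by
  constructor
  · rintro ⟨h1, (rfl | rfl | h | h)⟩
    · exact Or.inl rfl
    · exact Or.inr rfl
    · exact absurd h (not_image hid na)
    · exact absurd h (not_image hid nb)
  · rintro (rfl | rfl)
    · exact ⟨na, Or.inl rfl⟩
    · exact ⟨nb, Or.inr (Or.inl rfl)⟩

lemma charB {a b : Fin n} (ca : f a = a) (nb : f b ≠ b) (x : Fin n) :
    Tm f a b x ↔ (x = b ∨ (f x = a ∧ x ≠ a)) := by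
  constructor
  · rintro ⟨h1, (rfl | rfl | h | h)⟩
    · exact absurd ca h1
    · exact Or.inl rfl
    · exact Or.inr ⟨h, fun hx => by subst hx; exact h1 ca⟩
    · exact absurd h (not_image hid nb)
  · rintro (rfl | ⟨h, hx⟩)
    · exact ⟨nb, Or.inr (Or.inl rfl)⟩
    · exact ⟨fun hc => hx (hc.symm.trans h), Or.inr (Or.inr (Or.inl h))⟩

lemma charC {a b : Fin n} (ca : f a = a) (cb : f b = b) (x : Fin n) :
    Tm f a b x ↔ ((f x = a ∨ f x = b) ∧ x ≠ a ∧ x ≠ b) := by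
  constructor
  · rintro ⟨h1, (rfl | rfl | h | h)⟩
    · exact absurd ca h1
    · exact absurd cb h1
    · exact ⟨Or.inl h, fun hx => by subst hx; exact h1 ca, fun hx => by subst hx; exact h1 cb⟩
    · exact ⟨Or.inr h, fun hx => by subst hx; exact h1 ca, fun hx => by subst hx; exact h1 cb⟩
  · rintro ⟨(h | h), hxa, hxb⟩
    · exact ⟨fun hc => hxa (hc.symm.trans h), Or.inr (Or.inr (Or.inl h))⟩
    · exact ⟨fun hc => hxb (hc.symm.trans h), Or.inr (Or.inr (Or.inr h))⟩

variable (hlv : ∀ x, f x = x → ∃ p q : Fin n, p ≠ q ∧ p ≠ x ∧ q ≠ x ∧ f p = x ∧ f q = x)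

include hlv

lemma case11 {a b c d : Fin n} (hab : a ≠ b) (hcd : c ≠ d)
    (na : f a ≠ a) (nb : f b ≠ b) (nc : f c ≠ c) (nd : f d ≠ d)
    (hT : ∀ x, Tm f a b x ↔ Tm f c d x) :
    (a = c ∧ b = d) ∨ (a = d ∧ b = c) := by
  have H : ∀ x, (x = a ∨ x = b) ↔ (x = c ∨ x = d) := by
    intro x
    rw [← charA hid na nb, ← charA hid nc nd]
    exact hT x
  have h1 := (H a).mp (Or.inl rfl)
  have h2 := (H b).mp (Or.inr rfl)
  have h3 := (H c).mpr (Or.inl rfl)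
  rcases h1 with rfl | rfl <;> rcases h2 with rfl | rfl <;> tauto

lemma case12 {a b c d : Fin n} (hab : a ≠ b) (hcd : c ≠ d)
    (na : f a ≠ a) (nb : f b ≠ b) (cc : f c = c) (nd : f d ≠ d) (hnd : f d ≠ c)
    (hT : ∀ x, Tm f a b x ↔ Tm f c d x) : False := by
  obtain ⟨p, q, hpq, hpc, hqc, hfp, hfq⟩ := hlv c cc
  have hp : p = a ∨ p = b := (charA hid na nb p).mp ((hT p).mpr
    ⟨fun h => hpc (h.symm.trans hfp), Or.inr (Or.inr (Or.inl hfp))⟩)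
  have hq : q = a ∨ q = b := (charA hid na nb q).mp ((hT q).mpr
    ⟨fun h => hqc (h.symm.trans hfq), Or.inr (Or.inr (Or.inl hfq))⟩)
  have hd : d = a ∨ d = b := (charA hid na nb d).mp ((hT d).mpr ⟨nd, Or.inr (Or.inl rfl)⟩)
  have hdp : d ≠ p := fun h => hnd (h ▸ hfp)
  have hdq : d ≠ q := fun h => hnd (h ▸ hfq)
  rcases hp with rfl | rfl <;> rcases hq with rfl | rfl <;> rcases hd with rfl | rfl <;> tauto

lemma case13 {a b c d : Fin n} (hab : a ≠ b) (hcd : c ≠ d)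
    (na : f a ≠ a) (nb : f b ≠ b) (cc : f c = c) (cd : f d = d)
    (hT : ∀ x, Tm f a b x ↔ Tm f c d x) : False := by
  obtain ⟨p, q, hpq, hpc, hqc, hfp, hfq⟩ := hlv c cc
  obtain ⟨r, s, hrs, hrd, hsd, hfr, hfs⟩ := hlv d cd
  have hp : p = a ∨ p = b := (charA hid na nb p).mp ((hT p).mpr
    ⟨fun h => hpc (h.symm.trans hfp), Or.inr (Or.inr (Or.inl hfp))⟩)
  have hq : q = a ∨ q = b := (charA hid na nb q).mp ((hT q).mpr
    ⟨fun h => hqc (h.symm.trans hfq), Or.inr (Or.inr (Or.inl hfq))⟩)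
  have hr : r = a ∨ r = b := (charA hid na nb r).mp ((hT r).mpr
    ⟨fun h => hrd (h.symm.trans hfr), Or.inr (Or.inr (Or.inr hfr))⟩)
  have hrp : r = p ∨ r = q := by
    rcases hp with rfl | rfl <;> rcases hq with rfl | rfl <;> rcases hr with rfl | rfl <;> tauto
  rcases hrp with rfl | rfl
  · exact hcd (hfp.symm.trans hfr)
  · exact hcd (hfq.symm.trans hfr)

lemma case22 {a b c d : Fin n} (hab : a ≠ b) (hcd : c ≠ d)
    (ca : f a = a) (nb : f b ≠ b) (hnb : f b ≠ a)
    (cc : f c = c) (nd : f d ≠ d) (hnd : f d ≠ c)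
    (hT : ∀ x, Tm f a b x ↔ Tm f c d x) : a = c ∧ b = d := by
  obtain ⟨p, q, hpq, hpa, hqa, hfp, hfq⟩ := hlv a ca
  have hp : p = d ∨ (f p = c ∧ p ≠ c) := (charB hid cc nd p).mp ((hT p).mp
    ⟨fun h => hpa (h.symm.trans hfp), Or.inr (Or.inr (Or.inl hfp))⟩)
  have hq : q = d ∨ (f q = c ∧ q ≠ c) := (charB hid cc nd q).mp ((hT q).mp
    ⟨fun h => hqa (h.symm.trans hfq), Or.inr (Or.inr (Or.inl hfq))⟩)
  have hac : a = c := by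
    rcases hp with rfl | ⟨h, _⟩
    · rcases hq with rfl | ⟨h, _⟩
      · exact absurd rfl hpq
      · rw [← hfq, h]
    · rw [← hfp, h]
  subst hac
  refine ⟨rfl, ?_⟩
  have hb : b = d ∨ (f b = a ∧ b ≠ a) := (charB hid cc nd b).mp ((hT b).mp
    ⟨nb, Or.inr (Or.inl rfl)⟩)
  rcases hb with rfl | ⟨h, _⟩
  · rfl
  · exact absurd h hnb

lemma case23 {a b c d : Fin n} (hab : a ≠ b) (hcd : c ≠ d)
    (ca : f a = a) (nb : f b ≠ b)
    (cc : f c = c) (cd : f d = d)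
    (hT : ∀ x, Tm f a b x ↔ Tm f c d x) : False := by
  have key : ∀ s : Fin n, f s = s → (∀ p, f p = s → p ≠ s → Tm f c d p) → s = a := by
    intro s cs hmem
    obtain ⟨p, q, hpq, hps, hqs, hfp, hfq⟩ := hlv s cs
    have hp : p = b ∨ (f p = a ∧ p ≠ a) := (charB hid ca nb p).mp ((hT p).mpr (hmem p hfp hps))
    have hq : q = b ∨ (f q = a ∧ q ≠ a) := (charB hid ca nb q).mp ((hT q).mpr (hmem q hfq hqs))
    rcases hp with rfl | ⟨h, _⟩
    · rcases hq with rfl | ⟨h, _⟩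
      · exact absurd rfl hpq
      · rw [← hfq, h]
    · rw [← hfp, h]
  have h1 : c = a := key c cc (fun p hfp hps => ⟨fun h => hps (h.symm.trans hfp),
    Or.inr (Or.inr (Or.inl hfp))⟩)
  have h2 : d = a := key d cd (fun p hfp hps => ⟨fun h => hps (h.symm.trans hfp),
    Or.inr (Or.inr (Or.inr hfp))⟩)
  exact hcd (h1.trans h2.symm)

lemma case33 {a b c d : Fin n} (hab : a ≠ b) (hcd : c ≠ d)
    (ca : f a = a) (cb : f b = b) (cc : f c = c) (cd : f d = d)
    (hT : ∀ x, Tm f a b x ↔ Tm f c d x) :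
    (a = c ∧ b = d) ∨ (a = d ∧ b = c) := by
  have key : ∀ s t : Fin n, s ≠ t → f s = s → f t = t →
      (∀ x, Tm f s t x ↔ Tm f c d x) → s = c ∨ s = d := by
    intro s t hst cs ct hT'
    obtain ⟨p, q, hpq, hps, hqs, hfp, hfq⟩ := hlv s cs
    have hp := (charC hid cc cd p).mp ((hT' p).mp
      ⟨fun h => hps (h.symm.trans hfp), Or.inr (Or.inr (Or.inl hfp))⟩)
    rcases hp with ⟨(h | h), _, _⟩
    · exact Or.inl (by rw [← hfp, h])
    · exact Or.inr (by rw [← hfp, h])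
  have h1 : a = c ∨ a = d := key a b hab ca cb hT
  have h2 : b = c ∨ b = d := key b a (Ne.symm hab) cb ca
    (fun x => (tm_comm).trans (hT x))
  rcases h1 with rfl | rfl <;> rcases h2 with rfl | rfl <;> tauto

omit hid hlv in
/-- the main injectivity result -/
lemma pair_eq (hid : ∀ x, f (f x) = f x)
    (hlv : ∀ x, f x = x → ∃ p q : Fin n, p ≠ q ∧ p ≠ x ∧ q ≠ x ∧ f p = x ∧ f q = x)
    {a b c d : Fin n} (hab : a ≠ b) (hcd : c ≠ d)
    (hba : f b ≠ a) (hab' : f a ≠ b) (hdc : f d ≠ c) (hcd' : f c ≠ d)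
    (hT : ∀ x, Tm f a b x ↔ Tm f c d x) :
    ({a, b} : Finset (Fin n)) = {c, d} := by
  have fin : (a = c ∧ b = d) ∨ (a = d ∧ b = c) → ({a, b} : Finset (Fin n)) = {c, d} := by
    rintro (⟨rfl, rfl⟩ | ⟨rfl, rfl⟩)
    · rfl
    · exact Finset.pair_comm a b
  have hTba : ∀ x, Tm f b a x ↔ Tm f c d x := fun x => tm_comm.trans (hT x)
  have hTdc : ∀ x, Tm f a b x ↔ Tm f d c x := fun x => (hT x).trans tm_comm
  have hTbadc : ∀ x, Tm f b a x ↔ Tm f d c x := fun x => tm_comm.trans (hTdc x)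
  have hTr : ∀ x, Tm f c d x ↔ Tm f a b x := fun x => (hT x).symm
  by_cases na : f a = a <;> by_cases nb : f b = b <;>
    by_cases nc : f c = c <;> by_cases nd : f d = d <;>
  first
    | exact fin (case33 hid hlv hab hcd na nb nc nd hT)
    | exact (case23 hid hlv hcd hab nc nd na nb hTr).elim
    | exact (case23 hid hlv hcd.symm hab nd nc na nb (fun x => (hTdc x).symm)).elim
    | exact (case13 hid hlv hcd hab nc nd na nb hTr).elim
    | exact (case23 hid hlv hab hcd na nb nc nd hT).elim
    | exact fin (Or.inl (case22 hid hlv hab hcd na nb hba nc nd hdc hT))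
    | exact fin (Or.inr (case22 hid hlv hab hcd.symm na nb hba nd nc hcd' hTdc))
    | exact (case12 hid hlv hcd hab nc nd na nb hba hTr).elim
    | exact (case23 hid hlv hab.symm hcd nb na nc nd hTba).elim
    | exact fin (Or.inr ⟨(case22 hid hlv hab.symm hcd nb na hab' nc nd hdc hTba).2,
        (case22 hid hlv hab.symm hcd nb na hab' nc nd hdc hTba).1⟩)
    | exact fin (Or.inl ⟨(case22 hid hlv hab.symm hcd.symm nb na hab' nd nc hcd' hTbadc).2,
        (case22 hid hlv hab.symm hcd.symm nb na hab' nd nc hcd' hTbadc).1⟩)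
    | exact (case12 hid hlv hcd hab.symm nc nd nb na hab' (fun x => (hTba x).symm)).elim
    | exact (case13 hid hlv hab hcd na nb nc nd hT).elim
    | exact (case12 hid hlv hab hcd na nb nc nd hdc hT).elim
    | exact (case12 hid hlv hab hcd.symm na nb nd nc hcd' hTdc).elim
    | exact fin (case11 hid hlv hab hcd na nb nc nd hT)

end Abstract

section Upper

/-- the center function: groups of three, last group absorbs the remainder -/
def ctr (x : Fin n) : Fin n :=
  ⟨3 * min (x.1 / 3) (n / 3 - 1), by
    have h1 := Nat.min_le_right (x.1 / 3) (n / 3 - 1)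
    have h2 := x.2
    omega⟩

/-- the resolving set: all star edges {x, ctr x} -/
def US : Finset (KV n) :=
  Finset.univ.filter (fun e : KV n => ∃ x : Fin n, ctr x ≠ x ∧ e.1 = {x, ctr x})

variable (hn : 6 ≤ n)

include hn

lemma ctr_idem (x : Fin n) : ctr (ctr x) = ctr x := by
  apply Fin.ext
  show 3 * min ((3 * min (x.1 / 3) (n / 3 - 1)) / 3) (n / 3 - 1) = 3 * min (x.1 / 3) (n / 3 - 1)
  have h1 := Nat.min_le_right (x.1 / 3) (n / 3 - 1)
  have h2 := Nat.min_le_left (x.1 / 3) (n / 3 - 1)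
  omega

lemma ctr_leaves (x : Fin n) (hx : ctr x = x) :
    ∃ p q : Fin n, p ≠ q ∧ p ≠ x ∧ q ≠ x ∧ ctr p = x ∧ ctr q = x := by
  have hxv : 3 * min (x.1 / 3) (n / 3 - 1) = x.1 := congrArg Fin.val hx
  have hd : 3 * (x.1 / 3) = x.1 ∧ x.1 / 3 ≤ n / 3 - 1 := by
    have h1 := Nat.min_le_right (x.1 / 3) (n / 3 - 1)
    rcases min_choice (x.1 / 3) (n / 3 - 1) with hm | hm <;>
      (rw [hm] at hxv; constructor <;> omega)
  have hb1 : x.1 + 1 < n := by omega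
  have hb2 : x.1 + 2 < n := by omega
  have he1 : (x.1 + 1) / 3 = x.1 / 3 := by omega
  have he2 : (x.1 + 2) / 3 = x.1 / 3 := by omega
  refine ⟨⟨x.1 + 1, hb1⟩, ⟨x.1 + 2, hb2⟩, ?_, ?_, ?_, ?_, ?_⟩
  · intro h; have h' : x.1 + 1 = x.1 + 2 := congrArg Fin.val h; omega
  · intro h; have h' : x.1 + 1 = x.1 := congrArg Fin.val h; omega
  · intro h; have h' : x.1 + 2 = x.1 := congrArg Fin.val h; omega
  · apply Fin.ext
    show 3 * min ((x.1 + 1) / 3) (n / 3 - 1) = x.1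
    rw [he1, min_eq_left hd.2]
    exact hd.1
  · apply Fin.ext
    show 3 * min ((x.1 + 2) / 3) (n / 3 - 1) = x.1
    rw [he2, min_eq_left hd.2]
    exact hd.1

lemma card_US : (US (n := n)).card = n - n / 3 := by
  classical
  have e0 : KV n := ⟨{⟨0, by omega⟩, ⟨1, by omega⟩},
    Finset.card_pair (by intro h; have h' : (0 : ℕ) = 1 := congrArg Fin.val h; omega)⟩
  have hbij : (Finset.univ.filter (fun x : Fin n => ¬ ctr x = x)).card = (US (n := n)).card := by
    apply Finset.card_nbij (i := fun x : Fin n =>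
      if h : ctr x = x then e0 else ⟨{x, ctr x}, Finset.card_pair (Ne.symm h)⟩)
    · intro x hx
      have hx' : ¬ ctr x = x := (Finset.mem_filter.mp hx).2
      dsimp only
      rw [dif_neg hx']
      exact Finset.mem_filter.mpr ⟨Finset.mem_univ _, ⟨x, hx', rfl⟩⟩
    · intro x hx y hy hxy
      simp only [Finset.mem_coe, Finset.mem_filter] at hx hy
      dsimp only at hxy
      rw [dif_neg hx.2, dif_neg hy.2] at hxy
      have hval : ({x, ctr x} : Finset (Fin n)) = {y, ctr y} := congrArg Subtype.val hxy
      have hxmem : x ∈ ({y, ctr y} : Finset (Fin n)) := by rw [← hval]; simp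
      rw [Finset.mem_insert, Finset.mem_singleton] at hxmem
      rcases hxmem with rfl | hxc
      · rfl
      · exfalso; apply hx.2; rw [hxc, ctr_idem hn, ← hxc]
    · intro e he
      have he' := (Finset.mem_filter.mp (Finset.mem_coe.mp he)).2
      obtain ⟨x, hx, hex⟩ := he'
      refine ⟨x, ?_, ?_⟩
      · simp only [Finset.mem_coe, Finset.mem_filter]
        exact ⟨Finset.mem_univ _, hx⟩
      · show (if h : ctr x = x then e0 else ⟨{x, ctr x}, Finset.card_pair (Ne.symm h)⟩) = e
        rw [dif_neg hx]
        exact Subtype.ext hex.symm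
  have hcent : (Finset.univ.filter (fun x : Fin n => ctr x = x)).card = n / 3 := by
    rw [show n / 3 = (Finset.range (n / 3)).card from (Finset.card_range _).symm]
    apply Finset.card_nbij (i := fun x : Fin n => x.1 / 3)
    · intro x hx
      have hx' : ctr x = x := (Finset.mem_filter.mp hx).2
      have hxv : 3 * min (x.1 / 3) (n / 3 - 1) = x.1 := congrArg Fin.val hx'
      have h1 := Nat.min_le_right (x.1 / 3) (n / 3 - 1)
      have h2 := Nat.min_le_left (x.1 / 3) (n / 3 - 1)
      dsimp only
      rw [Finset.mem_coe, Finset.mem_range]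
      omega
    · intro x hx y hy hxy
      simp only [Finset.mem_coe, Finset.mem_filter] at hx hy
      have hxv : 3 * min (x.1 / 3) (n / 3 - 1) = x.1 := congrArg Fin.val hx.2
      have hyv : 3 * min (y.1 / 3) (n / 3 - 1) = y.1 := congrArg Fin.val hy.2
      have h1 := Nat.min_le_left (x.1 / 3) (n / 3 - 1)
      have h2 := Nat.min_le_left (y.1 / 3) (n / 3 - 1)
      have hxy' : x.1 / 3 = y.1 / 3 := hxy
      exact Fin.ext (by omega)
    · intro j hj
      simp only [Finset.coe_range, Set.mem_Iio] at hj
      refine ⟨⟨3 * j, by omega⟩, ?_, ?_⟩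
      · simp only [Finset.coe_filter, Set.mem_setOf_eq, Finset.mem_univ, true_and]
        apply Fin.ext
        show 3 * min ((3 * j) / 3) (n / 3 - 1) = 3 * j
        omega
      · show (3 * j) / 3 = j
        omega
  have hsplit : (Finset.univ.filter (fun x : Fin n => ctr x = x)).card
      + (Finset.univ.filter (fun x : Fin n => ¬ ctr x = x)).card = n := by
    have := Finset.card_filter_add_card_filter_not
      (s := (Finset.univ : Finset (Fin n))) (p := fun x : Fin n => ctr x = x)
    simpa using this
  omega

lemma US_resolving : IsResolvingSet (KG n) ↑(US (n := n)) := by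
  apply resolve_of hn
  intro u w hne hu hw
  -- extract the two elements of each pair
  obtain ⟨a, b, hab, huab⟩ := Finset.card_eq_two.mp u.2
  obtain ⟨c, d, hcd, hwcd⟩ := Finset.card_eq_two.mp w.2
  -- non-edge conditions
  have nonedge : ∀ (v : KV n) (x y : Fin n), x ≠ y → v.1 = {x, y} → v ∉ US (n := n) →
      ctr x ≠ y ∧ ctr y ≠ x := by
    intro v x y hxy hv hvn
    constructor
    · intro hcx
      exact hvn (Finset.mem_filter.mpr ⟨Finset.mem_univ _,
        ⟨x, by rw [hcx]; exact Ne.symm hxy, by rw [hv, hcx]⟩⟩)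
    · intro hcy
      exact hvn (Finset.mem_filter.mpr ⟨Finset.mem_univ _,
        ⟨y, by rw [hcy]; exact hxy, by rw [hv, hcy, Finset.pair_comm]⟩⟩)
  obtain ⟨hab1, hab2⟩ := nonedge u a b hab huab hu
  obtain ⟨hcd1, hcd2⟩ := nonedge w c d hcd hwcd hw
  by_contra hcon
  push_neg at hcon
  -- derive the touch-set equality
  have hT : ∀ x, Tm ctr a b x ↔ Tm ctr c d x := by
    intro x
    by_cases hx : ctr x = x
    · constructor <;> (rintro ⟨h1, _⟩; exact absurd hx h1)
    · have hcard : ({x, ctr x} : Finset (Fin n)).card = 2 := Finset.card_pair (Ne.symm hx)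
      have hv : (⟨{x, ctr x}, hcard⟩ : KV n) ∈ US (n := n) :=
        Finset.mem_filter.mpr ⟨Finset.mem_univ _, ⟨x, hx, rfl⟩⟩
      have hiff := hcon ⟨{x, ctr x}, hcard⟩ hv
      have hdu : Disjoint ({x, ctr x} : Finset (Fin n)) u.1 ↔ ¬(x ∈ u.1 ∨ ctr x ∈ u.1) := by
        rw [Finset.disjoint_left]
        constructor
        · intro h hc
          rcases hc with hc | hc
          · exact h (by simp) hc
          · exact h (by simp) hc
        · intro h y hy hyu
          rw [Finset.mem_insert, Finset.mem_singleton] at hy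
          rcases hy with rfl | rfl
          · exact h (Or.inl hyu)
          · exact h (Or.inr hyu)
      have hdw : Disjoint ({x, ctr x} : Finset (Fin n)) w.1 ↔ ¬(x ∈ w.1 ∨ ctr x ∈ w.1) := by
        rw [Finset.disjoint_left]
        constructor
        · intro h hc
          rcases hc with hc | hc
          · exact h (by simp) hc
          · exact h (by simp) hc
        · intro h y hy hyu
          rw [Finset.mem_insert, Finset.mem_singleton] at hy
          rcases hy with rfl | rfl
          · exact h (Or.inl hyu)
          · exact h (Or.inr hyu)
      rw [hdu, hdw] at hiff
      rw [huab] at hiff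
      rw [hwcd] at hiff
      simp only [Finset.mem_insert, Finset.mem_singleton] at hiff
      have hPQ := not_iff_not.mp hiff
      clear hcon hiff hv hdu hdw nonedge hu hw
      unfold Tm
      constructor
      · rintro ⟨_, h⟩
        exact ⟨hx, by tauto⟩
      · rintro ⟨_, h⟩
        exact ⟨hx, by tauto⟩
  have := pair_eq (ctr_idem hn) (ctr_leaves hn) hab hcd hab2 hab1 hcd2 hcd1 hT
  exact hne (Subtype.ext (by rw [huab, hwcd, this]))

end Upper

section Lower

variable {S : Finset (KV n)}

/-- degree of a ground element in the edge set S -/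
def dg (S : Finset (KV n)) (x : Fin n) : ℕ := (S.filter (fun e => x ∈ e.1)).card

lemma dg_pos {x : Fin n} {e : KV n} (he : e ∈ S) (hx : x ∈ e.1) : 1 ≤ dg S x :=
  Finset.card_pos.mpr ⟨e, Finset.mem_filter.mpr ⟨he, hx⟩⟩

lemma uniq_edge {x : Fin n} (hx : dg S x = 1) {v v' : KV n}
    (hv : v ∈ S) (hxv : x ∈ v.1) (hv' : v' ∈ S) (hxv' : x ∈ v'.1) : v = v' :=
  Finset.card_le_one.mp (le_of_eq hx) v (Finset.mem_filter.mpr ⟨hv, hxv⟩)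
    v' (Finset.mem_filter.mpr ⟨hv', hxv'⟩)

lemma two_le_dg {x : Fin n} {e e' : KV n} (he : e ∈ S) (hxe : x ∈ e.1)
    (he' : e' ∈ S) (hxe' : x ∈ e'.1) (hne : e ≠ e') : 2 ≤ dg S x :=
  Finset.one_lt_card.mpr ⟨e, Finset.mem_filter.mpr ⟨he, hxe⟩,
    e', Finset.mem_filter.mpr ⟨he', hxe'⟩, hne⟩

lemma fresh (hn : 6 ≤ n) (s : Finset (Fin n)) (hs : s.card ≤ 5) : ∃ a : Fin n, a ∉ s := by
  by_contra h
  push_neg at h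
  have hsub : (Finset.univ : Finset (Fin n)) ⊆ s := fun a _ => h a
  have hc := Finset.card_le_card hsub
  rw [Finset.card_univ, Fintype.card_fin] at hc
  omega

lemma disj_pair (v : Finset (Fin n)) (x y : Fin n) :
    Disjoint v {x, y} ↔ (x ∉ v ∧ y ∉ v) := by
  rw [Finset.disjoint_right]
  constructor
  · intro h
    exact ⟨fun hx => h (by simp) hx, fun hy => h (by simp) hy⟩
  · rintro ⟨h1, h2⟩ a ha hav
    rw [Finset.mem_insert, Finset.mem_singleton] at ha
    rcases ha with rfl | rfl
    · exact h1 hav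
    · exact h2 hav

lemma pair_card {e : KV n} {x y : Fin n} (h : e.1 = {x, y}) : x ≠ y := by
  intro hxy
  subst hxy
  have := e.2
  rw [h] at this
  simp at this

lemma mem_pair_left {e : KV n} {x y : Fin n} (h : e.1 = {x, y}) : x ∈ e.1 := by
  rw [h]; simp

lemma mem_pair_right {e : KV n} {x y : Fin n} (h : e.1 = {x, y}) : y ∈ e.1 := by
  rw [h]; simp

variable (hn : 6 ≤ n) (hres : IsResolvingSet (KG n) ↑S)

include hn hres

/-- no edge has both endpoints of degree one -/
lemma noP2 {e : KV n} {x y : Fin n} (he : e ∈ S) (hexy : e.1 = {x, y})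
    (hx : dg S x = 1) (hy : dg S y = 1) : False := by
  have hxy : x ≠ y := pair_card hexy
  obtain ⟨a, ha⟩ := fresh hn e.1 (by rw [e.2]; omega)
  have hax : x ≠ a := fun h => ha (h ▸ mem_pair_left hexy)
  have hay : y ≠ a := fun h => ha (h ▸ mem_pair_right hexy)
  apply no_collision hn S hres (mkP x a hax) (mkP y a hay)
  · intro h
    have hval : ({x, a} : Finset (Fin n)) = {y, a} := congrArg Subtype.val h
    have : x ∈ ({y, a} : Finset (Fin n)) := by rw [← hval]; simp
    rw [Finset.mem_insert, Finset.mem_singleton] at this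
    rcases this with rfl | rfl
    · exact hxy rfl
    · exact hax rfl
  · intro hus
    have hne : e ≠ mkP x a hax := by
      intro h
      have : y ∈ ({x, a} : Finset (Fin n)) := by
        rw [show ({x,a} : Finset (Fin n)) = (mkP x a hax).1 from rfl, ← h, hexy]; simp
      rw [Finset.mem_insert, Finset.mem_singleton] at this
      rcases this with rfl | rfl
      · exact hxy rfl
      · exact hay rfl
    have := two_le_dg he (mem_pair_left hexy) hus (by simp [mkP]) hne
    omega
  · intro hws
    have hne : e ≠ mkP y a hay := by
      intro h
      have : x ∈ ({y, a} : Finset (Fin n)) := by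
        rw [show ({y,a} : Finset (Fin n)) = (mkP y a hay).1 from rfl, ← h, hexy]; simp
      rw [Finset.mem_insert, Finset.mem_singleton] at this
      rcases this with rfl | rfl
      · exact hxy rfl
      · exact hax rfl
    have := two_le_dg he (mem_pair_right hexy) hws (by simp [mkP]) hne
    omega
  · intro v hv
    have hxv : x ∈ v.1 ↔ y ∈ v.1 := by
      constructor
      · intro h
        have := uniq_edge hx hv h he (mem_pair_left hexy)
        rw [this]; exact mem_pair_right hexy
      · intro h
        have := uniq_edge hy hv h he (mem_pair_right hexy)
        rw [this]; exact mem_pair_left hexy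
    simp only [mkP]
    rw [disj_pair, disj_pair]
    tauto

/-- at most one isolated element -/
lemma noIso {z z' : Fin n} (hz : dg S z = 0) (hz' : dg S z' = 0) : z = z' := by
  by_contra hne'
  obtain ⟨a, ha⟩ := fresh hn {z, z'} (by have := Finset.card_insert_le z {z'}; simp at this ⊢; omega)
  have haz : z ≠ a := fun h => ha (by rw [h]; simp)
  have haz' : z' ≠ a := fun h => ha (by rw [h]; simp)
  have hzero : ∀ w : Fin n, dg S w = 0 → ∀ v ∈ S, w ∉ v.1 := by
    intro w hw v hv hmem
    have := dg_pos hv hmem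
    omega
  apply no_collision hn S hres (mkP z a haz) (mkP z' a haz')
  · intro h
    have hval : ({z, a} : Finset (Fin n)) = {z', a} := congrArg Subtype.val h
    have : z' ∈ ({z, a} : Finset (Fin n)) := by rw [hval]; simp
    rw [Finset.mem_insert, Finset.mem_singleton] at this
    rcases this with rfl | rfl
    · exact hne' rfl
    · exact haz' rfl
  · intro hus
    have := dg_pos hus (show z ∈ (mkP z a haz).1 by simp [mkP])
    omega
  · intro hws
    have := dg_pos hws (show z' ∈ (mkP z' a haz').1 by simp [mkP])
    omega
  · intro v hv
    simp only [mkP]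
    rw [disj_pair, disj_pair]
    have h1 := hzero z hz v hv
    have h2 := hzero z' hz' v hv
    tauto

/-- an isolated element excludes a path P3 -/
lemma noP3 {z y x x' : Fin n} {e e' : KV n} (hz : dg S z = 0) (hy : dg S y = 2)
    (he : e ∈ S) (hex : e.1 = {x, y}) (hx : dg S x = 1)
    (he' : e' ∈ S) (hex' : e'.1 = {x', y}) (hx' : dg S x' = 1)
    (hxx' : x ≠ x') : False := by
  have hxy : x ≠ y := pair_card hex
  have hx'y : x' ≠ y := pair_card hex'
  have hyz : y ≠ z := fun h => by rw [h] at hy; omega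
  have hee' : e ≠ e' := by
    intro h
    have : x ∈ ({x', y} : Finset (Fin n)) := by rw [← hex', ← h]; exact mem_pair_left hex
    rw [Finset.mem_insert, Finset.mem_singleton] at this
    rcases this with rfl | rfl
    · exact hxx' rfl
    · exact hxy rfl
  have hzero : ∀ v ∈ S, z ∉ v.1 := by
    intro v hv hmem
    have := dg_pos hv hmem
    omega
  have hfilt : S.filter (fun v => y ∈ v.1) = {e, e'} := by
    apply (Finset.eq_of_subset_of_card_le ?_ ?_).symm
    · intro v hv
      rw [Finset.mem_insert, Finset.mem_singleton] at hv
      rcases hv with rfl | rfl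
      · exact Finset.mem_filter.mpr ⟨he, mem_pair_right hex⟩
      · exact Finset.mem_filter.mpr ⟨he', mem_pair_right hex'⟩
    · rw [Finset.card_pair hee']
      exact le_of_eq hy
  apply no_collision hn S hres (mkP x x' hxx') (mkP y z hyz)
  · intro h
    have hval : ({x, x'} : Finset (Fin n)) = {y, z} := congrArg Subtype.val h
    have : y ∈ ({x, x'} : Finset (Fin n)) := by rw [hval]; simp
    rw [Finset.mem_insert, Finset.mem_singleton] at this
    rcases this with rfl | rfl
    · exact hxy rfl
    · exact hx'y rfl
  · intro hus
    have hne : e ≠ mkP x x' hxx' := by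
      intro h
      have : y ∈ ({x, x'} : Finset (Fin n)) := by
        rw [show ({x,x'} : Finset (Fin n)) = (mkP x x' hxx').1 from rfl, ← h, hex]; simp
      rw [Finset.mem_insert, Finset.mem_singleton] at this
      rcases this with rfl | rfl
      · exact hxy rfl
      · exact hx'y rfl
    have := two_le_dg he (mem_pair_left hex) hus (by simp [mkP]) hne
    omega
  · intro hws
    have := dg_pos hws (show z ∈ (mkP y z hyz).1 by simp [mkP])
    omega
  · intro v hv
    have hmain : (x ∈ v.1 ∨ x' ∈ v.1) ↔ y ∈ v.1 := by
      constructor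
      · rintro (h | h)
        · rw [uniq_edge hx hv h he (mem_pair_left hex)]; exact mem_pair_right hex
        · rw [uniq_edge hx' hv h he' (mem_pair_left hex')]; exact mem_pair_right hex'
      · intro h
        have : v ∈ ({e, e'} : Finset (KV n)) := by
          rw [← hfilt]; exact Finset.mem_filter.mpr ⟨hv, h⟩
        rw [Finset.mem_insert, Finset.mem_singleton] at this
        rcases this with rfl | rfl
        · exact Or.inl (mem_pair_left hex)
        · exact Or.inr (mem_pair_left hex')
    have hzv := hzero v hv
    simp only [mkP]
    rw [disj_pair, disj_pair]
    tauto

omit hn hres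

lemma sum_dg : ∑ x : Fin n, dg S x = 2 * S.card := by
  unfold dg
  have h1 : ∀ x : Fin n, (S.filter (fun e => x ∈ e.1)).card
      = ∑ e ∈ S, if x ∈ e.1 then 1 else 0 := by
    intro x; rw [Finset.card_filter]
  calc ∑ x : Fin n, (S.filter (fun e => x ∈ e.1)).card
      = ∑ x : Fin n, ∑ e ∈ S, if x ∈ e.1 then 1 else 0 := Finset.sum_congr rfl (fun x _ => h1 x)
    _ = ∑ e ∈ S, ∑ x : Fin n, if x ∈ e.1 then 1 else 0 := Finset.sum_comm
    _ = ∑ e ∈ S, (Finset.univ.filter (fun x : Fin n => x ∈ e.1)).card :=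
        Finset.sum_congr rfl (fun e _ => (Finset.card_filter _ _).symm)
    _ = ∑ e ∈ S, (e.1).card := by
        apply Finset.sum_congr rfl
        intro e _
        congr 1
        ext z
        simp
    _ = ∑ _e ∈ S, 2 := Finset.sum_congr rfl (fun e _ => e.2)
    _ = 2 * S.card := by rw [Finset.sum_const, smul_eq_mul, mul_comm]

/-- the other endpoint of an edge -/
def partner (e : KV n) (x : Fin n) : Fin n :=
  (e.1.erase x).min' (by
    rw [← Finset.card_pos]
    by_cases hx : x ∈ e.1
    · rw [Finset.card_erase_of_mem hx, e.2]
      omega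
    · rw [Finset.erase_eq_of_notMem hx, e.2]
      omega)

lemma partner_spec {e : KV n} {x : Fin n} (hx : x ∈ e.1) :
    partner e x ∈ e.1 ∧ partner e x ≠ x ∧ e.1 = {x, partner e x} := by
  have hmem : partner e x ∈ e.1.erase x := Finset.min'_mem _ _
  rw [Finset.mem_erase] at hmem
  refine ⟨hmem.2, hmem.1, ?_⟩
  apply (Finset.eq_of_subset_of_card_le ?_ ?_).symm
  · intro a ha
    rw [Finset.mem_insert, Finset.mem_singleton] at ha
    rcases ha with rfl | rfl
    · exact hx
    · exact hmem.2
  · rw [e.2, Finset.card_pair (Ne.symm hmem.1)]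

lemma partner_eq {e : KV n} {x y : Fin n} (hexy : e.1 = {x, y}) (hxy : x ≠ y) :
    partner e y = x := by
  obtain ⟨hm, hne, _⟩ := partner_spec (mem_pair_right hexy)
  rw [hexy, Finset.mem_insert, Finset.mem_singleton] at hm
  rcases hm with h | h
  · exact h
  · exact absurd h hne

/-- the unique edge at a degree-one element (with default) -/
noncomputable def edgeOf (e0 : KV n) (S : Finset (KV n)) (x : Fin n) : KV n :=
  if h : dg S x = 1 then
    (Finset.card_eq_one.mp (h : (S.filter (fun e => x ∈ e.1)).card = 1)).choose
  else e0

lemma edgeOf_spec (e0 : KV n) {x : Fin n} (h : dg S x = 1) :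
    edgeOf e0 S x ∈ S ∧ x ∈ (edgeOf e0 S x).1 := by
  unfold edgeOf
  rw [dif_pos h]
  have hspec := (Finset.card_eq_one.mp (h : (S.filter (fun e => x ∈ e.1)).card = 1)).choose_spec
  have : (Finset.card_eq_one.mp (h : (S.filter (fun e => x ∈ e.1)).card = 1)).choose
      ∈ S.filter (fun e => x ∈ e.1) := by
    have hc := Finset.mem_singleton_self
      (Finset.card_eq_one.mp (h : (S.filter (fun e => x ∈ e.1)).card = 1)).choose
    rw [← hspec] at hc
    exact hc
  exact ⟨(Finset.mem_filter.mp this).1, (Finset.mem_filter.mp this).2⟩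

lemma edgeOf_uniq (e0 : KV n) {x : Fin n} (h : dg S x = 1) {v : KV n}
    (hv : v ∈ S) (hxv : x ∈ v.1) : v = edgeOf e0 S x :=
  uniq_edge h hv hxv (edgeOf_spec e0 h).1 (edgeOf_spec e0 h).2

/-- the neighbor of a degree-one element -/
noncomputable def pfn (e0 : KV n) (S : Finset (KV n)) (x : Fin n) : Fin n :=
  partner (edgeOf e0 S x) x

lemma pfn_spec (e0 : KV n) {x : Fin n} (h : dg S x = 1) :
    pfn e0 S x ≠ x ∧ (edgeOf e0 S x).1 = {x, pfn e0 S x} := by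
  obtain ⟨_, h2, h3⟩ := partner_spec (edgeOf_spec (S := S) e0 h).2
  exact ⟨h2, h3⟩

lemma lower_main (hn : 6 ≤ n) (hres : IsResolvingSet (KG n) ↑S) :
    2 * n ≤ 3 * S.card := by
  classical
  have e0 : KV n := ⟨{⟨0, by omega⟩, ⟨1, by omega⟩},
    Finset.card_pair (by intro h; have h' : (0 : ℕ) = 1 := congrArg Fin.val h; omega)⟩
  set L := Finset.univ.filter (fun x : Fin n => dg S x = 1) with hLdef
  set P := Finset.univ.filter (fun x : Fin n => 2 ≤ dg S x) with hPdef
  set Z := Finset.univ.filter (fun x : Fin n => dg S x = 0) with hZdef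
  -- each leaf's neighbor has degree at least two
  have hLP : ∀ x ∈ L, pfn e0 S x ∈ P := by
    intro x hx
    have hx1 : dg S x = 1 := (Finset.mem_filter.mp hx).2
    obtain ⟨hpne, hpe⟩ := pfn_spec e0 hx1
    obtain ⟨heS, _⟩ := edgeOf_spec (S := S) e0 hx1
    have h1 : 1 ≤ dg S (pfn e0 S x) := dg_pos heS (mem_pair_right hpe)
    have h2 : dg S (pfn e0 S x) ≠ 1 := fun h1' => noP2 hn hres heS hpe hx1 h1'
    exact Finset.mem_filter.mpr ⟨Finset.mem_univ _, by omega⟩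
  have hLsum : L.card = ∑ y ∈ P, (L.filter (fun x => pfn e0 S x = y)).card :=
    Finset.card_eq_sum_card_fiberwise hLP
  -- interior/leaf edge count split at y
  have hsplit_dg : ∀ y : Fin n,
      ((S.filter (fun e => y ∈ e.1)).filter (fun e => 2 ≤ dg S (partner e y))).card
      + ((S.filter (fun e => y ∈ e.1)).filter (fun e => ¬ 2 ≤ dg S (partner e y))).card
      = dg S y := fun y => Finset.card_filter_add_card_filter_not _
  -- leaf edges at y are in bijection with the fiber of leaves
  have hkc : ∀ y ∈ P,
      ((S.filter (fun e => y ∈ e.1)).filter (fun e => ¬ 2 ≤ dg S (partner e y))).card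
      = (L.filter (fun x => pfn e0 S x = y)).card := by
    intro y hy
    have hy2 : 2 ≤ dg S y := (Finset.mem_filter.mp hy).2
    symm
    apply Finset.card_bij (fun x _ => edgeOf e0 S x)
    · intro x hx
      obtain ⟨hxL, hpfx⟩ := Finset.mem_filter.mp hx
      have hx1 : dg S x = 1 := (Finset.mem_filter.mp hxL).2
      obtain ⟨hpne, hpe⟩ := pfn_spec e0 hx1
      rw [hpfx] at hpe
      have hxy : x ≠ y := by intro h; rw [h] at hx1; omega
      obtain ⟨heS, hxe⟩ := edgeOf_spec (S := S) e0 hx1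
      have hpart : partner (edgeOf e0 S x) y = x := partner_eq hpe hxy
      refine Finset.mem_filter.mpr ⟨Finset.mem_filter.mpr ⟨heS, mem_pair_right hpe⟩, ?_⟩
      rw [hpart]
      omega
    · intro x hx x' hx' heq
      obtain ⟨hxL, hpfx⟩ := Finset.mem_filter.mp hx
      obtain ⟨hxL', hpfx'⟩ := Finset.mem_filter.mp hx'
      have hx1 : dg S x = 1 := (Finset.mem_filter.mp hxL).2
      have hx1' : dg S x' = 1 := (Finset.mem_filter.mp hxL').2
      obtain ⟨_, hpe⟩ := pfn_spec e0 hx1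
      obtain ⟨_, hpe'⟩ := pfn_spec e0 hx1'
      rw [hpfx] at hpe
      rw [hpfx'] at hpe'
      have : x' ∈ ({x, y} : Finset (Fin n)) := by
        rw [← hpe, heq]
        exact mem_pair_left hpe'
      rw [Finset.mem_insert, Finset.mem_singleton] at this
      rcases this with h | h
      · exact h.symm
      · rw [h] at hx1'; omega
    · intro e he
      obtain ⟨he1, he2⟩ := Finset.mem_filter.mp he
      obtain ⟨heS, hye⟩ := Finset.mem_filter.mp he1
      obtain ⟨hpm, hpne, hpe⟩ := partner_spec hye
      have hd1 : dg S (partner e y) = 1 := by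
        have := dg_pos heS hpm
        omega
      refine ⟨partner e y, ?_, ?_⟩
      · refine Finset.mem_filter.mpr ⟨Finset.mem_filter.mpr ⟨Finset.mem_univ _, hd1⟩, ?_⟩
        have heq : e = edgeOf e0 S (partner e y) := edgeOf_uniq e0 hd1 heS hpm
        show partner (edgeOf e0 S (partner e y)) (partner e y) = y
        rw [← heq]
        exact partner_eq hpe (Ne.symm hpne)
      · exact (edgeOf_uniq e0 hd1 heS hpm).symm
  -- total interior edge double count
  have hint : ∑ y ∈ P,
      ((S.filter (fun e => y ∈ e.1)).filter (fun e => 2 ≤ dg S (partner e y))).card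
      = 2 * (S.filter (fun e => ∀ z ∈ e.1, 2 ≤ dg S z)).card := by
    have step1 : ∀ y ∈ P,
        ((S.filter (fun e => y ∈ e.1)).filter (fun e => 2 ≤ dg S (partner e y))).card
        = ((S.filter (fun e => ∀ z ∈ e.1, 2 ≤ dg S z)).filter (fun e => y ∈ e.1)).card := by
      intro y hy
      have hy2 : 2 ≤ dg S y := (Finset.mem_filter.mp hy).2
      congr 1
      ext e
      simp only [Finset.mem_filter]
      constructor
      · rintro ⟨⟨heS, hye⟩, hp⟩
        refine ⟨⟨heS, ?_⟩, hye⟩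
        intro z hz
        rw [(partner_spec hye).2.2, Finset.mem_insert, Finset.mem_singleton] at hz
        rcases hz with rfl | rfl
        · exact hy2
        · exact hp
      · rintro ⟨⟨heS, hall⟩, hye⟩
        exact ⟨⟨heS, hye⟩, hall _ (partner_spec hye).1⟩
    rw [Finset.sum_congr rfl step1]
    have step2 : ∑ y ∈ P,
        ((S.filter (fun e => ∀ z ∈ e.1, 2 ≤ dg S z)).filter (fun e => y ∈ e.1)).card
        = ∑ e ∈ S.filter (fun e => ∀ z ∈ e.1, 2 ≤ dg S z), (P.filter (fun z => z ∈ e.1)).card := by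
      have h1 : ∀ y ∈ P, ((S.filter (fun e => ∀ z ∈ e.1, 2 ≤ dg S z)).filter
          (fun e => y ∈ e.1)).card
          = ∑ e ∈ S.filter (fun e => ∀ z ∈ e.1, 2 ≤ dg S z), if y ∈ e.1 then 1 else 0 :=
        fun y _ => Finset.card_filter _ _
      rw [Finset.sum_congr rfl h1, Finset.sum_comm]
      apply Finset.sum_congr rfl
      intro e _
      exact (Finset.card_filter _ _).symm
    rw [step2]
    have step3 : ∀ e ∈ S.filter (fun e => ∀ z ∈ e.1, 2 ≤ dg S z),
        (P.filter (fun z => z ∈ e.1)).card = 2 := by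
      intro e he
      obtain ⟨heS, hall⟩ := Finset.mem_filter.mp he
      have : P.filter (fun z => z ∈ e.1) = e.1 := by
        ext z
        simp only [Finset.mem_filter, hPdef, Finset.mem_univ, true_and]
        exact ⟨fun h => h.2, fun h => ⟨hall z h, h⟩⟩
      rw [this, e.2]
    rw [Finset.sum_congr rfl step3, Finset.sum_const, smul_eq_mul, mul_comm]
  -- structural sums
  have hLDP : L.card
      + ∑ y ∈ P, ((S.filter (fun e => y ∈ e.1)).filter (fun e => 2 ≤ dg S (partner e y))).card
      = ∑ y ∈ P, dg S y := by
    rw [hLsum, ← Finset.sum_congr rfl hkc, ← Finset.sum_add_distrib]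
    apply Finset.sum_congr rfl
    intro y _
    rw [add_comm]
    exact hsplit_dg y
  -- partition of the ground set
  have hA1 : (Finset.univ.filter (fun x : Fin n => ¬ dg S x = 0)).filter
      (fun x => dg S x = 1) = L := by
    ext z
    simp only [Finset.mem_filter, Finset.mem_univ, true_and, hLdef]
    omega
  have hA2 : (Finset.univ.filter (fun x : Fin n => ¬ dg S x = 0)).filter
      (fun x => ¬ dg S x = 1) = P := by
    ext z
    simp only [Finset.mem_filter, Finset.mem_univ, true_and, hPdef]
    omega
  have hcards : Z.card + (L.card + P.card) = n := by
    have h1 := Finset.card_filter_add_card_filter_not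
      (s := (Finset.univ : Finset (Fin n))) (p := fun x => dg S x = 0)
    have h2 := Finset.card_filter_add_card_filter_not
      (s := Finset.univ.filter (fun x : Fin n => ¬ dg S x = 0)) (p := fun x => dg S x = 1)
    rw [hA1, hA2] at h2
    rw [← hZdef] at h1
    rw [← h2] at h1
    rw [h1, Finset.card_univ, Fintype.card_fin]
  have hsums : (∑ x ∈ Z, dg S x) + ((∑ x ∈ L, dg S x) + ∑ x ∈ P, dg S x) = 2 * S.card := by
    have h1 := Finset.sum_filter_add_sum_filter_not
      (Finset.univ : Finset (Fin n)) (fun x => dg S x = 0) (dg S)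
    have h2 := Finset.sum_filter_add_sum_filter_not
      (Finset.univ.filter (fun x : Fin n => ¬ dg S x = 0)) (fun x => dg S x = 1) (dg S)
    rw [hA1, hA2] at h2
    rw [← hZdef] at h1
    rw [← h2] at h1
    rw [h1]
    exact sum_dg
  have hZ0 : ∑ x ∈ Z, dg S x = 0 := by
    apply Finset.sum_eq_zero
    intro x hx
    exact (Finset.mem_filter.mp hx).2
  have hL1 : ∑ x ∈ L, dg S x = L.card := by
    rw [Finset.sum_congr rfl (fun x hx => (Finset.mem_filter.mp hx).2), Finset.sum_const,
      smul_eq_mul, mul_one]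
  have hDP2 : 2 * P.card ≤ ∑ y ∈ P, dg S y := by
    rw [show 2 * P.card = ∑ _y ∈ P, 2 by rw [Finset.sum_const, smul_eq_mul, mul_comm]]
    exact Finset.sum_le_sum (fun y hy => (Finset.mem_filter.mp hy).2)
  have hZle : Z.card ≤ 1 :=
    Finset.card_le_one.mpr (fun a ha b hb =>
      noIso hn hres (Finset.mem_filter.mp ha).2 (Finset.mem_filter.mp hb).2)
  -- case distinction on the isolated vertex
  rcases Nat.lt_or_ge Z.card 1 with hZc | hZc
  · -- no isolated vertex
    have hZc0 : Z.card = 0 := by omega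
    rw [Finset.card_eq_zero] at hZc0
    rw [hZc0] at hsums hcards
    simp only [Finset.sum_empty, Finset.card_empty, zero_add] at hsums hcards
    omega
  · -- exactly one isolated vertex z
    have hZc1 : Z.card = 1 := by omega
    obtain ⟨z, hZz⟩ := Finset.card_eq_one.mp hZc1
    have hz : dg S z = 0 := by
      have : z ∈ Z := by rw [hZz]; simp
      exact (Finset.mem_filter.mp this).2
    -- key endgame inequality
    have hend : 2 * P.card + 2 ≤ (∑ y ∈ P, dg S y)
        + (S.filter (fun e => ∀ z ∈ e.1, 2 ≤ dg S z)).card := by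
      by_contra hcon
      push_neg at hcon
      -- no degree 2 vertex has only leaf edges
      have hP3' : ∀ y ∈ P, dg S y = 2 → 1 ≤ ((S.filter (fun e => y ∈ e.1)).filter
          (fun e => 2 ≤ dg S (partner e y))).card := by
        intro y hy hy2
        by_contra hic
        push_neg at hic
        have hic0 : ((S.filter (fun e => y ∈ e.1)).filter
            (fun e => 2 ≤ dg S (partner e y))).card = 0 := by omega
        have hkc2 : (L.filter (fun x => pfn e0 S x = y)).card = 2 := by
          rw [← hkc y hy]
          have := hsplit_dg y
          omega
        obtain ⟨x, hx, x', hx', hxx'⟩ := Finset.one_lt_card.mp (by omega :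
          1 < (L.filter (fun x => pfn e0 S x = y)).card)
        obtain ⟨hxL, hpfx⟩ := Finset.mem_filter.mp hx
        obtain ⟨hxL', hpfx'⟩ := Finset.mem_filter.mp hx'
        have hx1 : dg S x = 1 := (Finset.mem_filter.mp hxL).2
        have hx1' : dg S x' = 1 := (Finset.mem_filter.mp hxL').2
        obtain ⟨_, hpe⟩ := pfn_spec e0 hx1
        obtain ⟨_, hpe'⟩ := pfn_spec e0 hx1'
        rw [hpfx] at hpe
        rw [hpfx'] at hpe'
        exact noP3 hn hres hz hy2 (edgeOf_spec (S := S) e0 hx1).1 hpe hx1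
          (edgeOf_spec (S := S) e0 hx1').1 hpe' hx1' hxx'
      rcases Nat.eq_zero_or_pos P.card with hPc | hPc
      · rw [Finset.card_eq_zero] at hPc
        rw [hPc] at hLsum hcards
        simp only [Finset.sum_empty, Finset.card_empty] at hLsum hcards
        omega
      · rcases Nat.eq_zero_or_pos (S.filter (fun e => ∀ z ∈ e.1, 2 ≤ dg S z)).card with hE | hE
        · -- no interior edges at all: every P-vertex has degree ≥ 3
          have hizero : ∀ y ∈ P, ((S.filter (fun e => y ∈ e.1)).filter
              (fun e => 2 ≤ dg S (partner e y))).card = 0 := by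
            have := hint
            rw [hE, mul_zero] at this
            exact fun y hy => (Finset.sum_eq_zero_iff.mp this) y hy
          have hdg3 : ∀ y ∈ P, 3 ≤ dg S y := by
            intro y hy
            have h2 : 2 ≤ dg S y := (Finset.mem_filter.mp hy).2
            rcases Nat.lt_or_ge (dg S y) 3 with h3 | h3
            · have : dg S y = 2 := by omega
              have := hP3' y hy this
              have := hizero y hy
              omega
            · exact h3
          have hDP3 : 3 * P.card ≤ ∑ y ∈ P, dg S y := by
            rw [show 3 * P.card = ∑ _y ∈ P, 3 by rw [Finset.sum_const, smul_eq_mul, mul_comm]]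
            exact Finset.sum_le_sum hdg3
          rw [hE] at hint
          omega
        · -- at least one interior edge
          rcases Nat.lt_or_ge (S.filter (fun e => ∀ z ∈ e.1, 2 ≤ dg S z)).card 2 with hE2 | hE2
          · have hE1 : (S.filter (fun e => ∀ z ∈ e.1, 2 ≤ dg S z)).card = 1 := by omega
            -- all degrees in P are exactly 2
            have hall2 : ∀ y ∈ P, dg S y = 2 := by
              by_contra hcon2
              push_neg at hcon2
              obtain ⟨y0, hy0, hy0ne⟩ := hcon2
              have hy03 : 3 ≤ dg S y0 := by
                have := (Finset.mem_filter.mp hy0).2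
                omega
              have herase := Finset.add_sum_erase P (dg S) hy0
              have herasele : 2 * (P.card - 1) ≤ ∑ x ∈ P.erase y0, dg S x := by
                rw [show 2 * (P.card - 1) = ∑ _x ∈ P.erase y0, 2 by
                  rw [Finset.sum_const, smul_eq_mul, mul_comm, Finset.card_erase_of_mem hy0]]
                exact Finset.sum_le_sum (fun x hx =>
                  (Finset.mem_filter.mp (Finset.mem_of_mem_erase hx)).2)
              omega
            have hPc2 : P.card ≤ 2 := by
              have h1 : ∀ y ∈ P, 1 ≤ ((S.filter (fun e => y ∈ e.1)).filter
                  (fun e => 2 ≤ dg S (partner e y))).card :=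
                fun y hy => hP3' y hy (hall2 y hy)
              have h2 : P.card ≤ ∑ y ∈ P, ((S.filter (fun e => y ∈ e.1)).filter
                  (fun e => 2 ≤ dg S (partner e y))).card := by
                rw [show P.card = ∑ _y ∈ P, 1 by rw [Finset.sum_const, smul_eq_mul, mul_one]]
                exact Finset.sum_le_sum h1
              rw [hint, hE1] at h2
              omega
            have hDPeq : ∑ y ∈ P, dg S y = 2 * P.card := by
              rw [Finset.sum_congr rfl hall2, Finset.sum_const, smul_eq_mul, mul_comm]
            omega
          · omega
    omega

end Lower

end KMD

theorem metricDim_kneserGraph2 (n : ℕ) (hn : 6 ≤ n) :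
    metricDim (kneserGraph n 2 (by norm_num)) = 2 * (n - n % 3) / 3 + n % 3 := by
  have hval : 2 * (n - n % 3) / 3 + n % 3 = n - n / 3 := by omega
  rw [hval]
  unfold metricDim
  apply le_antisymm
  · exact Nat.sInf_le ⟨KMD.US, KMD.US_resolving hn, KMD.card_US hn⟩
  · apply le_csInf
    · exact ⟨n - n / 3, KMD.US (n := n), KMD.US_resolving hn, KMD.card_US hn⟩
    · rintro b ⟨T, hT, rfl⟩
      have := KMD.lower_main hn hT
      omega
end

section
/- For every integer q ≥ 1, the metric dimension of the square lattice graph H(2,q) equals ⌊(2/3)(2q − 1)⌋, i.e. the floor of 2(2q−1)/3. -/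
/-- The Hamming graph `H(d,q)`: vertices are the d-tuples over an alphabet of
size `q`, adjacent when they differ in exactly one coordinate. -/
def hammingGraph (d q : ℕ) : SimpleGraph (Fin d → Fin q) where
  Adj x y := ∃! i, x i ≠ y i
  symm := ⟨fun x y h => by
    obtain ⟨i, hi, hu⟩ := h
    exact ⟨i, hi.symm, fun j hj => hu j hj.symm⟩⟩
  loopless := ⟨fun x h => by
    obtain ⟨i, hi, -⟩ := h
    exact hi rfl⟩

namespace SL
variable {q : ℕ}

/-- Hamming-style distance on pairs. -/
def D (u v : Fin 2 → Fin q) : ℕ :=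
  (if u 0 = v 0 then 0 else 1) + (if u 1 = v 1 then 0 else 1)

lemma eq_iff {u v : Fin 2 → Fin q} : u = v ↔ u 0 = v 0 ∧ u 1 = v 1 := by
  constructor
  · rintro rfl; exact ⟨rfl, rfl⟩
  · rintro ⟨h0, h1⟩; funext i; fin_cases i <;> assumption

lemma fin2 (j : Fin 2) : j = 0 ∨ j = 1 := by
  fin_cases j
  · exact Or.inl rfl
  · exact Or.inr rfl

lemma adj_iff {u v : Fin 2 → Fin q} :
    (hammingGraph 2 q).Adj u v ↔
      (u 0 ≠ v 0 ∧ u 1 = v 1) ∨ (u 0 = v 0 ∧ u 1 ≠ v 1) := by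
  constructor
  · rintro ⟨i, hi, hu⟩
    fin_cases i
    · left
      refine ⟨hi, ?_⟩
      by_contra h1
      exact absurd (hu 1 h1) (by decide)
    · right
      refine ⟨?_, hi⟩
      by_contra h0
      exact absurd (hu 0 h0) (by decide)
  · rintro (⟨h0, h1⟩ | ⟨h0, h1⟩)
    · refine ⟨0, h0, fun j hj => ?_⟩
      rcases fin2 j with rfl | rfl
      · rfl
      · exact absurd h1 hj
    · refine ⟨1, h1, fun j hj => ?_⟩
      rcases fin2 j with rfl | rfl
      · exact absurd h0 hj
      · rfl

lemma dist_eq (u v : Fin 2 → Fin q) : (hammingGraph 2 q).dist u v = D u v := by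
  by_cases h0 : u 0 = v 0 <;> by_cases h1 : u 1 = v 1
  · have : u = v := eq_iff.mpr ⟨h0, h1⟩
    subst this
    simp [D, h0, h1]
  · have : (hammingGraph 2 q).Adj u v := adj_iff.mpr (Or.inr ⟨h0, h1⟩)
    rw [SimpleGraph.dist_eq_one_iff_adj.mpr this]
    simp [D, h0, h1]
  · have : (hammingGraph 2 q).Adj u v := adj_iff.mpr (Or.inl ⟨h0, h1⟩)
    rw [SimpleGraph.dist_eq_one_iff_adj.mpr this]
    simp [D, h0, h1]
  · -- both coordinates differ: distance 2
    have hD : D u v = 2 := by simp [D, h0, h1]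
    rw [hD]
    set m : Fin 2 → Fin q := ![v 0, u 1] with hm
    have hm0 : m 0 = v 0 := rfl
    have hm1 : m 1 = u 1 := rfl
    have ha1 : (hammingGraph 2 q).Adj u m :=
      adj_iff.mpr (Or.inl ⟨by rw [hm0]; exact h0, by rw [hm1]⟩)
    have ha2 : (hammingGraph 2 q).Adj m v :=
      adj_iff.mpr (Or.inr ⟨hm0, by rw [hm1]; exact h1⟩)
    have hle : (hammingGraph 2 q).dist u v ≤ 2 := by
      have := SimpleGraph.dist_le (SimpleGraph.Walk.cons ha1 (SimpleGraph.Walk.cons ha2 SimpleGraph.Walk.nil))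
      simpa using this
    have hne : u ≠ v := fun h => h0 (by rw [h])
    have hr : (hammingGraph 2 q).Reachable u v :=
      ⟨SimpleGraph.Walk.cons ha1 (SimpleGraph.Walk.cons ha2 SimpleGraph.Walk.nil)⟩
    have h0' : (hammingGraph 2 q).dist u v ≠ 0 := fun h =>
      hne (hr.dist_eq_zero_iff.mp h)
    have h1' : (hammingGraph 2 q).dist u v ≠ 1 := fun h => by
      rcases adj_iff.mp (SimpleGraph.dist_eq_one_iff_adj.mp h) with ⟨-, h⟩ | ⟨h, -⟩
      · exact h1 h
      · exact h0 h
    omega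

/-- abstract resolving property w.r.t. `D` -/
def Res (S : Finset (Fin 2 → Fin q)) : Prop :=
  ∀ u w : Fin 2 → Fin q, u ≠ w → ∃ v ∈ S, D u v ≠ D w v

def EmptyRow (S : Finset (Fin 2 → Fin q)) (i : Fin q) : Prop := ∀ v ∈ S, v 0 ≠ i
def EmptyCol (S : Finset (Fin 2 → Fin q)) (j : Fin q) : Prop := ∀ v ∈ S, v 1 ≠ j
def Lonely (S : Finset (Fin 2 → Fin q)) (v : Fin 2 → Fin q) : Prop :=
  v ∈ S ∧ (∀ w ∈ S, w 0 = v 0 → w = v) ∧ (∀ w ∈ S, w 1 = v 1 → w = v)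

def Good (S : Finset (Fin 2 → Fin q)) : Prop :=
  (∀ i i', EmptyRow S i → EmptyRow S i' → i = i') ∧
  (∀ j j', EmptyCol S j → EmptyCol S j' → j = j') ∧
  (∀ v w, Lonely S v → Lonely S w → v = w) ∧
  ((∃ v, Lonely S v) → (∃ i, EmptyRow S i) → (∃ j, EmptyCol S j) → False)

lemma mk0 (x y : Fin q) : (![x, y] : Fin 2 → Fin q) 0 = x := rfl
lemma mk1 (x y : Fin q) : (![x, y] : Fin 2 → Fin q) 1 = y := rfl

lemma res_good (hq : 1 ≤ q) (S : Finset (Fin 2 → Fin q)) (h : Res S) : Good S := by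
  have c0 : Fin q := ⟨0, hq⟩
  refine ⟨?_, ?_, ?_, ?_⟩
  · -- at most one empty row
    intro i i' hi hi'
    by_contra hne
    obtain ⟨v, hv, hD⟩ := h ![i, c0] ![i', c0] (by
      intro he
      exact hne (congrArg (fun f => f 0) he))
    have e1 : i ≠ v 0 := fun he => hi v hv he.symm
    have e2 : i' ≠ v 0 := fun he => hi' v hv he.symm
    exact hD (by simp [D, mk0, mk1, e1, e2])
  · intro j j' hj hj'
    by_contra hne
    obtain ⟨v, hv, hD⟩ := h ![c0, j] ![c0, j'] (by
      intro he
      exact hne (congrArg (fun f => f 1) he))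
    have e1 : j ≠ v 1 := fun he => hj v hv he.symm
    have e2 : j' ≠ v 1 := fun he => hj' v hv he.symm
    exact hD (by simp [D, mk0, mk1, e1, e2]; split_ifs <;> rfl)
  · -- at most one lonely vertex
    intro v w hv hw
    by_contra hne
    have hrow : v 0 ≠ w 0 := fun he => hne (hw.2.1 v hv.1 he)
    have hcol : v 1 ≠ w 1 := fun he => hne (hw.2.2 v hv.1 he)
    obtain ⟨s, hs, hD⟩ := h ![v 0, w 1] ![w 0, v 1] (by
      intro he
      exact hrow (congrArg (fun f => f 0) he))
    apply hD
    by_cases h1 : s 0 = v 0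
    · have : s = v := hv.2.1 s hs h1
      subst this
      simp [D, mk0, mk1, hrow, Ne.symm hrow, hcol, Ne.symm hcol]
    by_cases h2 : s 0 = w 0
    · have : s = w := hw.2.1 s hs h2
      subst this
      simp [D, mk0, mk1, hrow, Ne.symm hrow, hcol, Ne.symm hcol, h1, Ne.symm h1]
    have h3 : s 1 ≠ v 1 := fun he => h1 (congrArg (fun f => f 0) (hv.2.2 s hs he))
    have h4 : s 1 ≠ w 1 := fun he => h2 (congrArg (fun f => f 0) (hw.2.2 s hs he))
    simp [D, mk0, mk1, Ne.symm h1, Ne.symm h2, Ne.symm h3, Ne.symm h4]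
  · -- no lonely together with empty row and empty column
    rintro ⟨v, hv⟩ ⟨i, hi⟩ ⟨j, hj⟩
    have hrow : v 0 ≠ i := hi v hv.1
    have hcol : v 1 ≠ j := hj v hv.1
    obtain ⟨s, hs, hD⟩ := h ![v 0, j] ![i, v 1] (by
      intro he
      exact hrow (congrArg (fun f => f 0) he))
    apply hD
    have hsi : s 0 ≠ i := hi s hs
    have hsj : s 1 ≠ j := hj s hs
    by_cases h1 : s 0 = v 0
    · have : s = v := hv.2.1 s hs h1
      subst this
      simp [D, mk0, mk1, hrow, Ne.symm hrow, hcol, Ne.symm hcol]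
    have h3 : s 1 ≠ v 1 := fun he => h1 (congrArg (fun f => f 0) (hv.2.2 s hs he))
    simp [D, mk0, mk1, Ne.symm h1, Ne.symm hsi, Ne.symm h3, Ne.symm hsj]

lemma good_res (S : Finset (Fin 2 → Fin q)) (h : Good S) : Res S := by
  obtain ⟨C1, C2, C3, C4⟩ := h
  intro u w huw
  by_cases h0 : u 0 = w 0
  · -- same row, different column
    have h1 : u 1 ≠ w 1 := fun he => huw (eq_iff.mpr ⟨h0, he⟩)
    by_contra hc
    push_neg at hc
    have hu : EmptyCol S (u 1) := by
      intro v hv he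
      have hD := hc v hv
      have hw1 : w 1 ≠ v 1 := fun hh => h1 (he.symm.trans hh.symm)
      simp [D, h0, he.symm, hw1] at hD
    have hw : EmptyCol S (w 1) := by
      intro v hv he
      have hD := hc v hv
      have hu1 : u 1 ≠ v 1 := fun hh => h1 (hh.trans he)
      simp [D, h0, he.symm, hu1] at hD
    exact h1 (C2 _ _ hu hw)
  by_cases h1 : u 1 = w 1
  · by_contra hc
    push_neg at hc
    have hu : EmptyRow S (u 0) := by
      intro v hv he
      have hD := hc v hv
      have hw0 : w 0 ≠ v 0 := fun hh => h0 (he.symm.trans hh.symm)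
      simp [D, h1, he.symm, hw0] at hD
    have hw : EmptyRow S (w 0) := by
      intro v hv he
      have hD := hc v hv
      have hu0 : u 0 ≠ v 0 := fun hh => h0 (hh.trans he)
      simp [D, h1, he.symm, hu0] at hD
    exact h0 (C1 _ _ hu hw)
  · -- both coordinates differ
    by_contra hc
    push_neg at hc
    -- classify elements of S
    have claim : ∀ v ∈ S, (v 0 = u 0 ∧ v 1 = w 1) ∨ (v 0 = w 0 ∧ v 1 = u 1) ∨
        (v 0 ≠ u 0 ∧ v 0 ≠ w 0 ∧ v 1 ≠ u 1 ∧ v 1 ≠ w 1) := by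
      intro v hv
      have hD := hc v hv
      by_cases a1 : u 0 = v 0 <;> by_cases a2 : w 0 = v 0 <;>
        by_cases b1 : u 1 = v 1 <;> by_cases b2 : w 1 = v 1 <;>
        simp [D, a1, a2, b1, b2] at hD <;>
        first
          | exact absurd (a1.trans a2.symm) h0
          | exact absurd (b1.trans b2.symm) h1
          | exact Or.inl ⟨a1.symm, b2.symm⟩
          | exact Or.inr (Or.inl ⟨a2.symm, b1.symm⟩)
          | exact Or.inr (Or.inr ⟨fun h => a1 h.symm, fun h => a2 h.symm,
              fun h => b1 h.symm, fun h => b2 h.symm⟩)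
    set P : Fin 2 → Fin q := ![u 0, w 1] with hP
    set P' : Fin 2 → Fin q := ![w 0, u 1] with hP'
    have hP0 : P 0 = u 0 := rfl
    have hP1 : P 1 = w 1 := rfl
    have hP'0 : P' 0 = w 0 := rfl
    have hP'1 : P' 1 = u 1 := rfl
    have lonP : P ∈ S → Lonely S P := by
      intro hPS
      refine ⟨hPS, ?_, ?_⟩
      · intro z hz he
        rcases claim z hz with ⟨e0, e1⟩ | ⟨e0, e1⟩ | ⟨e0, -, -, -⟩
        · exact eq_iff.mpr ⟨e0.trans hP0.symm, e1.trans hP1.symm⟩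
        · exact absurd (he.symm.trans e0) h0
        · exact absurd (he.trans hP0) e0
      · intro z hz he
        rcases claim z hz with ⟨e0, e1⟩ | ⟨e0, e1⟩ | ⟨-, -, -, e1⟩
        · exact eq_iff.mpr ⟨e0.trans hP0.symm, e1.trans hP1.symm⟩
        · exact absurd (he.symm.trans e1).symm h1
        · exact absurd (he.trans hP1) e1
    have lonP' : P' ∈ S → Lonely S P' := by
      intro hPS
      refine ⟨hPS, ?_, ?_⟩
      · intro z hz he
        rcases claim z hz with ⟨e0, e1⟩ | ⟨e0, e1⟩ | ⟨-, e0, -, -⟩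
        · exact absurd (he.symm.trans e0).symm h0
        · exact eq_iff.mpr ⟨e0.trans hP'0.symm, e1.trans hP'1.symm⟩
        · exact absurd (he.trans hP'0) e0
      · intro z hz he
        rcases claim z hz with ⟨e0, e1⟩ | ⟨e0, e1⟩ | ⟨-, -, e1, -⟩
        · exact absurd (he.symm.trans e1) h1
        · exact eq_iff.mpr ⟨e0.trans hP'0.symm, e1.trans hP'1.symm⟩
        · exact absurd (he.trans hP'1) e1
    have erow_u : P ∉ S → EmptyRow S (u 0) := by
      intro hPS z hz he
      rcases claim z hz with ⟨e0, e1⟩ | ⟨e0, -⟩ | ⟨e0, -, -, -⟩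
      · exact hPS (by rw [← eq_iff.mpr ⟨e0.trans hP0.symm, e1.trans hP1.symm⟩]; exact hz)
      · exact h0 (he.symm.trans e0)
      · exact e0 he
    have erow_w : P' ∉ S → EmptyRow S (w 0) := by
      intro hPS z hz he
      rcases claim z hz with ⟨e0, -⟩ | ⟨e0, e1⟩ | ⟨-, e0, -, -⟩
      · exact h0 (e0.symm.trans he)
      · exact hPS (by rw [← eq_iff.mpr ⟨e0.trans hP'0.symm, e1.trans hP'1.symm⟩]; exact hz)
      · exact e0 he
    have ecol_w : P ∉ S → EmptyCol S (w 1) := by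
      intro hPS z hz he
      rcases claim z hz with ⟨e0, e1⟩ | ⟨-, e1⟩ | ⟨-, -, -, e1⟩
      · exact hPS (by rw [← eq_iff.mpr ⟨e0.trans hP0.symm, e1.trans hP1.symm⟩]; exact hz)
      · exact h1 (e1.symm.trans he)
      · exact e1 he
    have ecol_u : P' ∉ S → EmptyCol S (u 1) := by
      intro hPS z hz he
      rcases claim z hz with ⟨-, e1⟩ | ⟨e0, e1⟩ | ⟨-, -, e1, -⟩
      · exact h1 (he.symm.trans e1)
      · exact hPS (by rw [← eq_iff.mpr ⟨e0.trans hP'0.symm, e1.trans hP'1.symm⟩]; exact hz)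
      · exact e1 he
    by_cases hPS : P ∈ S <;> by_cases hP'S : P' ∈ S
    · have := C3 P P' (lonP hPS) (lonP' hP'S)
      exact h0 (congrArg (fun f => f 0) this)
    · exact C4 ⟨P, lonP hPS⟩ ⟨w 0, erow_w hP'S⟩ ⟨u 1, ecol_u hP'S⟩
    · exact C4 ⟨P', lonP' hP'S⟩ ⟨u 0, erow_u hPS⟩ ⟨w 1, ecol_w hPS⟩
    · exact h0 (C1 _ _ (erow_u hPS) (erow_w hP'S))

lemma row_count (S : Finset (Fin 2 → Fin q)) :
    S.card + (S.filter (fun v => ∀ w ∈ S, w 0 = v 0 → w = v)).card ≥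
      2 * (S.image (fun v => v 0)).card := by
  classical
  set A := S.filter (fun v => ∀ w ∈ S, w 0 = v 0 → w = v) with hA
  set R := S.image (fun v => v 0) with hR
  have hS : S.card = ∑ i ∈ R, (S.filter (fun v => v 0 = i)).card :=
    Finset.card_eq_sum_card_fiberwise (fun v hv => Finset.mem_image_of_mem _ hv)
  have hAc : A.card = ∑ i ∈ R, (A.filter (fun v => v 0 = i)).card :=
    Finset.card_eq_sum_card_fiberwise (fun v hv =>
      Finset.mem_image_of_mem _ (Finset.mem_filter.mp hv).1)
  rw [hS, hAc, ← Finset.sum_add_distrib]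
  have key : ∀ i ∈ R, 2 ≤ (S.filter (fun v => v 0 = i)).card +
      (A.filter (fun v => v 0 = i)).card := by
    intro i hi
    obtain ⟨v, hvS, hv0⟩ := Finset.mem_image.mp hi
    have hvF : v ∈ S.filter (fun v => v 0 = i) := Finset.mem_filter.mpr ⟨hvS, hv0⟩
    rcases le_or_gt 2 (S.filter (fun v => v 0 = i)).card with h2 | h2
    · exact le_trans h2 (Nat.le_add_right _ _)
    · have h1 : (S.filter (fun v => v 0 = i)).card = 1 := by
        have h3 : 1 ≤ (S.filter (fun v => v 0 = i)).card := Finset.card_pos.mpr ⟨v, hvF⟩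
        exact le_antisymm (Nat.lt_succ_iff.mp h2) h3
      have hsing : S.filter (fun v => v 0 = i) = {v} := by
        obtain ⟨u, hu⟩ := Finset.card_eq_one.mp h1
        have : v = u := by
          have := hvF
          rw [hu, Finset.mem_singleton] at this
          exact this
        rw [hu, this]
      have hvA : v ∈ A.filter (fun v => v 0 = i) := by
        refine Finset.mem_filter.mpr ⟨Finset.mem_filter.mpr ⟨hvS, ?_⟩, hv0⟩
        intro w hw hw0
        have : w ∈ S.filter (fun v => v 0 = i) :=
          Finset.mem_filter.mpr ⟨hw, hw0.trans hv0⟩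
        rw [hsing, Finset.mem_singleton] at this
        exact this
      have h4 : 1 ≤ (A.filter (fun v => v 0 = i)).card := Finset.card_pos.mpr ⟨v, hvA⟩
      exact Nat.add_le_add h1.ge h4
  calc 2 * R.card = ∑ _i ∈ R, 2 := by rw [Finset.sum_const, smul_eq_mul, mul_comm]
    _ ≤ ∑ i ∈ R, ((S.filter (fun v => v 0 = i)).card +
        (A.filter (fun v => v 0 = i)).card) := Finset.sum_le_sum key

lemma col_count (S : Finset (Fin 2 → Fin q)) :
    S.card + (S.filter (fun v => ∀ w ∈ S, w 1 = v 1 → w = v)).card ≥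
      2 * (S.image (fun v => v 1)).card := by
  classical
  set A := S.filter (fun v => ∀ w ∈ S, w 1 = v 1 → w = v) with hA
  set R := S.image (fun v => v 1) with hR
  have hS : S.card = ∑ i ∈ R, (S.filter (fun v => v 1 = i)).card :=
    Finset.card_eq_sum_card_fiberwise (fun v hv => Finset.mem_image_of_mem _ hv)
  have hAc : A.card = ∑ i ∈ R, (A.filter (fun v => v 1 = i)).card :=
    Finset.card_eq_sum_card_fiberwise (fun v hv =>
      Finset.mem_image_of_mem _ (Finset.mem_filter.mp hv).1)
  rw [hS, hAc, ← Finset.sum_add_distrib]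
  have key : ∀ i ∈ R, 2 ≤ (S.filter (fun v => v 1 = i)).card +
      (A.filter (fun v => v 1 = i)).card := by
    intro i hi
    obtain ⟨v, hvS, hv1⟩ := Finset.mem_image.mp hi
    have hvF : v ∈ S.filter (fun v => v 1 = i) := Finset.mem_filter.mpr ⟨hvS, hv1⟩
    rcases le_or_gt 2 (S.filter (fun v => v 1 = i)).card with h2 | h2
    · exact le_trans h2 (Nat.le_add_right _ _)
    · have h1 : (S.filter (fun v => v 1 = i)).card = 1 := by
        have h3 : 1 ≤ (S.filter (fun v => v 1 = i)).card := Finset.card_pos.mpr ⟨v, hvF⟩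
        exact le_antisymm (Nat.lt_succ_iff.mp h2) h3
      have hsing : S.filter (fun v => v 1 = i) = {v} := by
        obtain ⟨u, hu⟩ := Finset.card_eq_one.mp h1
        have : v = u := by
          have := hvF
          rw [hu, Finset.mem_singleton] at this
          exact this
        rw [hu, this]
      have hvA : v ∈ A.filter (fun v => v 1 = i) := by
        refine Finset.mem_filter.mpr ⟨Finset.mem_filter.mpr ⟨hvS, ?_⟩, hv1⟩
        intro w hw hw1
        have : w ∈ S.filter (fun v => v 1 = i) :=
          Finset.mem_filter.mpr ⟨hw, hw1.trans hv1⟩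
        rw [hsing, Finset.mem_singleton] at this
        exact this
      have h4 : 1 ≤ (A.filter (fun v => v 1 = i)).card := Finset.card_pos.mpr ⟨v, hvA⟩
      exact Nat.add_le_add h1.ge h4
  calc 2 * R.card = ∑ _i ∈ R, 2 := by rw [Finset.sum_const, smul_eq_mul, mul_comm]
    _ ≤ ∑ i ∈ R, ((S.filter (fun v => v 1 = i)).card +
        (A.filter (fun v => v 1 = i)).card) := Finset.sum_le_sum key

lemma good_count (hq : 1 ≤ q) (S : Finset (Fin 2 → Fin q)) (hG : Good S) :
    4 * q ≤ 3 * S.card + 4 := by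
  classical
  obtain ⟨C1, C2, C3, C4⟩ := hG
  set A := S.filter (fun v => ∀ w ∈ S, w 0 = v 0 → w = v) with hA
  set B := S.filter (fun v => ∀ w ∈ S, w 1 = v 1 → w = v) with hB
  set R := S.image (fun v => v 0) with hR
  set C := S.image (fun v => v 1) with hC
  have hRow : S.card + A.card ≥ 2 * R.card := row_count S
  have hCol : S.card + B.card ≥ 2 * C.card := col_count S
  have hRq : q ≤ R.card + 1 := by
    by_contra hlt
    push_neg at hlt
    have hcompl : 1 < Rᶜ.card := by
      have := Finset.card_compl R
      have hle : R.card ≤ q := by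
        have := Finset.card_le_card (Finset.subset_univ R)
        simpa using this
      simp only [Fintype.card_fin] at this
      omega
    obtain ⟨i, hi, i', hi', hne⟩ := Finset.one_lt_card.mp hcompl
    have hrow : ∀ j : Fin q, j ∈ Rᶜ → EmptyRow S j := by
      intro j hj v hv he
      exact (Finset.mem_compl.mp hj) (Finset.mem_image.mpr ⟨v, hv, he⟩)
    exact hne (C1 i i' (hrow i hi) (hrow i' hi'))
  have hCq : q ≤ C.card + 1 := by
    by_contra hlt
    push_neg at hlt
    have hcompl : 1 < Cᶜ.card := by
      have := Finset.card_compl C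
      have hle : C.card ≤ q := by
        have := Finset.card_le_card (Finset.subset_univ C)
        simpa using this
      simp only [Fintype.card_fin] at this
      omega
    obtain ⟨j, hj, j', hj', hne⟩ := Finset.one_lt_card.mp hcompl
    have hcol : ∀ i : Fin q, i ∈ Cᶜ → EmptyCol S i := by
      intro i hi v hv he
      exact (Finset.mem_compl.mp hi) (Finset.mem_image.mpr ⟨v, hv, he⟩)
    exact hne (C2 j j' (hcol j hj) (hcol j' hj'))
  have hUnion : A.card + B.card ≤ S.card + (A ∩ B).card := by
    have h1 : (A ∪ B).card + (A ∩ B).card = A.card + B.card :=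
      Finset.card_union_add_card_inter A B
    have h2 : (A ∪ B).card ≤ S.card := by
      apply Finset.card_le_card
      intro v hv
      rcases Finset.mem_union.mp hv with h | h
      · exact (Finset.mem_filter.mp h).1
      · exact (Finset.mem_filter.mp h).1
    omega
  have hLonely : ∀ v ∈ A ∩ B, Lonely S v := by
    intro v hv
    obtain ⟨hvA, hvB⟩ := Finset.mem_inter.mp hv
    obtain ⟨hvS, hv0⟩ := Finset.mem_filter.mp hvA
    obtain ⟨-, hv1⟩ := Finset.mem_filter.mp hvB
    exact ⟨hvS, hv0, hv1⟩
  have hI : (A ∩ B).card ≤ 1 := by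
    apply Finset.card_le_one.mpr
    intro a ha b hb
    exact C3 a b (hLonely a ha) (hLonely b hb)
  rcases Finset.eq_empty_or_nonempty (A ∩ B) with hemp | ⟨v, hv⟩
  · have : (A ∩ B).card = 0 := by rw [hemp]; rfl
    omega
  · have hlon : ∃ v, Lonely S v := ⟨v, hLonely v hv⟩
    have hfull : R.card = q ∨ C.card = q := by
      by_cases her : ∃ i, EmptyRow S i
      · right
        have : ∀ j : Fin q, j ∈ C := by
          intro j
          by_contra hj
          have hec : EmptyCol S j := by
            intro v hv he
            exact hj (Finset.mem_image.mpr ⟨v, hv, he⟩)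
          exact C4 hlon her ⟨j, hec⟩
        have : C = Finset.univ := Finset.eq_univ_iff_forall.mpr this
        rw [this]
        simp
      · left
        push_neg at her
        have : ∀ i : Fin q, i ∈ R := by
          intro i
          by_contra hi
          exact her i (fun v hv he => hi (Finset.mem_image.mpr ⟨v, hv, he⟩))
        have : R = Finset.univ := Finset.eq_univ_iff_forall.mpr this
        rw [this]
        simp
    rcases hfull with h | h <;> omega

def rowN (a b n : ℕ) : ℕ :=
  if n < 2*a then n
  else if n < 2*a+2*b then 2*a + (n - 2*a)/2
  else if n = 2*a+2*b+2 then 2*a+b+1 else 2*a+b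

def colN (a b n : ℕ) : ℕ :=
  if n < 2*a then n/2
  else if n < 2*a+2*b then a + (n - 2*a)
  else if n = 2*a+2*b+1 then a+2*b+1 else a+2*b

lemma rowN_lt {a b e n : ℕ} (he : e ≤ 1) (hn : n < 2*a+2*b+3*e) :
    rowN a b n < 2*a+b+2*e := by
  unfold rowN; split_ifs <;> omega

lemma colN_lt {a b e n : ℕ} (he : e ≤ 1) (hn : n < 2*a+2*b+3*e) :
    colN a b n < a+2*b+2*e := by
  unfold colN; split_ifs <;> omega

lemma injN {a b e n n' : ℕ} (he : e ≤ 1) (hn : n < 2*a+2*b+3*e)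
    (hn' : n' < 2*a+2*b+3*e) (hr : rowN a b n = rowN a b n')
    (hc : colN a b n = colN a b n') : n = n' := by
  unfold rowN at hr
  unfold colN at hc
  split_ifs at hr hc <;> omega

lemma coverRow {a b e x : ℕ} (he : e ≤ 1) (hx : x < 2*a+b+2*e) :
    ∃ n < 2*a+2*b+3*e, rowN a b n = x := by
  refine ⟨if x < 2*a then x else if x < 2*a+b then 2*a+2*(x-2*a)
    else if x = 2*a+b then 2*a+2*b else 2*a+2*b+2, ?_, ?_⟩
  · split_ifs <;> omega
  · unfold rowN; split_ifs <;> omega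

lemma coverCol {a b e y : ℕ} (he : e ≤ 1) (hy : y < a+2*b+2*e) :
    ∃ n < 2*a+2*b+3*e, colN a b n = y := by
  refine ⟨if y < a then 2*y else if y < a+2*b then 2*a+(y-a)
    else if y = a+2*b then 2*a+2*b else 2*a+2*b+1, ?_, ?_⟩
  · split_ifs <;> omega
  · unfold colN; split_ifs <;> omega

lemma partner {a b e n : ℕ} (he : e ≤ 1) (hn : n < 2*a+2*b+3*e) :
    ∃ n' < 2*a+2*b+3*e, n' ≠ n ∧
      (rowN a b n' = rowN a b n ∨ colN a b n' = colN a b n) := by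
  rcases lt_or_ge n (2*a) with h | h
  · refine ⟨if n % 2 = 0 then n+1 else n-1, ?_, ?_, Or.inr ?_⟩
    · split_ifs <;> omega
    · split_ifs <;> omega
    · unfold colN; split_ifs <;> omega
  rcases lt_or_ge n (2*a+2*b) with h2 | h2
  · refine ⟨if (n-2*a) % 2 = 0 then n+1 else n-1, ?_, ?_, Or.inl ?_⟩
    · split_ifs <;> omega
    · split_ifs <;> omega
    · unfold rowN; split_ifs <;> omega
  · have he1 : e = 1 := by omega
    have : n = 2*a+2*b ∨ n = 2*a+2*b+1 ∨ n = 2*a+2*b+2 := by omega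
    rcases this with rfl | rfl | rfl
    · refine ⟨2*a+2*b+1, by omega, by omega, Or.inl ?_⟩
      unfold rowN; split_ifs <;> omega
    · refine ⟨2*a+2*b, by omega, by omega, Or.inl ?_⟩
      unfold rowN; split_ifs <;> omega
    · refine ⟨2*a+2*b, by omega, by omega, Or.inr ?_⟩
      unfold colN; split_ifs <;> omega

lemma exists_good_card (hq : 1 ≤ q) (a b e : ℕ) (he : e ≤ 1)
    (H1 : 2*a+b+2*e ≤ q) (H2 : a+2*b+2*e ≤ q)
    (H4 : q ≤ 2*a+b+2*e+1) (H5 : q ≤ a+2*b+2*e+1) :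
    ∃ S : Finset (Fin 2 → Fin q), Good S ∧ S.card = 2*a+2*b+3*e := by
  classical
  have hq0 : 0 < q := hq
  set m := 2*a+2*b+3*e with hm
  set f : ℕ → (Fin 2 → Fin q) := fun n =>
    ![⟨rowN a b n % q, Nat.mod_lt _ hq0⟩, ⟨colN a b n % q, Nat.mod_lt _ hq0⟩] with hf
  have f0 : ∀ n, n < m → ((f n) 0).val = rowN a b n := by
    intro n hn
    show (rowN a b n % q) = rowN a b n
    exact Nat.mod_eq_of_lt (lt_of_lt_of_le (rowN_lt he hn) H1)
  have f1 : ∀ n, n < m → ((f n) 1).val = colN a b n := by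
    intro n hn
    show (colN a b n % q) = colN a b n
    exact Nat.mod_eq_of_lt (lt_of_lt_of_le (colN_lt he hn) H2)
  have hinj : ∀ n ∈ Finset.range m, ∀ n' ∈ Finset.range m, f n = f n' → n = n' := by
    intro n hn n' hn' hfe
    rw [Finset.mem_range] at hn hn'
    refine injN he hn hn' ?_ ?_
    · rw [← f0 n hn, ← f0 n' hn', hfe]
    · rw [← f1 n hn, ← f1 n' hn', hfe]
  set S := (Finset.range m).image f with hS
  have hmem : ∀ v, v ∈ S ↔ ∃ n < m, f n = v := by
    intro v
    simp [hS, Finset.mem_image]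
  have hcard : S.card = m := by
    rw [hS, Finset.card_image_of_injOn hinj, Finset.card_range]
  -- no empty row below the bound
  have hrow : ∀ i : Fin q, EmptyRow S i → 2*a+b+2*e ≤ i.val := by
    intro i hi
    by_contra hlt
    push_neg at hlt
    obtain ⟨n, hn, hrn⟩ := coverRow he hlt
    refine hi (f n) ((hmem _).mpr ⟨n, hn, rfl⟩) (Fin.ext ?_)
    rw [f0 n hn, hrn]
  have hcol : ∀ j : Fin q, EmptyCol S j → a+2*b+2*e ≤ j.val := by
    intro j hj
    by_contra hlt
    push_neg at hlt
    obtain ⟨n, hn, hcn⟩ := coverCol he hlt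
    refine hj (f n) ((hmem _).mpr ⟨n, hn, rfl⟩) (Fin.ext ?_)
    rw [f1 n hn, hcn]
  have noLonely : ∀ v, ¬ Lonely S v := by
    rintro v ⟨hvS, hvr, hvc⟩
    obtain ⟨n, hn, rfl⟩ := (hmem v).mp hvS
    obtain ⟨n', hn', hne, hor⟩ := partner he hn
    have hwS : f n' ∈ S := (hmem _).mpr ⟨n', hn', rfl⟩
    have hwne : f n' ≠ f n := fun hc => hne (hinj n' (Finset.mem_range.mpr hn')
      n (Finset.mem_range.mpr hn) hc)
    rcases hor with h | h
    · exact hwne (hvr (f n') hwS (Fin.ext (by rw [f0 n' hn', f0 n hn, h])))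
    · exact hwne (hvc (f n') hwS (Fin.ext (by rw [f1 n' hn', f1 n hn, h])))
  refine ⟨S, ⟨?_, ?_, ?_, ?_⟩, hcard⟩
  · intro i i' hi hi'
    have := hrow i hi
    have := hrow i' hi'
    have hvi := i.isLt
    have hvi' := i'.isLt
    exact Fin.ext (by omega)
  · intro j j' hj hj'
    have := hcol j hj
    have := hcol j' hj'
    have hvj := j.isLt
    have hvj' := j'.isLt
    exact Fin.ext (by omega)
  · intro v w hv _
    exact absurd hv (noLonely v)
  · rintro ⟨v, hv⟩ _ _
    exact noLonely v hv

lemma exists_good (hq : 1 ≤ q) :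
    ∃ S : Finset (Fin 2 → Fin q), Good S ∧ S.card = 2*(2*q-1)/3 := by
  have h3 : q % 3 = 0 ∨ q % 3 = 1 ∨ q % 3 = 2 := by omega
  rcases h3 with h | h | h
  · obtain ⟨S, hS, hc⟩ := exists_good_card hq (q/3-1) (q/3-1) 1 (by omega)
      (by omega) (by omega) (by omega) (by omega)
    exact ⟨S, hS, by omega⟩
  · obtain ⟨S, hS, hc⟩ := exists_good_card hq (q/3) (q/3) 0 (by omega)
      (by omega) (by omega) (by omega) (by omega)
    exact ⟨S, hS, by omega⟩
  · obtain ⟨S, hS, hc⟩ := exists_good_card hq (q/3+1) (q/3) 0 (by omega)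
      (by omega) (by omega) (by omega) (by omega)
    exact ⟨S, hS, by omega⟩

end SL

theorem metricDim_squareLattice (q : ℕ) (hq : 1 ≤ q) :
    metricDim (hammingGraph 2 q) = 2 * (2 * q - 1) / 3 := by
  classical
  have key : ∀ S : Finset (Fin 2 → Fin q),
      IsResolvingSet (hammingGraph 2 q) ↑S ↔ SL.Res S := by
    intro S
    constructor
    · intro h u w huw
      obtain ⟨v, hv, hd⟩ := h u w huw
      exact ⟨v, Finset.mem_coe.mp hv, by rwa [SL.dist_eq, SL.dist_eq] at hd⟩
    · intro h u w huw
      obtain ⟨v, hv, hd⟩ := h u w huw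
      exact ⟨v, Finset.mem_coe.mpr hv, by rwa [SL.dist_eq, SL.dist_eq]⟩
  obtain ⟨S, hSgood, hScard⟩ := SL.exists_good (q := q) hq
  have hmem : 2 * (2 * q - 1) / 3 ∈ {n : ℕ | ∃ S : Finset (Fin 2 → Fin q),
      IsResolvingSet (hammingGraph 2 q) ↑S ∧ S.card = n} :=
    ⟨S, (key S).mpr (SL.good_res S hSgood), hScard⟩
  apply le_antisymm
  · exact Nat.sInf_le hmem
  · apply le_csInf ⟨_, hmem⟩
    rintro n ⟨T, hT, rfl⟩
    have := SL.good_count hq T (SL.res_good hq T ((key T).mp hT))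
    omega
end

section
/- Let Γ be a finite connected distance-regular graph of diameter d whose shortest odd cycle has length 2d+1. Then the bipartite double D(Γ) is connected and has the same metric dimension as Γ. -/
/-- The bipartite double `D(Γ)` of a graph `Γ`: vertex set `V × Bool`, with
`(v,ε)` adjacent to `(w,δ)` iff `ε ≠ δ` and `v` is adjacent to `w` in `Γ`. -/
def bipartiteDouble {V : Type*} (G : SimpleGraph V) : SimpleGraph (V × Bool) where
  Adj x y := x.2 ≠ y.2 ∧ G.Adj x.1 y.1
  symm := ⟨fun x y h => ⟨h.1.symm, h.2.symm⟩⟩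
  loopless := ⟨fun x h => h.1 rfl⟩

open SimpleGraph

section Aux
variable {V : Type*} {G : SimpleGraph V}



/-- In a path `q` from `x` to `v`, if the edge `s(x,v)` occurs, the path has length 1. -/
lemma path_len_one {x v : V} (q : G.Walk x v) (hq : q.IsPath) (he : s(x, v) ∈ q.edges) :
    q.length = 1 := by
  cases q with
  | nil => simp at he
  | @cons _ y _ h' q' =>
    rw [Walk.edges_cons, List.mem_cons] at he
    rcases he with he | he
    · rw [Sym2.eq_iff] at he
      rcases he with ⟨-, rfl⟩ | ⟨rfl, rfl⟩
      · cases q' with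
        | nil => simp
        | cons h'' q'' =>
          exfalso
          rw [Walk.cons_isPath_iff, Walk.cons_isPath_iff] at hq
          exact hq.1.2 (Walk.end_mem_support _)
      · exact absurd rfl h'.ne
    · rw [Walk.cons_isPath_iff] at hq
      exact absurd (Walk.fst_mem_support_of_mem_edges q' he) hq.2

/-- Any closed walk of odd length contains an odd cycle of no greater length. -/
lemma exists_odd_cycle_le :
    ∀ (n : ℕ) {v : V} (p : G.Walk v v), Odd p.length → p.length ≤ n →
      ∃ (x : V) (c : G.Walk x x), c.IsCycle ∧ Odd c.length ∧ c.length ≤ p.length := by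
  classical
  intro n
  induction n with
  | zero =>
    intro v p hodd hle
    rw [Nat.le_zero] at hle
    rw [hle, Nat.odd_iff] at hodd
    omega
  | succ n ih =>
    intro v p hodd hle
    cases p with
    | nil => rw [Walk.length_nil, Nat.odd_iff] at hodd; omega
    | @cons _ x _ h q =>
      by_cases hnod : q.support.Nodup
      · refine ⟨v, Walk.cons h q, ?_, hodd, le_rfl⟩
        rw [Walk.cons_isCycle_iff]
        refine ⟨(Walk.isPath_def q).mpr hnod, fun he => ?_⟩
        have h1 := path_len_one q ((Walk.isPath_def q).mpr hnod) (by rwa [Sym2.eq_swap] at he)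
        rw [Walk.length_cons, h1, Nat.odd_iff] at hodd
        omega
      · rw [List.nodup_iff_count_le_one] at hnod
        push_neg at hnod
        obtain ⟨y, hy2⟩ := hnod
        have hy : y ∈ q.support := List.count_pos_iff.mp (by omega)
        have hspec := q.take_spec hy
        have hcnt1 := q.count_support_takeUntil_eq_one hy
        have hytail : y ∈ (q.dropUntil y hy).support.tail := by
          have hcq := congrArg (List.count y) (congrArg Walk.support hspec)
          rw [Walk.support_append, List.count_append] at hcq
          exact List.count_pos_iff.mp (by omega)
        cases hq2 : q.dropUntil y hy with
        | nil => rw [hq2] at hytail; simp at hytail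
        | @cons _ z _ h2 q3 =>
          rw [hq2] at hytail
          rw [Walk.support_cons, List.tail_cons] at hytail
          set c : G.Walk y y := Walk.cons h2 (q3.takeUntil y hytail) with hc_def
          set p' : G.Walk v v :=
            Walk.cons h ((q.takeUntil y hy).append (q3.dropUntil y hytail)) with hp'_def
          have e1 := congrArg Walk.length hspec
          rw [Walk.length_append] at e1
          have e2 := congrArg Walk.length hq2
          rw [Walk.length_cons] at e2
          have e3 := congrArg Walk.length (q3.take_spec hytail)
          rw [Walk.length_append] at e3
          have hclen : c.length = (q3.takeUntil y hytail).length + 1 := by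
            rw [hc_def, Walk.length_cons]
          have hplen' : p'.length =
              (q.takeUntil y hy).length + (q3.dropUntil y hytail).length + 1 := by
            rw [hp'_def, Walk.length_cons, Walk.length_append]
          have hptot : (Walk.cons h q).length = q.length + 1 := Walk.length_cons _ _
          have hsum : c.length + p'.length = (Walk.cons h q).length := by omega
          rw [Nat.odd_iff] at hodd
          by_cases hco : Odd c.length
          · obtain ⟨x', c', hcyc, hodd', hle'⟩ := ih c hco (by omega)
            exact ⟨x', c', hcyc, hodd', by omega⟩
          · have hpo : Odd p'.length := by
              rw [Nat.odd_iff] at hco ⊢; omega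
            obtain ⟨x', c', hcyc, hodd', hle'⟩ := ih p' hpo (by omega)
            exact ⟨x', c', hcyc, hodd', by omega⟩




lemma bool_par_step {p q r : Bool} {n : ℕ} (h : p ≠ q) (h2 : (q = r) ↔ Even n) :
    (p = r) ↔ Even (n + 1) := by
  cases p <;> cases q <;> cases r <;>
    simp_all [Nat.even_add_one]

lemma bool_par_step' {p q : Bool} {n : ℕ} (h2 : (p = q) ↔ Even (n + 1)) :
    ((!p) = q) ↔ Even n := by
  cases p <;> cases q <;> simp_all [Nat.even_add_one]

/-- Lift a walk in `G` to the bipartite double, with prescribed endpoint signs of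
the correct parity. -/
lemma lift_walk {u w : V} (p : G.Walk u w) :
    ∀ ε δ : Bool, ((ε = δ) ↔ Even p.length) →
      ∃ q : (bipartiteDouble G).Walk (u, ε) (w, δ), q.length = p.length := by
  induction p with
  | nil =>
    intro ε δ hpar
    have : ε = δ := hpar.mpr (by simp)
    subst this
    exact ⟨Walk.nil, rfl⟩
  | @cons a c w h p ih =>
    intro ε δ hpar
    rw [Walk.length_cons] at hpar
    obtain ⟨q, hq⟩ := ih (!ε) δ (bool_par_step' hpar)
    refine ⟨Walk.cons ⟨by simp, h⟩ q, ?_⟩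
    exact congrArg (· + 1) hq

/-- Project a walk in the bipartite double down to `G`. -/
lemma proj_walk : ∀ {a b : V × Bool} (q : (bipartiteDouble G).Walk a b),
    ∃ p : G.Walk a.1 b.1, p.length = q.length ∧ ((a.2 = b.2) ↔ Even q.length) := by
  intro a b q
  induction q with
  | nil => exact ⟨Walk.nil, rfl, by simp⟩
  | @cons a c b h q ih =>
    obtain ⟨p, hlen, hpar⟩ := ih
    refine ⟨Walk.cons h.2 p, ?_, ?_⟩
    · simp [hlen]
    · rw [Walk.length_cons]
      exact bool_par_step h.1 hpar



lemma step_down (hconn : G.Connected) {u x : V} {i : ℕ} (h : G.dist u x = i + 1) :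
    ∃ y, G.Adj y x ∧ G.dist u y = i := by
  obtain ⟨p, hp⟩ := hconn.exists_walk_length_eq_dist u x
  have hux : u ≠ x := by
    rintro rfl
    rw [SimpleGraph.dist_self] at h; omega
  obtain ⟨y, h', q, hq⟩ := Walk.exists_eq_cons_of_ne (Ne.symm hux) p.reverse
  have hqlen : q.length = i := by
    have := congrArg Walk.length hq
    rw [Walk.length_cons, Walk.length_reverse, hp, h] at this
    omega
  have h1 : G.dist u y ≤ i := by
    have := SimpleGraph.dist_le q.reverse
    rwa [Walk.length_reverse, hqlen] at this
  have h2 : G.dist u x ≤ G.dist u y + 1 := by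
    have htri := hconn.dist_triangle (u := u) (v := y) (w := x)
    have : G.dist y x = 1 := SimpleGraph.dist_eq_one_iff_adj.mpr h'.symm
    omega
  exact ⟨y, h'.symm, by omega⟩

lemma exists_pair_dist (hconn : G.Connected) [Nonempty V] {d : ℕ} (hdiam : G.diam = d) :
    ∀ i ≤ d, ∃ u x : V, G.dist u x = i := by
  have H : ∀ k : ℕ, ∃ u x : V, G.dist u x = d - k := by
    intro k
    induction k with
    | zero =>
      obtain ⟨u, x, h⟩ := G.exists_dist_eq_diam
      exact ⟨u, x, by omega⟩
    | succ k ih =>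
      obtain ⟨u, x, h⟩ := ih
      by_cases h0 : d - k = 0
      · exact ⟨u, u, by rw [SimpleGraph.dist_self]; omega⟩
      · have : G.dist u x = (d - (k + 1)) + 1 := by omega
        obtain ⟨y, -, hy⟩ := step_down hconn this
        exact ⟨u, y, hy⟩
  intro i hi
  obtain ⟨u, x, h⟩ := H (d - i)
  exact ⟨u, x, by omega⟩

lemma step_up [Fintype V] (hconn : G.Connected) [Nonempty V] {d : ℕ} (hdiam : G.diam = d)
    {b : ℕ → ℕ}
    (hb : ∀ i ≤ d, ∀ u v : V, G.dist u v = i →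
      {w : V | G.Adj v w ∧ G.dist u w = i + 1}.ncard = b i) :
    ∀ i < d, ∀ u x : V, G.dist u x = i → ∃ y, G.Adj x y ∧ G.dist u y = i + 1 := by
  intro i hi u x hx
  obtain ⟨u', x', hx'⟩ := exists_pair_dist hconn hdiam (i + 1) (by omega)
  obtain ⟨y', hadj', hy'⟩ := step_down hconn hx'
  have h1 := hb i (le_of_lt hi) u' y' hy'
  have h2 := hb i (le_of_lt hi) u x hx
  have hbne : b i ≠ 0 := by
    rw [← h1]
    have hne1 : {w : V | G.Adj y' w ∧ G.dist u' w = i + 1}.Nonempty := ⟨x', hadj', hx'⟩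
    exact ((Set.ncard_pos (Set.toFinite _)).mpr hne1).ne'
  have : {w : V | G.Adj x w ∧ G.dist u w = i + 1}.Nonempty := by
    rw [← Set.ncard_pos (Set.toFinite _)]
    omega
  obtain ⟨y, hy⟩ := this
  exact ⟨y, hy.1, hy.2⟩

/-- Along any walk of suitable parity there is an edge whose endpoints are equidistant
from `u`. -/
lemma exists_flat_edge_aux (hconn : G.Connected) (u : V) :
    ∀ {a z : V} (p : G.Walk a z), Odd (p.length + G.dist u a + G.dist u z) →
      ∃ x y, G.Adj x y ∧ G.dist u x = G.dist u y := by
  intro a z p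
  induction p with
  | nil =>
    intro hodd
    rw [Nat.odd_iff] at hodd
    simp at hodd
    omega
  | @cons a c z h p ih =>
    intro hodd
    by_cases heq : G.dist u a = G.dist u c
    · exact ⟨a, c, h, heq⟩
    · apply ih
      have h1 : G.dist u c ≤ G.dist u a + 1 := by
        have := hconn.dist_triangle (u := u) (v := a) (w := c)
        have h2 : G.dist a c = 1 := SimpleGraph.dist_eq_one_iff_adj.mpr h
        omega
      have h2 : G.dist u a ≤ G.dist u c + 1 := by
        have := hconn.dist_triangle (u := u) (v := c) (w := a)
        have h3 : G.dist c a = 1 := SimpleGraph.dist_eq_one_iff_adj.mpr h.symm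
        omega
      rw [Walk.length_cons] at hodd
      rw [Nat.odd_iff] at hodd ⊢
      omega



lemma neighbor_count_at_d [Fintype V] (hconn : G.Connected) {d : ℕ} (hd1 : 1 ≤ d)
    (hdist_le : ∀ u w : V, G.dist u w ≤ d)
    {b c : ℕ → ℕ}
    (hb : ∀ i ≤ d, ∀ u v : V, G.dist u v = i →
      {w : V | G.Adj v w ∧ G.dist u w = i + 1}.ncard = b i)
    (hc : ∀ i ≤ d, ∀ u v : V, G.dist u v = i →
      {w : V | G.Adj v w ∧ G.dist u w = i - 1}.ncard = c i)
    {u p : V} (hup : G.dist u p = d) :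
    b 0 = c d + {z : V | G.Adj p z ∧ G.dist u z = d}.ncard := by
  have hdeg : {z : V | G.Adj p z}.ncard = b 0 := by
    rw [← hb 0 (by omega) p p (SimpleGraph.dist_self)]
    congr 1
    ext z
    simp only [Set.mem_setOf_eq, zero_add]
    constructor
    · intro hz; exact ⟨hz, SimpleGraph.dist_eq_one_iff_adj.mpr hz⟩
    · intro hz; exact hz.1
  have hA := hc d le_rfl u p hup
  have hunion : {z : V | G.Adj p z} =
      {z : V | G.Adj p z ∧ G.dist u z = d - 1} ∪ {z : V | G.Adj p z ∧ G.dist u z = d} := by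
    ext z
    simp only [Set.mem_setOf_eq, Set.mem_union]
    constructor
    · intro hz
      have h1 : G.dist u z ≤ d := hdist_le u z
      have h2 : G.dist u p ≤ G.dist u z + 1 := by
        have := hconn.dist_triangle (u := u) (v := z) (w := p)
        have h3 : G.dist z p = 1 := SimpleGraph.dist_eq_one_iff_adj.mpr hz.symm
        omega
      rcases Nat.lt_or_ge (G.dist u z) d with h | h
      · exact Or.inl ⟨hz, by omega⟩
      · exact Or.inr ⟨hz, by omega⟩
    · rintro (hz | hz) <;> exact hz.1
  have hdisj : Disjoint {z : V | G.Adj p z ∧ G.dist u z = d - 1}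
      {z : V | G.Adj p z ∧ G.dist u z = d} := by
    rw [Set.disjoint_left]
    rintro z ⟨-, h1⟩ ⟨-, h2⟩
    omega
  have := Set.ncard_union_eq hdisj (Set.toFinite _) (Set.toFinite _)
  rw [← hunion] at this
  rw [← hdeg, this, hA]

lemma flat_edge_at_d [Fintype V] (hconn : G.Connected) {d : ℕ} (hd1 : 1 ≤ d)
    (hdist_le : ∀ u w : V, G.dist u w ≤ d)
    {b c : ℕ → ℕ}
    (hb : ∀ i ≤ d, ∀ u v : V, G.dist u v = i →
      {w : V | G.Adj v w ∧ G.dist u w = i + 1}.ncard = b i)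
    (hc : ∀ i ≤ d, ∀ u v : V, G.dist u v = i →
      {w : V | G.Adj v w ∧ G.dist u w = i - 1}.ncard = c i)
    (hwit : ∃ u₀ x₀ y₀ : V, G.Adj x₀ y₀ ∧ G.dist u₀ x₀ = d ∧ G.dist u₀ y₀ = d) :
    ∀ u p : V, G.dist u p = d → ∃ p', G.Adj p p' ∧ G.dist u p' = d := by
  intro u p hup
  obtain ⟨u₀, x₀, y₀, hadj₀, hx₀, hy₀⟩ := hwit
  have h1 := neighbor_count_at_d hconn hd1 hdist_le hb hc hx₀
  have h2 := neighbor_count_at_d hconn hd1 hdist_le hb hc hup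
  have hne₀ : {z : V | G.Adj x₀ z ∧ G.dist u₀ z = d}.Nonempty := ⟨y₀, hadj₀, hy₀⟩
  have hpos₀ := (Set.ncard_pos (Set.toFinite _)).mpr hne₀
  have : {z : V | G.Adj p z ∧ G.dist u z = d}.Nonempty := by
    rw [← Set.ncard_pos (Set.toFinite _)]
    omega
  obtain ⟨z, hz⟩ := this
  exact ⟨z, hz.1, hz.2⟩

lemma exists_opp_walk [Fintype V] (hconn : G.Connected) [Nonempty V] {d : ℕ}
    (hdiam : G.diam = d) (hdist_le : ∀ u w : V, G.dist u w ≤ d)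
    {b : ℕ → ℕ}
    (hb : ∀ i ≤ d, ∀ u v : V, G.dist u v = i →
      {w : V | G.Adj v w ∧ G.dist u w = i + 1}.ncard = b i)
    (flat : ∀ u p : V, G.dist u p = d → ∃ p', G.Adj p p' ∧ G.dist u p' = d) :
    ∀ u w : V, ∃ p : G.Walk u w, p.length = 2 * d + 1 - G.dist u w := by
  intro u w
  have climb : ∀ k, k ≤ d - G.dist u w →
      ∃ (x : V) (q : G.Walk w x), q.length = k ∧ G.dist u x = G.dist u w + k := by
    intro k
    induction k with
    | zero => intro _; exact ⟨w, Walk.nil, rfl, by omega⟩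
    | succ k ih =>
      intro hk
      obtain ⟨x, q, hql, hqd⟩ := ih (by omega)
      have hlt : G.dist u w + k < d := by
        have := hdist_le u w; omega
      obtain ⟨y, hady, hdy⟩ := step_up hconn hdiam hb (G.dist u w + k) hlt u x hqd
      exact ⟨y, q.concat hady, by simp [Walk.length_concat, hql], by omega⟩
  obtain ⟨x, q, hql, hqd⟩ := climb (d - G.dist u w) le_rfl
  have hxd : G.dist u x = d := by have := hdist_le u w; omega
  obtain ⟨x', hadx, hdx'⟩ := flat u x hxd
  obtain ⟨r, hr⟩ := hconn.exists_walk_length_eq_dist u x'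
  refine ⟨r.append (Walk.cons hadx.symm q.reverse), ?_⟩
  rw [Walk.length_append, Walk.length_cons, Walk.length_reverse, hr, hdx', hql]
  have := hdist_le u w
  omega

lemma lower_opp (hconn : G.Connected) {d : ℕ}
    (hodd_ge : ∀ (v : V) (p : G.Walk v v), Odd p.length → 2 * d + 1 ≤ p.length) :
    ∀ (u w : V) (p : G.Walk u w), ¬ Even (p.length + G.dist u w) →
      2 * d + 1 ≤ p.length + G.dist u w := by
  intro u w p hne
  obtain ⟨g, hg⟩ := hconn.exists_walk_length_eq_dist w u
  have hg' : g.length = G.dist u w := by rw [hg, SimpleGraph.dist_comm]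
  have hlen : (p.append g).length = p.length + G.dist u w := by
    rw [Walk.length_append, hg']
  have := hodd_ge u (p.append g) (by
    rw [Nat.odd_iff]
    rw [Nat.even_iff] at hne
    omega)
  omega

lemma proj_walk' {u w : V} {ε δ : Bool} (q : (bipartiteDouble G).Walk (u, ε) (w, δ)) :
    ∃ p : G.Walk u w, p.length = q.length ∧ ((ε = δ) ↔ Even q.length) :=
  proj_walk q

end Aux

/-- Bailey's theorem: if `Γ` is a finite connected distance-regular graph of
diameter `d` whose shortest odd cycle has length `2d+1`, then the bipartite
double `D(Γ)` is connected and has the same metric dimension as `Γ`. -/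
theorem bipartiteDouble_metricDim {V : Type*} [Fintype V] (G : SimpleGraph V)
    (hconn : G.Connected) (d : ℕ) (hdiam : G.diam = d)
    -- distance-regularity: intersection numbers `b i` and `c i`
    (b c : ℕ → ℕ)
    (hb : ∀ i ≤ d, ∀ u v : V, G.dist u v = i →
      {w : V | G.Adj v w ∧ G.dist u w = i + 1}.ncard = b i)
    (hc : ∀ i ≤ d, ∀ u v : V, G.dist u v = i →
      {w : V | G.Adj v w ∧ G.dist u w = i - 1}.ncard = c i)
    -- the shortest odd cycle has length `2d+1`
    (hcycle : ∃ (v : V) (w : G.Walk v v), w.IsCycle ∧ w.length = 2 * d + 1)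
    (hmin : ∀ (v : V) (w : G.Walk v v), w.IsCycle → Odd w.length →
      2 * d + 1 ≤ w.length) :
    (bipartiteDouble G).Connected ∧
      metricDim (bipartiteDouble G) = metricDim G := by
  classical
  obtain ⟨v₀, cyc, hcyc, hcyclen⟩ := hcycle
  have hd1 : 1 ≤ d := by have := hcyc.three_le_length; omega
  have hVne : Nonempty V := ⟨v₀⟩
  have hdne : G.diam ≠ 0 := by rw [hdiam]; omega
  have hediam := G.ediam_ne_top_of_diam_ne_zero hdne
  have hdist_le : ∀ u w : V, G.dist u w ≤ d := fun u w =>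
    hdiam ▸ SimpleGraph.dist_le_diam hediam
  obtain ⟨w₁, hadj01⟩ : ∃ w, G.Adj v₀ w := by
    cases cyc with
    | nil => exfalso; rw [Walk.length_nil] at hcyclen; omega
    | cons h _ => exact ⟨_, h⟩
  have hodd_ge : ∀ (v : V) (p : G.Walk v v), Odd p.length → 2 * d + 1 ≤ p.length := by
    intro v p hp
    obtain ⟨x, c', hc', ho', hle'⟩ := exists_odd_cycle_le p.length p hp le_rfl
    exact le_trans (hmin x c' hc' ho') hle'
  -- a "flat" edge at distance `d` from some base point
  have hwit : ∃ u₀ x₀ y₀ : V, G.Adj x₀ y₀ ∧ G.dist u₀ x₀ = d ∧ G.dist u₀ y₀ = d := by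
    obtain ⟨x, y, hxy, hdeq⟩ := exists_flat_edge_aux hconn v₀ cyc (by
      rw [SimpleGraph.dist_self, hcyclen, Nat.odd_iff]; omega)
    set i := G.dist v₀ x with hi
    have hil : i ≤ d := hdist_le _ _
    rcases Nat.lt_or_ge i d with hlt | hge
    · exfalso
      obtain ⟨px, hpx⟩ := hconn.exists_walk_length_eq_dist v₀ x
      obtain ⟨py, hpy⟩ := hconn.exists_walk_length_eq_dist y v₀
      have hpylen : py.length = i := by
        rw [hpy, SimpleGraph.dist_comm]; exact hdeq.symm
      have hbig := hodd_ge v₀ (px.append (Walk.cons hxy py)) (by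
        rw [Nat.odd_iff, Walk.length_append, Walk.length_cons, hpx, hpylen, ← hi]
        omega)
      rw [Walk.length_append, Walk.length_cons, hpx, hpylen, ← hi] at hbig
      omega
    · exact ⟨v₀, x, y, hxy, by omega, by omega⟩
  have flat := flat_edge_at_d hconn hd1 hdist_le hb hc hwit
  have hopp := exists_opp_walk hconn hdiam hdist_le hb flat
  have h21 : ¬ Even (2 * d + 1) := by rw [Nat.even_iff]; omega
  -- reachability in the double
  have hDreach : ∀ a b : V × Bool, (bipartiteDouble G).Reachable a b := by
    rintro ⟨u, ε⟩ ⟨w, δ⟩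
    by_cases hpar : (ε = δ) ↔ Even (G.dist u w)
    · obtain ⟨p, hp⟩ := hconn.exists_walk_length_eq_dist u w
      obtain ⟨q, -⟩ := lift_walk p ε δ (by rw [hp]; exact hpar)
      exact ⟨q⟩
    · obtain ⟨p, hp⟩ := hopp u w
      have hple := hdist_le u w
      obtain ⟨q, -⟩ := lift_walk p ε δ (by
        rw [hp, Nat.even_sub (by omega : G.dist u w ≤ 2 * d + 1)]
        tauto)
      exact ⟨q⟩
  have hDconn : (bipartiteDouble G).Connected := by
    rw [connected_iff]
    exact ⟨hDreach, ⟨(v₀, true)⟩⟩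
  -- distance formula in the double
  have hF : ∀ (u w : V) (ε δ : Bool), (bipartiteDouble G).dist (u, ε) (w, δ) =
      if (ε = δ) ↔ Even (G.dist u w) then G.dist u w else 2 * d + 1 - G.dist u w := by
    intro u w ε δ
    obtain ⟨q₀, hq₀⟩ := (hDreach (u, ε) (w, δ)).exists_walk_length_eq_dist
    obtain ⟨p₀, hp₀len, hp₀par⟩ := proj_walk' q₀
    have hple := hdist_le u w
    by_cases hpar : (ε = δ) ↔ Even (G.dist u w)
    · rw [if_pos hpar]
      apply le_antisymm
      · obtain ⟨p, hp⟩ := hconn.exists_walk_length_eq_dist u w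
        obtain ⟨q, hqlen⟩ := lift_walk p ε δ (by rw [hp]; exact hpar)
        have := SimpleGraph.dist_le q
        omega
      · have := SimpleGraph.dist_le p₀
        omega
    · rw [if_neg hpar]
      apply le_antisymm
      · obtain ⟨p, hp⟩ := hopp u w
        obtain ⟨q, hqlen⟩ := lift_walk p ε δ (by
          rw [hp, Nat.even_sub (by omega : G.dist u w ≤ 2 * d + 1)]
          tauto)
        have := SimpleGraph.dist_le q
        omega
      · have hp1 : (ε = δ) ↔ Even p₀.length := by rw [hp₀len]; exact hp₀par
        have hodd : ¬ Even (p₀.length + G.dist u w) := by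
          rw [Nat.even_add]
          intro hco
          exact hpar (hp1.trans hco)
        have := lower_opp hconn hodd_ge u w p₀ hodd
        omega
  -- injectivity and parity of the distance function
  have key1 : ∀ (ε : Bool) (j j' : ℕ), j ≤ d → j' ≤ d →
      (if (ε = true) ↔ Even j then j else 2 * d + 1 - j) =
        (if (ε = true) ↔ Even j' then j' else 2 * d + 1 - j') → j = j' := by
    intro ε j j' hj hj'
    split_ifs <;> omega
  have key2 : ∀ (ε : Bool) (j : ℕ), j ≤ d →
      (Even (if (ε = true) ↔ Even j then j else 2 * d + 1 - j) ↔ (ε = true)) := by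
    intro ε j hj
    split_ifs with h1
    · exact h1.symm
    · rw [Nat.even_sub (by omega : j ≤ 2 * d + 1)]
      tauto
  -- transfer of resolving sets
  have trans1 : ∀ S : Finset (V × Bool), IsResolvingSet (bipartiteDouble G) ↑S →
      IsResolvingSet G ↑(S.image Prod.fst) := by
    intro S hS u w hne
    obtain ⟨⟨v, ι⟩, hmem, hd'⟩ := hS (u, true) (w, true) (by simp [hne])
    refine ⟨v, Finset.mem_coe.mpr (Finset.mem_image.mpr ⟨(v, ι), hmem, rfl⟩), ?_⟩
    intro hcontra
    apply hd'
    rw [hF u v true ι, hF w v true ι, hcontra]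
  have trans2 : ∀ S : Finset V, IsResolvingSet G ↑S →
      IsResolvingSet (bipartiteDouble G) ↑(S.image (fun v => (v, true))) := by
    intro S hS
    have hSne : S.Nonempty := by
      obtain ⟨v', hv', -⟩ := hS v₀ w₁ hadj01.ne
      exact ⟨v', hv'⟩
    rintro ⟨u, ε⟩ ⟨w, δ⟩ hne
    by_cases heps : ε = δ
    · subst heps
      have hne' : u ≠ w := fun h => hne (by rw [h])
      obtain ⟨v, hv, hdv⟩ := hS u w hne'
      refine ⟨(v, true), Finset.mem_coe.mpr (Finset.mem_image_of_mem _ hv), ?_⟩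
      rw [hF u v ε true, hF w v ε true]
      intro hcontra
      exact hdv (key1 ε _ _ (hdist_le u v) (hdist_le w v) hcontra)
    · obtain ⟨v, hv⟩ := hSne
      refine ⟨(v, true), Finset.mem_coe.mpr (Finset.mem_image_of_mem _ hv), ?_⟩
      rw [hF u v ε true, hF w v δ true]
      intro hcontra
      apply heps
      have e1 := key2 ε (G.dist u v) (hdist_le u v)
      have e2 := key2 δ (G.dist w v) (hdist_le w v)
      rw [hcontra] at e1
      exact Bool.eq_iff_iff.mpr (e1.symm.trans e2)
  -- universal resolving sets
  have hresG : IsResolvingSet G ↑(Finset.univ : Finset V) := by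
    intro u w hne
    refine ⟨u, by simp, ?_⟩
    rw [SimpleGraph.dist_self]
    have := hconn.pos_dist_of_ne (Ne.symm hne)
    omega
  have hresD : IsResolvingSet (bipartiteDouble G) ↑(Finset.univ : Finset (V × Bool)) := by
    intro u w hne
    refine ⟨u, by simp, ?_⟩
    rw [SimpleGraph.dist_self]
    have := hDconn.pos_dist_of_ne (Ne.symm hne)
    omega
  have hAne : Set.Nonempty {n : ℕ | ∃ S : Finset V, IsResolvingSet G ↑S ∧ S.card = n} :=
    ⟨_, Finset.univ, hresG, rfl⟩
  have hBne : Set.Nonempty {n : ℕ | ∃ S : Finset (V × Bool),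
      IsResolvingSet (bipartiteDouble G) ↑S ∧ S.card = n} :=
    ⟨_, Finset.univ, hresD, rfl⟩
  refine ⟨hDconn, le_antisymm ?_ ?_⟩
  · obtain ⟨S, hS, hcard⟩ := Nat.sInf_mem hAne
    have hinj : Function.Injective (fun v : V => (v, true)) := by
      intro a b h
      simpa using congrArg Prod.fst h
    have hle : metricDim (bipartiteDouble G) ≤ (S.image (fun v => (v, true))).card :=
      Nat.sInf_le ⟨_, trans2 S hS, rfl⟩
    rw [Finset.card_image_of_injective _ hinj, hcard] at hle
    exact hle
  · obtain ⟨S, hS, hcard⟩ := Nat.sInf_mem hBne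
    have hle : metricDim G ≤ (S.image Prod.fst).card :=
      Nat.sInf_le ⟨_, trans1 S hS, rfl⟩
    calc metricDim G ≤ (S.image Prod.fst).card := hle
      _ ≤ S.card := Finset.card_image_le
      _ = metricDim (bipartiteDouble G) := hcard
end

section
/- For every integer n ≥ 3, the metric dimension of the graph K_{n,n} − I, obtained from the complete bipartite graph K_{n,n} by deleting a perfect matching, equals n − 1. -/
/-- The graph `K_{n,n} − I`: the complete bipartite graph on two copies of
`{1,…,n}` with a perfect matching removed.  Vertex `(i,ε)` is adjacent to
`(j,δ)` iff `ε ≠ δ` and `i ≠ j`. -/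
def completeBipartiteMinusMatching (n : ℕ) : SimpleGraph (Fin n × Bool) where
  Adj x y := x.2 ≠ y.2 ∧ x.1 ≠ y.1
  symm := ⟨fun x y h => ⟨h.1.symm, h.2.symm⟩⟩
  loopless := ⟨fun x h => h.1 rfl⟩

namespace KnnIAux

open SimpleGraph

lemma walk_parity {n : ℕ} {x y : Fin n × Bool}
    (p : (completeBipartiteMinusMatching n).Walk x y) :
    (x.2 = y.2) ↔ Even p.length := by
  induction p with
  | nil => simp
  | @cons a b c h p ih =>
    have hab : a.2 ≠ b.2 := h.1
    simp only [Walk.length_cons, Nat.even_add_one, ← ih]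
    revert hab
    cases a.2 <;> cases b.2 <;> simp

/-- Two distinct elements avoiding a given one. -/
lemma exists_two {n : ℕ} (hn : 3 ≤ n) (c : Fin n) :
    ∃ a b : Fin n, a ≠ c ∧ b ≠ c ∧ a ≠ b := by
  have h : 1 < (Finset.univ.erase c).card := by
    rw [Finset.card_erase_of_mem (Finset.mem_univ c), Finset.card_univ, Fintype.card_fin]
    omega
  obtain ⟨a, b, ha, hb, hab⟩ := Finset.one_lt_card_iff.mp h
  exact ⟨a, b, Finset.ne_of_mem_erase ha, Finset.ne_of_mem_erase hb, hab⟩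

lemma dist_eq {n : ℕ} (hn : 3 ≤ n) (x y : Fin n × Bool) :
    (completeBipartiteMinusMatching n).dist x y =
      if x = y then 0 else if x.1 = y.1 then 3 else if x.2 = y.2 then 2 else 1 := by
  by_cases hxy : x = y
  · simp [hxy]
  by_cases h1 : x.1 = y.1
  · -- same index, different side: distance 3
    have h2 : x.2 ≠ y.2 := fun h => hxy (Prod.ext h1 h)
    obtain ⟨a, b, hac, hbc, hab⟩ := exists_two hn x.1
    have hadj1 : (completeBipartiteMinusMatching n).Adj x (a, !x.2) :=
      ⟨by simp, fun h => hac h.symm⟩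
    have hadj2 : (completeBipartiteMinusMatching n).Adj (a, !x.2) (b, x.2) :=
      ⟨by simp, hab⟩
    have hadj3 : (completeBipartiteMinusMatching n).Adj (b, x.2) y :=
      ⟨by simpa using h2, by rw [← h1]; exact hbc⟩
    have hle : (completeBipartiteMinusMatching n).dist x y ≤ 3 := by
      simpa using dist_le (Walk.cons hadj1 (Walk.cons hadj2 (Walk.cons hadj3 Walk.nil)))
    have hreach : (completeBipartiteMinusMatching n).Reachable x y :=
      ⟨Walk.cons hadj1 (Walk.cons hadj2 (Walk.cons hadj3 Walk.nil))⟩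
    obtain ⟨q, hq⟩ := hreach.exists_walk_length_eq_dist
    have hodd : ¬ Even ((completeBipartiteMinusMatching n).dist x y) := by
      rw [← hq]; exact fun h => h2 ((walk_parity q).mpr h)
    have hne1 : (completeBipartiteMinusMatching n).dist x y ≠ 1 :=
      fun h => (SimpleGraph.dist_eq_one_iff_adj.mp h).2 h1
    rw [Nat.even_iff] at hodd
    simp only [hxy, h1, if_false, if_true]
    omega
  · by_cases h2 : x.2 = y.2
    · -- same side, different index: distance 2
      obtain ⟨a, ha⟩ := Finset.exists_mem_ne (s := Finset.univ.erase y.1)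
        (by rw [Finset.card_erase_of_mem (Finset.mem_univ y.1), Finset.card_univ,
              Fintype.card_fin]; omega) x.1
      have hay : a ≠ y.1 := Finset.ne_of_mem_erase ha.1
      have hax : a ≠ x.1 := ha.2
      have hadj1 : (completeBipartiteMinusMatching n).Adj x (a, !x.2) :=
        ⟨by simp, fun h => hax h.symm⟩
      have hadj2 : (completeBipartiteMinusMatching n).Adj (a, !x.2) y :=
        ⟨by rw [← h2]; simp, hay⟩
      have hle : (completeBipartiteMinusMatching n).dist x y ≤ 2 := by
        simpa using dist_le (Walk.cons hadj1 (Walk.cons hadj2 Walk.nil))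
      have hpos : 0 < (completeBipartiteMinusMatching n).dist x y :=
        SimpleGraph.Reachable.pos_dist_of_ne ⟨Walk.cons hadj1 (Walk.cons hadj2 Walk.nil)⟩ hxy
      have hne1 : (completeBipartiteMinusMatching n).dist x y ≠ 1 :=
        fun h => (SimpleGraph.dist_eq_one_iff_adj.mp h).1 h2
      simp only [hxy, h1, h2, if_false, if_true]
      omega
    · -- different side, different index: adjacent
      have : (completeBipartiteMinusMatching n).dist x y = 1 :=
        SimpleGraph.dist_eq_one_iff_adj.mpr ⟨h2, h1⟩
      simp [hxy, h1, h2, this]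

lemma lower {n : ℕ} (hn : 3 ≤ n) (S : Finset (Fin n × Bool))
    (hS : IsResolvingSet (completeBipartiteMinusMatching n) ↑S) :
    n - 1 ≤ S.card := by
  have hT : n - 1 ≤ (S.image Prod.fst).card := by
    by_contra h
    push_neg at h
    have hcompl : 1 < (S.image Prod.fst)ᶜ.card := by
      have := Finset.card_compl (S.image Prod.fst)
      rw [Fintype.card_fin] at this
      omega
    obtain ⟨a, b, ha, hb, hab⟩ := Finset.one_lt_card_iff.mp hcompl
    rw [Finset.mem_compl] at ha hb
    obtain ⟨v, hv, hd⟩ := hS (a, true) (b, true) (by simp [hab])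
    have hva : a ≠ v.1 := fun h =>
      ha (Finset.mem_image.mpr ⟨v, hv, h.symm⟩)
    have hvb : b ≠ v.1 := fun h =>
      hb (Finset.mem_image.mpr ⟨v, hv, h.symm⟩)
    apply hd
    rw [dist_eq hn, dist_eq hn]
    have e1 : (a, true) ≠ v := fun h => hva (congrArg Prod.fst h)
    have e2 : (b, true) ≠ v := fun h => hvb (congrArg Prod.fst h)
    simp [e1, e2, hva, hvb]
  exact hT.trans Finset.card_image_le

lemma upper {n : ℕ} (hn : 3 ≤ n) :
    ∃ S : Finset (Fin n × Bool),
      IsResolvingSet (completeBipartiteMinusMatching n) ↑S ∧ S.card = n - 1 := by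
  set i₀ : Fin n := ⟨n - 1, by omega⟩ with hi₀
  refine ⟨(Finset.univ.erase i₀).image (fun i => (i, true)), ?_, ?_⟩
  · rintro ⟨a, α⟩ ⟨b, β⟩ huw
    have key : ∀ i : Fin n, i ≠ i₀ →
        ((i : Fin n), true) ∈ ↑((Finset.univ.erase i₀).image
          (fun i : Fin n => (i, true))) := by
      intro i hi
      simp [Finset.mem_image, hi]
    by_cases h1 : a = b
    · -- same index, different side: pick any third index
      have h2 : α ≠ β := by
        intro h; exact huw (by rw [h1, h])
      obtain ⟨j, hj⟩ := Finset.exists_mem_ne (s := Finset.univ.erase i₀)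
        (by rw [Finset.card_erase_of_mem (Finset.mem_univ i₀), Finset.card_univ,
              Fintype.card_fin]; omega) a
      have hji : j ≠ i₀ := Finset.ne_of_mem_erase hj.1
      have hja : a ≠ j := fun h => hj.2 h.symm
      have hjb : b ≠ j := h1 ▸ hja
      refine ⟨(j, true), key j hji, ?_⟩
      rw [dist_eq hn, dist_eq hn]
      simp only [Prod.mk.injEq, hja, hjb, false_and, if_false]
      revert h2
      cases α <;> cases β <;> simp
    · -- different indices: one of them is not i₀
      rcases ne_or_eq a i₀ with hu | hu
      · refine ⟨(a, true), key a hu, ?_⟩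
        rw [dist_eq hn, dist_eq hn]
        have hba : b ≠ a := fun h => h1 h.symm
        simp only [Prod.mk.injEq, hba, false_and, if_false]
        cases α <;> cases β <;> simp
      · have hw : b ≠ i₀ := fun h => h1 (hu.trans h.symm)
        refine ⟨(b, true), key b hw, ?_⟩
        rw [dist_eq hn, dist_eq hn]
        simp only [Prod.mk.injEq, h1, false_and, if_false]
        cases α <;> cases β <;> simp
  · rw [Finset.card_image_of_injective _ (fun a b h => congrArg Prod.fst h),
      Finset.card_erase_of_mem (Finset.mem_univ i₀), Finset.card_univ, Fintype.card_fin]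

end KnnIAux

theorem metricDim_completeBipartiteMinusMatching (n : ℕ) (hn : 3 ≤ n) :
    metricDim (completeBipartiteMinusMatching n) = n - 1 := by
  obtain ⟨S₀, hres, hcard⟩ := KnnIAux.upper hn
  have hmem : n - 1 ∈ {m : ℕ | ∃ S : Finset (Fin n × Bool),
      IsResolvingSet (completeBipartiteMinusMatching n) (↑S) ∧ S.card = m} :=
    ⟨S₀, hres, hcard⟩
  refine le_antisymm (Nat.sInf_le hmem) (le_csInf ⟨_, hmem⟩ ?_)
  rintro m ⟨S, hS, rfl⟩
  exact KnnIAux.lower hn S hS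
end

section
/- The 5-dimensional hypercube Q_5 = H(5,2) has metric dimension 4. -/
open Finset in
lemma hammingGraph_adj_iff {d q : ℕ} {x y : Fin d → Fin q} :
    (hammingGraph d q).Adj x y ↔ hammingDist x y = 1 := by
  rw [hammingDist, Finset.card_eq_one]
  constructor
  · rintro ⟨i, hi, hu⟩
    refine ⟨i, Finset.eq_singleton_iff_unique_mem.2 ⟨by simpa using hi, fun j hj => ?_⟩⟩
    exact hu j (by simpa using hj)
  · rintro ⟨a, ha⟩
    refine ⟨a, ?_, fun j hj => ?_⟩
    · have : a ∈ ({a} : Finset (Fin d)) := Finset.mem_singleton_self a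
      rw [← ha] at this; simpa using this
    · have : j ∈ ({a} : Finset (Fin d)) := by rw [← ha]; simpa using hj
      simpa using this

lemma exists_walk_hamming {d q : ℕ} :
    ∀ (n : ℕ) (x y : Fin d → Fin q), hammingDist x y = n →
      ∃ p : (hammingGraph d q).Walk x y, p.length = n := by
  intro n
  induction n with
  | zero =>
    intro x y h
    obtain rfl := hammingDist_eq_zero.1 h
    exact ⟨SimpleGraph.Walk.nil, rfl⟩
  | succ n ih =>
    intro x y h
    have hne : x ≠ y := by
      intro hxy; subst hxy; simp [hammingDist_self] at h
    obtain ⟨i, hi⟩ : ∃ i, x i ≠ y i := by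
      by_contra hc
      push_neg at hc
      exact hne (funext hc)
    set x' := Function.update x i (y i) with hx'
    have hadj : (hammingGraph d q).Adj x x' := by
      refine ⟨i, ?_, fun j hj => ?_⟩
      · simpa [hx', Function.update_self] using hi
      · by_contra hji
        exact hj (by simp [hx', Function.update_of_ne hji])
    have hfil : (Finset.univ.filter fun j => x' j ≠ y j) =
        (Finset.univ.filter fun j => x j ≠ y j).erase i := by
      ext j
      by_cases hji : j = i
      · subst hji
        simp [hx', Function.update_self]
      · simp [hx', Function.update_of_ne hji, hji]
    have hmem : i ∈ Finset.univ.filter fun j => x j ≠ y j := by simpa using hi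
    have hd' : hammingDist x' y = n := by
      have := Finset.card_erase_of_mem hmem
      rw [hammingDist, hfil, this]
      rw [hammingDist] at h
      omega
    obtain ⟨p, hp⟩ := ih x' y hd'
    exact ⟨SimpleGraph.Walk.cons hadj p, by simp [hp]⟩

lemma hammingDist_le_walk_length {d q : ℕ} {x y : Fin d → Fin q}
    (p : (hammingGraph d q).Walk x y) : hammingDist x y ≤ p.length := by
  induction p with
  | nil => simp [hammingDist_self]
  | @cons u v w h p ih =>
    calc hammingDist u w ≤ hammingDist u v + hammingDist v w := hammingDist_triangle _ _ _
    _ ≤ 1 + p.length := by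
        have := hammingGraph_adj_iff.1 h
        omega
    _ = (SimpleGraph.Walk.cons h p).length := by simp [add_comm]

lemma hammingGraph_dist {d q : ℕ} (x y : Fin d → Fin q) :
    (hammingGraph d q).dist x y = hammingDist x y := by
  obtain ⟨p, hp⟩ := exists_walk_hamming (hammingDist x y) x y rfl
  refine le_antisymm (hp ▸ SimpleGraph.dist_le p) ?_
  obtain ⟨p', hp'⟩ := SimpleGraph.Reachable.exists_walk_length_eq_dist ⟨p⟩
  exact hp' ▸ hammingDist_le_walk_length p'

abbrev V5 : Type := Fin 5 → Fin 2

lemma hd_translate (t x y : V5) : hammingDist (x + t) (y + t) = hammingDist x y :=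
  hammingDist_comp (fun _ => (· + t _)) (fun _ => add_left_injective _)

lemma self_add_self (x : V5) : x + x = 0 := by
  funext i
  have : ∀ z : Fin 2, z + z = 0 := by decide
  exact this (x i)

set_option maxHeartbeats 4000000 in
lemma lower_aux : ∀ b c : V5, ∃ u w : V5, u ≠ w ∧
    hammingDist u 0 = hammingDist w 0 ∧ hammingDist u b = hammingDist w b ∧
    hammingDist u c = hammingDist w c := by decide

lemma upper_aux : ∀ u w : V5, u ≠ w →
    (hammingDist u ![0,0,0,0,0] ≠ hammingDist w ![0,0,0,0,0] ∨
     hammingDist u ![0,0,0,1,1] ≠ hammingDist w ![0,0,0,1,1] ∨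
     hammingDist u ![0,0,1,0,1] ≠ hammingDist w ![0,0,1,0,1] ∨
     hammingDist u ![0,1,0,0,1] ≠ hammingDist w ![0,1,0,0,1]) := by decide

theorem metricDim_hypercube5 :
    metricDim (hammingGraph 5 2) = 4 := by
  have hdist : ∀ x y : V5, (hammingGraph 5 2).dist x y = hammingDist x y := hammingGraph_dist
  set S : Finset V5 := {![0,0,0,0,0], ![0,0,0,1,1], ![0,0,1,0,1], ![0,1,0,0,1]} with hS
  have hres : IsResolvingSet (hammingGraph 5 2) (↑S) := by
    intro u w huw
    rcases upper_aux u w huw with h | h | h | h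
    · exact ⟨![0,0,0,0,0], by simp [hS], by rw [hdist, hdist]; exact h⟩
    · exact ⟨![0,0,0,1,1], by simp [hS], by rw [hdist, hdist]; exact h⟩
    · exact ⟨![0,0,1,0,1], by simp [hS], by rw [hdist, hdist]; exact h⟩
    · exact ⟨![0,1,0,0,1], by simp [hS], by rw [hdist, hdist]; exact h⟩
  have hcard : S.card = 4 := by decide
  have h4 : 4 ∈ {n : ℕ | ∃ S : Finset V5,
      IsResolvingSet (hammingGraph 5 2) (↑S) ∧ S.card = n} := ⟨S, hres, hcard⟩
  have hno3 : ∀ T : Finset V5, T.card = 3 → ¬ IsResolvingSet (hammingGraph 5 2) (↑T) := by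
    intro T hT hresT
    obtain ⟨a, b, c, -, -, -, rfl⟩ := Finset.card_eq_three.1 hT
    obtain ⟨u, w, huw, h1, h2, h3⟩ := lower_aux (b + a) (c + a)
    have huw' : u + a ≠ w + a := fun h => huw (by
      have := congrArg (· + a) h
      simpa [add_assoc, self_add_self] using this)
    obtain ⟨v, hv, hdv⟩ := hresT (u + a) (w + a) huw'
    rw [hdist, hdist] at hdv
    simp only [Finset.coe_insert, Set.mem_insert_iff, Finset.coe_singleton,
      Set.mem_singleton_iff] at hv
    rcases hv with hv | hv | hv <;> rw [hv] at hdv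
    · apply hdv
      have hu : hammingDist (u + a) (0 + a) = hammingDist u 0 := hd_translate a u 0
      have hw : hammingDist (w + a) (0 + a) = hammingDist w 0 := hd_translate a w 0
      rw [zero_add] at hu hw
      rw [hu, hw, h1]
    · apply hdv
      have hb : b + a + a = b := by rw [add_assoc, self_add_self, add_zero]
      have hu : hammingDist (u + a) (b + a + a) = hammingDist u (b + a) := hd_translate a u _
      have hw : hammingDist (w + a) (b + a + a) = hammingDist w (b + a) := hd_translate a w _
      rw [hb] at hu hw
      rw [hu, hw, h2]
    · apply hdv
      have hc : c + a + a = c := by rw [add_assoc, self_add_self, add_zero]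
      have hu : hammingDist (u + a) (c + a + a) = hammingDist u (c + a) := hd_translate a u _
      have hw : hammingDist (w + a) (c + a + a) = hammingDist w (c + a) := hd_translate a w _
      rw [hc] at hu hw
      rw [hu, hw, h3]
  refine le_antisymm (Nat.sInf_le h4) (le_csInf ⟨4, h4⟩ ?_)
  rintro n ⟨T, hresT, rfl⟩
  by_contra hlt
  push_neg at hlt
  have hle3 : T.card ≤ 3 := by omega
  obtain ⟨T', hTT', hT'⟩ := Finset.exists_superset_card_eq hle3 (by
    rw [show Fintype.card V5 = 32 from by norm_num [Fintype.card_fun]]; omega)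
  exact hno3 T' hT' (fun u w huw => by
    obtain ⟨v, hv, h⟩ := hresT u w huw
    exact ⟨v, hTT' hv, h⟩)
end

section
/- The Hamming graph H(3,3) has metric dimension 4. -/
section aux

variable {d q : ℕ}

lemma hd_of_adj {x y : Fin d → Fin q} (h : (hammingGraph d q).Adj x y) :
    hammingDist x y = 1 := by
  obtain ⟨i, hi, hu⟩ := h
  rw [hammingDist, Finset.card_eq_one]
  refine ⟨i, ?_⟩
  ext j
  simp only [Finset.mem_filter, Finset.mem_univ, true_and, Finset.mem_singleton]
  exact ⟨fun hj => hu j hj, fun hj => hj ▸ hi⟩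

lemma hd_le_walk : ∀ {x y : Fin d → Fin q} (p : (hammingGraph d q).Walk x y),
    hammingDist x y ≤ p.length := by
  intro x y p
  induction p with
  | nil => simp
  | @cons a b c h p ih =>
    calc hammingDist a c ≤ hammingDist a b + hammingDist b c := hammingDist_triangle _ _ _
    _ ≤ 1 + p.length := by rw [hd_of_adj h]; omega
    _ = (SimpleGraph.Walk.cons h p).length := by simp [Nat.add_comm]

lemma exists_walk (x y : Fin d → Fin q) :
    ∃ p : (hammingGraph d q).Walk x y, p.length = hammingDist x y := by
  generalize hn : hammingDist x y = n
  induction n generalizing x with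
  | zero =>
    obtain rfl := eq_of_hammingDist_eq_zero hn
    exact ⟨.nil, rfl⟩
  | succ n ih =>
    have hne : x ≠ y := by
      intro h; rw [h, hammingDist_self] at hn; omega
    obtain ⟨i, hi⟩ : ∃ i, x i ≠ y i := Function.ne_iff.mp hne
    set x' := Function.update x i (y i) with hx'
    have hadj : (hammingGraph d q).Adj x x' := by
      refine ⟨i, ?_, fun j hj => ?_⟩
      · simpa [hx', Function.update_self] using hi
      · by_contra hji
        exact hj (by simp [hx', Function.update_of_ne hji])
    have hfil : ({j | x' j ≠ y j} : Finset (Fin d))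
        = ({j | x j ≠ y j} : Finset (Fin d)).erase i := by
      ext j
      by_cases hj : j = i <;>
        simp [Finset.mem_erase, hx', Function.update_apply, hj]
    have hd' : hammingDist x' y = n := by
      rw [hammingDist, hfil, Finset.card_erase_of_mem (by simpa using hi)]
      rw [hammingDist] at hn
      omega
    obtain ⟨p, hp⟩ := ih x' hd'
    exact ⟨.cons hadj p, by simp [hp]⟩

lemma dist_eq_hd (x y : Fin d → Fin q) :
    (hammingGraph d q).dist x y = hammingDist x y := by
  obtain ⟨p, hp⟩ := exists_walk x y
  refine le_antisymm (hp ▸ SimpleGraph.dist_le p) ?_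
  obtain ⟨p', hp'⟩ := SimpleGraph.Reachable.exists_walk_length_eq_dist ⟨p⟩
  exact hp' ▸ hd_le_walk p'

end aux

abbrev V33 := Fin 3 → Fin 3

def a0 : V33 := ![0, 0, 0]
def a1 : V33 := ![0, 0, 1]
def a2 : V33 := ![0, 1, 0]
def a3 : V33 := ![1, 0, 0]

lemma resolve4 : ∀ u w : V33, u ≠ w →
    hammingDist u a0 ≠ hammingDist w a0 ∨ hammingDist u a1 ≠ hammingDist w a1 ∨
    hammingDist u a2 ≠ hammingDist w a2 ∨ hammingDist u a3 ≠ hammingDist w a3 := by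
  decide

set_option maxHeartbeats 4000000 in
lemma no3 : ∀ b c : V33, ∃ u w : V33, u ≠ w ∧
    hammingDist u (0 : V33) = hammingDist w (0 : V33) ∧
    hammingDist u b = hammingDist w b ∧ hammingDist u c = hammingDist w c := by
  decide

lemma hd_sub (x y a : V33) : hammingDist (x - a) (y - a) = hammingDist x y := by
  simp [hammingDist, Pi.sub_apply, sub_left_inj]

lemma no3' (a b c : V33) : ∃ u w : V33, u ≠ w ∧
    hammingDist u a = hammingDist w a ∧
    hammingDist u b = hammingDist w b ∧ hammingDist u c = hammingDist w c := by
  obtain ⟨u, w, huw, h0, hb, hc⟩ := no3 (b - a) (c - a)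
  refine ⟨u + a, w + a, fun h => huw (by simpa using congrArg (· - a) h), ?_, ?_, ?_⟩
  · rw [← hd_sub (u + a) a a, ← hd_sub (w + a) a a]; simpa using h0
  · rw [← hd_sub (u + a) b a, ← hd_sub (w + a) b a]; simpa using hb
  · rw [← hd_sub (u + a) c a, ← hd_sub (w + a) c a]; simpa using hc

theorem metricDim_hamming33 :
    metricDim (hammingGraph 3 3) = 4 := by
  have hdist : ∀ x y : V33, (hammingGraph 3 3).dist x y = hammingDist x y := dist_eq_hd
  have hmem : 4 ∈ {n : ℕ | ∃ S : Finset V33,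
      IsResolvingSet (hammingGraph 3 3) (↑S) ∧ S.card = n} := by
    refine ⟨{a0, a1, a2, a3}, ?_, by decide⟩
    intro u w huw
    rcases resolve4 u w huw with h | h | h | h
    · exact ⟨a0, by simp, by rw [hdist, hdist]; exact h⟩
    · exact ⟨a1, by simp, by rw [hdist, hdist]; exact h⟩
    · exact ⟨a2, by simp, by rw [hdist, hdist]; exact h⟩
    · exact ⟨a3, by simp, by rw [hdist, hdist]; exact h⟩
  refine le_antisymm (Nat.sInf_le hmem) (le_csInf ⟨4, hmem⟩ ?_)
  rintro n ⟨S, hS, rfl⟩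
  by_contra hlt
  push_neg at hlt
  have hcard : S.card ≤ 3 := by omega
  obtain ⟨T, hST, -, hT⟩ := Finset.exists_subsuperset_card_eq (Finset.subset_univ S)
    hcard (by simp [Fintype.card_fun])
  obtain ⟨a, b, c, -, -, -, rfl⟩ := Finset.card_eq_three.mp hT
  obtain ⟨u, w, huw, ha, hb, hc⟩ := no3' a b c
  obtain ⟨v, hv, hvd⟩ := hS u w huw
  rw [hdist, hdist] at hvd
  have := hST hv
  simp only [Finset.mem_insert, Finset.mem_singleton] at this
  rcases this with rfl | rfl | rfl
  exacts [hvd ha, hvd hb, hvd hc]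
end
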